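/- arXiv:2003.03236 — 3 statements merged into one kernel-verified Lean document; each statement's English description precedes it below -/
import Mathlib

section
/- Let W be a condensed wall (of any size) with special vertices a and b. Then every ladder contained in W − {a, b} has at most 5 rungs. -/
open SimpleGraph

/-- The elementary ladder with `n` rungs: vertices `(i, s)` for `i < n`, `s : Bool`;
the two stringers are the paths `(0,s), (1,s), …, (n-1,s)` and the rungs are the
edges between `(i, false)` and `(i, true)`. -/
def elemLadder (n : ℕ) : SimpleGraph (Fin n × Bool) :=
  SimpleGraph.fromRel (fun x y =>
    (x.2 = y.2 ∧ (y.1 : ℕ) = (x.1 : ℕ) + 1) ∨ (x.1 = y.1 ∧ x.2 ≠ y.2))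

/-- A subdivision copy of the graph `H` inside the graph `G`:  an injective choice of
branch vertices together with, for every edge of `H`, a path of `G` between the
corresponding branch vertices, such that distinct edge-paths meet only in common
branch endvertices and no branch vertex lies in the interior of an edge-path. -/
structure SubdivCopy {U V : Type} (H : SimpleGraph U) (G : SimpleGraph V) where
  branch : U → V
  branch_inj : Function.Injective branch
  walk : ∀ ⦃a b : U⦄, H.Adj a b → G.Walk (branch a) (branch b)
  walk_isPath : ∀ ⦃a b : U⦄ (h : H.Adj a b), (walk h).IsPath
  walk_symm : ∀ ⦃a b : U⦄ (h : H.Adj a b), walk h.symm = (walk h).reverse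
  walk_disj : ∀ ⦃a b a' b' : U⦄ (h : H.Adj a b) (h' : H.Adj a' b'), s(a, b) ≠ s(a', b') →
    ∀ x, x ∈ (walk h).support → x ∈ (walk h').support →
      (x = branch a ∨ x = branch b) ∧ (x = branch a' ∨ x = branch b')
  branch_not_interior : ∀ ⦃a b : U⦄ (h : H.Adj a b) (c : U),
    branch c ∈ (walk h).support → c = a ∨ c = b

/-- The vertex set of a subdivision copy. -/
def SubdivCopy.verts {U V : Type} {H : SimpleGraph U} {G : SimpleGraph V}
    (S : SubdivCopy H G) : Set V :=
  Set.range S.branch ∪ {x | ∃ (a b : U) (h : H.Adj a b), x ∈ (S.walk h).support}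

/-- The edge set of a subdivision copy. -/
def SubdivCopy.edges {U V : Type} {H : SimpleGraph U} {G : SimpleGraph V}
    (S : SubdivCopy H G) : Set (Sym2 V) :=
  {e | ∃ (a b : U) (h : H.Adj a b), e ∈ (S.walk h).edges}

/-- `H` is a minor of `G`: there are nonempty, pairwise disjoint, connected branch
sets in `G`, one for each vertex of `H`, with an edge of `G` between the branch sets
of any two adjacent vertices of `H`. -/
def IsMinor {U V : Type} (H : SimpleGraph U) (G : SimpleGraph V) : Prop :=
  ∃ f : U → Set V,
    (∀ u, (f u).Nonempty) ∧
    (∀ u, (G.induce (f u)).Connected) ∧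
    (∀ u u', u ≠ u' → Disjoint (f u) (f u')) ∧
    (∀ u u', H.Adj u u' → ∃ x ∈ f u, ∃ y ∈ f u', G.Adj x y)

/-- The vertex type of a condensed wall of size `r`: the path vertices `u^j_k`
(`j` indexes the `r` horizontal paths, `k` the `2r` positions, both 0-indexed),
the bottleneck vertices `z_0, …, z_r`, and the two special vertices `a`, `b`. -/
def CWVert (r : ℕ) : Type := (Fin r × Fin (2 * r)) ⊕ (Fin (r + 1) ⊕ Bool)

/-- The path vertex `u^{j+1}_{k+1}` (so `j`, `k` are 0-indexed). -/
def cwU {r : ℕ} (j : Fin r) (k : Fin (2 * r)) : CWVert r := Sum.inl (j, k)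

/-- The bottleneck vertex `z_i`. -/
def cwZ {r : ℕ} (i : Fin (r + 1)) : CWVert r := Sum.inr (Sum.inl i)

/-- The special vertex `a` of the condensed wall. -/
def cwA (r : ℕ) : CWVert r := Sum.inr (Sum.inr false)

/-- The special vertex `b` of the condensed wall. -/
def cwB (r : ℕ) : CWVert r := Sum.inr (Sum.inr true)

/-- The vertex `c = z_0` of the condensed wall. -/
def cwC (r : ℕ) : CWVert r := cwZ (0 : Fin (r + 1))

/-- The vertex `d = z_r` of the condensed wall. -/
def cwD (r : ℕ) : CWVert r := cwZ (Fin.last r)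

/-- The condensed wall of size `r`: for each `j ∈ [r]` a path `u^j_1 … u^j_{2r}`,
with `z_{j-1}` joined to the odd-position vertices and `z_j` to the even-position
vertices of that path, consecutive `z`'s joined by an edge, `a` joined to all
`u^j_1` and `b` joined to all `u^j_{2r}`. -/
def condensedWall (r : ℕ) : SimpleGraph (CWVert r) :=
  SimpleGraph.fromRel (fun x y =>
    match x, y with
    | Sum.inl (j, k), Sum.inl (j', k') => j = j' ∧ (k' : ℕ) = (k : ℕ) + 1
    | Sum.inr (Sum.inl i), Sum.inr (Sum.inl i') => (i' : ℕ) = (i : ℕ) + 1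
    | Sum.inr (Sum.inl i), Sum.inl (j, k) =>
        ((i : ℕ) = (j : ℕ) ∧ (k : ℕ) % 2 = 0) ∨
        ((i : ℕ) = (j : ℕ) + 1 ∧ (k : ℕ) % 2 = 1)
    | Sum.inr (Sum.inr false), Sum.inl (_, k) => (k : ℕ) = 0
    | Sum.inr (Sum.inr true), Sum.inl (_, k) => (k : ℕ) + 1 = 2 * r
    | _, _ => False)

/-- A vertex of the condensed wall is a bottleneck vertex if it is one of the `z_i`. -/
def IsBottleneck {r : ℕ} (x : CWVert r) : Prop := ∃ i : Fin (r + 1), x = cwZ i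

/-- The vertex set of the `j`-th layer of the condensed wall of size `r`
(0-indexed `j`): the vertices `u^j_1, …, u^j_{2r}` together with `z_{j-1}` and `z_j`. -/
def layerVerts (r : ℕ) (j : Fin r) : Set (CWVert r) :=
  {x | (∃ k, x = cwU j k) ∨ x = cwZ j.castSucc ∨ x = cwZ j.succ}

/-- An X-wing in a graph `G` with designated vertices `a`, `b`, `c`, `d`: a ladder with
three rungs, two disjoint paths joining the endvertices of its first rung to `a` and
to `b`, and two further disjoint paths joining the endvertices of its last rung to `c`
and to `d`, all four paths internally disjoint from each other and from the ladder. -/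
structure XWing {V : Type} (G : SimpleGraph V) (a b c d : V) where
  L : SubdivCopy (elemLadder 3) G
  Pa : G.Walk (L.branch (0, false)) a
  Pb : G.Walk (L.branch (0, true)) b
  Pc : G.Walk (L.branch (2, false)) c
  Pd : G.Walk (L.branch (2, true)) d
  Pa_isPath : Pa.IsPath
  Pb_isPath : Pb.IsPath
  Pc_isPath : Pc.IsPath
  Pd_isPath : Pd.IsPath
  disj_ab : ∀ x, x ∈ Pa.support → x ∉ Pb.support
  disj_ac : ∀ x, x ∈ Pa.support → x ∉ Pc.support
  disj_ad : ∀ x, x ∈ Pa.support → x ∉ Pd.support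
  disj_bc : ∀ x, x ∈ Pb.support → x ∉ Pc.support
  disj_bd : ∀ x, x ∈ Pb.support → x ∉ Pd.support
  disj_cd : ∀ x, x ∈ Pc.support → x ∉ Pd.support
  Pa_L : ∀ x ∈ Pa.support, x ∈ L.verts → x = L.branch (0, false)
  Pb_L : ∀ x ∈ Pb.support, x ∈ L.verts → x = L.branch (0, true)
  Pc_L : ∀ x ∈ Pc.support, x ∈ L.verts → x = L.branch (2, false)
  Pd_L : ∀ x ∈ Pd.support, x ∈ L.verts → x = L.branch (2, true)

/-- The vertex set of an X-wing. -/
def XWing.wverts {V : Type} {G : SimpleGraph V} {a b c d : V} (X : XWing G a b c d) :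
    Set V :=
  X.L.verts ∪ {x | x ∈ X.Pa.support} ∪ {x | x ∈ X.Pb.support} ∪
    {x | x ∈ X.Pc.support} ∪ {x | x ∈ X.Pd.support}

/-- The edge set of an X-wing. -/
def XWing.wedges {V : Type} {G : SimpleGraph V} {a b c d : V} (X : XWing G a b c d) :
    Set (Sym2 V) :=
  X.L.edges ∪ {e | e ∈ X.Pa.edges} ∪ {e | e ∈ X.Pb.edges} ∪
    {e | e ∈ X.Pc.edges} ∪ {e | e ∈ X.Pd.edges}

/-- The vertex set of the condensed wall of size `r` without `a` and `b`. -/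
def WMVert (r : ℕ) : Type := {x : CWVert r // x ≠ cwA r ∧ x ≠ cwB r}

/-- The condensed wall of size `r` with the two vertices `a` and `b` deleted. -/
def wallMinusAB (r : ℕ) : SimpleGraph (WMVert r) :=
  (condensedWall r).induce {x | x ≠ cwA r ∧ x ≠ cwB r}

section AuxDefs
variable {r : ℕ}

/-- `x` is the bottleneck vertex `z_m` (with `m` given as a natural number). -/
def isZmV (m : ℕ) (x : CWVert r) : Prop :=
  ∃ i : Fin (r+1), x = Sum.inr (Sum.inl i) ∧ (i : ℕ) = m

/-- `x` is some bottleneck vertex. -/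
def isZV (x : CWVert r) : Prop := ∃ i : Fin (r+1), x = Sum.inr (Sum.inl i)

/-- the side of the cut at `z_m` on which `x` lies. -/
def sB (m : ℕ) (x : CWVert r) : Bool :=
  match x with
  | Sum.inl (j, _) => decide ((j : ℕ) < m)
  | Sum.inr (Sum.inl i) => decide ((i : ℕ) < m)
  | _ => true

/-- linear coordinate of a vertex inside a horizontal path / the z-path. -/
def vK (x : CWVert r) : ℕ :=
  match x with
  | Sum.inl (_, k) => (k : ℕ)
  | Sum.inr (Sum.inl i) => (i : ℕ)
  | _ => 0

lemma zm_unique {m : ℕ} {x y : WMVert r} (hx : isZmV m x.val) (hy : isZmV m y.val) :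
    x = y := by
  obtain ⟨i, hi, him⟩ := hx
  obtain ⟨i', hi', him'⟩ := hy
  apply Subtype.ext
  rw [hi, hi']
  have : i = i' := Fin.ext (him.trans him'.symm)
  rw [this]

lemma adj_inv {x y : WMVert r} (h : (wallMinusAB r).Adj x y) :
    (∃ (j : Fin r) (k k' : Fin (2*r)), x.val = Sum.inl (j,k) ∧ y.val = Sum.inl (j,k') ∧
       ((k:ℕ)+1 = (k':ℕ) ∨ (k':ℕ)+1 = (k:ℕ))) ∨
    (∃ (i i' : Fin (r+1)), x.val = Sum.inr (Sum.inl i) ∧ y.val = Sum.inr (Sum.inl i') ∧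
       ((i:ℕ)+1 = (i':ℕ) ∨ (i':ℕ)+1 = (i:ℕ))) ∨
    (∃ (i : Fin (r+1)) (j : Fin r) (k : Fin (2*r)),
       ((x.val = Sum.inr (Sum.inl i) ∧ y.val = Sum.inl (j,k)) ∨
        (y.val = Sum.inr (Sum.inl i) ∧ x.val = Sum.inl (j,k))) ∧
       ((i:ℕ) = (j:ℕ) ∨ (i:ℕ) = (j:ℕ)+1)) := by
  have h' : (condensedWall r).Adj x.val y.val := h
  rw [condensedWall, fromRel_adj] at h'
  obtain ⟨hne, hrel⟩ := h'
  obtain ⟨xv, hxa, hxb⟩ := x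
  obtain ⟨yv, hya, hyb⟩ := y
  simp only at hrel hxa hxb hya hyb ⊢
  rcases xv with ⟨j,k⟩ | (i | b) <;> rcases yv with ⟨j',k'⟩ | (i' | b')
  · rcases hrel with ⟨hj, hk⟩ | ⟨hj, hk⟩
    · exact Or.inl ⟨j, k, k', rfl, by rw [hj], Or.inl hk.symm⟩
    · exact Or.inl ⟨j, k, k', rfl, by rw [hj], Or.inr hk.symm⟩
  · rcases hrel with h1 | h1
    · exact absurd h1 (by simp)
    · exact Or.inr (Or.inr ⟨i', j, k, Or.inr ⟨rfl, rfl⟩, by omega⟩)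
  · exfalso; cases b'
    · exact hya rfl
    · exact hyb rfl
  · rcases hrel with h1 | h1
    · exact Or.inr (Or.inr ⟨i, j', k', Or.inl ⟨rfl, rfl⟩, by omega⟩)
    · exact absurd h1 (by simp)
  · rcases hrel with h1 | h1
    · exact Or.inr (Or.inl ⟨i, i', rfl, rfl, Or.inl h1.symm⟩)
    · exact Or.inr (Or.inl ⟨i, i', rfl, rfl, Or.inr h1.symm⟩)
  · exfalso; cases b'
    · exact hya rfl
    · exact hyb rfl
  · exfalso; cases b
    · exact hxa rfl
    · exact hxb rfl
  · exfalso; cases b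
    · exact hxa rfl
    · exact hxb rfl
  · exfalso; cases b
    · exact hxa rfl
    · exact hxb rfl

lemma adj_side {m : ℕ} {x y : WMVert r} (h : (wallMinusAB r).Adj x y)
    (hx : ¬ isZmV m x.val) (hy : ¬ isZmV m y.val) :
    sB m x.val = sB m y.val := by
  rcases adj_inv h with ⟨j, k, k', hx1, hy1, _⟩ | ⟨i, i', hx1, hy1, hii⟩ |
    ⟨i, j, k, hxy, hij⟩
  · rw [hx1, hy1]; rfl
  · have h1 : (i:ℕ) ≠ m := fun hm => hx ⟨i, hx1, hm⟩
    have h2 : (i':ℕ) ≠ m := fun hm => hy ⟨i', hy1, hm⟩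
    rw [hx1, hy1]
    simp only [sB, decide_eq_decide]
    omega
  · rcases hxy with ⟨hx1, hy1⟩ | ⟨hy1, hx1⟩
    · have h1 : (i:ℕ) ≠ m := fun hm => hx ⟨i, hx1, hm⟩
      rw [hx1, hy1]; simp only [sB, decide_eq_decide]; omega
    · have h1 : (i:ℕ) ≠ m := fun hm => hy ⟨i, hy1, hm⟩
      rw [hx1, hy1]; simp only [sB, decide_eq_decide]; omega
end AuxDefs
section AuxWalk
variable {r : ℕ}

lemma mem_support_cons {V : Type} {G : SimpleGraph V} {a b c v : V} (hadj : G.Adj a b)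
    {q : G.Walk b c} (h : v ∈ q.support) : v ∈ (SimpleGraph.Walk.cons hadj q).support := by
  rw [SimpleGraph.Walk.support_cons]; exact List.mem_cons_of_mem _ h

lemma start_mem_support_cons {V : Type} {G : SimpleGraph V} {a b c : V} (hadj : G.Adj a b)
    {q : G.Walk b c} : b ∈ (SimpleGraph.Walk.cons hadj q).support :=
  mem_support_cons hadj q.start_mem_support

lemma sideConst {m : ℕ} {x y : WMVert r} (p : (wallMinusAB r).Walk x y)
    (h : ∀ v ∈ p.support, ¬ isZmV m v.val) :
    ∀ v ∈ p.support, sB m v.val = sB m x.val := by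
  induction p with
  | nil =>
    intro v hv
    rw [SimpleGraph.Walk.mem_support_nil_iff] at hv
    rw [hv]
  | @cons a b c hadj q ih =>
    intro v hv
    rw [SimpleGraph.Walk.support_cons, List.mem_cons] at hv
    have hab : sB m a.val = sB m b.val :=
      adj_side hadj (h a (SimpleGraph.Walk.start_mem_support _))
        (h b (start_mem_support_cons hadj))
    rcases hv with rfl | hv
    · rfl
    · have hq := ih (fun u hu => h u (mem_support_cons hadj hu)) v hv
      rw [hq, hab]

lemma sideInit {m : ℕ} {x y : WMVert r} (p : (wallMinusAB r).Walk x y)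
    (hp : p.IsPath) (h : ∀ v ∈ p.support, isZmV m v.val → v = y) :
    ∀ v ∈ p.support, v = y ∨ sB m v.val = sB m x.val := by
  induction p with
  | nil =>
    intro v hv
    exact Or.inr (by rw [(SimpleGraph.Walk.mem_support_nil_iff).mp hv])
  | @cons a b c hadj q ih =>
    intro v hv
    rw [SimpleGraph.Walk.support_cons, List.mem_cons] at hv
    rcases hv with rfl | hv
    · exact Or.inr rfl
    · by_cases hzb : isZmV m b.val
      · have hbc : b = c := h b (start_mem_support_cons hadj) hzb
        subst hbc
        rw [SimpleGraph.Walk.cons_isPath_iff] at hp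
        have hqnil : q = SimpleGraph.Walk.nil := SimpleGraph.Walk.isPath_iff_eq_nil.mp hp.1
        rw [hqnil] at hv
        rw [SimpleGraph.Walk.mem_support_nil_iff] at hv
        exact Or.inl hv
      · have hza : ¬ isZmV m a.val := by
          intro hza
          have hac : a = c := h a (SimpleGraph.Walk.start_mem_support _) hza
          rw [SimpleGraph.Walk.cons_isPath_iff] at hp
          exact hp.2 (hac ▸ q.end_mem_support)
        rw [SimpleGraph.Walk.cons_isPath_iff] at hp
        rcases ih hp.1 (fun u hu hz => h u (mem_support_cons hadj hu) hz) v hv with h1 | h1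
        · exact Or.inl h1
        · exact Or.inr (h1.trans (adj_side hadj hza hzb).symm)

lemma memrev {V : Type} {G : SimpleGraph V} {x y v : V} {p : G.Walk x y}
    (h : v ∈ p.support) : v ∈ p.reverse.support := by
  rw [SimpleGraph.Walk.support_reverse]
  exact List.mem_reverse.mpr h

lemma memrev' {V : Type} {G : SimpleGraph V} {x y v : V} {p : G.Walk x y}
    (h : v ∈ p.reverse.support) : v ∈ p.support := by
  rw [SimpleGraph.Walk.support_reverse] at h
  exact List.mem_reverse.mp h

lemma iv {V : Type} {G : SimpleGraph V} (T : Set V) (κ : V → ℕ)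
    (hadj : ∀ a ∈ T, ∀ b ∈ T, G.Adj a b → (κ a = κ b + 1 ∨ κ b = κ a + 1)) :
    ∀ {x y : V} (p : G.Walk x y), (∀ v ∈ p.support, v ∈ T) →
    ∀ t : ℕ, ((κ x ≤ t ∧ t ≤ κ y) ∨ (κ y ≤ t ∧ t ≤ κ x)) →
    ∃ v ∈ p.support, κ v = t := by
  intro x y p
  induction p with
  | @nil u =>
    intro _ t ht
    exact ⟨u, SimpleGraph.Walk.start_mem_support _, by omega⟩
  | @cons a b c hadj2 q ih =>
    intro hT t ht
    by_cases hta : κ a = t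
    · exact ⟨a, SimpleGraph.Walk.start_mem_support _, hta⟩
    · have hab := hadj a (hT a (SimpleGraph.Walk.start_mem_support _)) b
        (hT b (start_mem_support_cons hadj2)) hadj2
      obtain ⟨v, hv, hvt⟩ := ih (fun v hv => hT v (mem_support_cons hadj2 hv)) t (by omega)
      exact ⟨v, mem_support_cons hadj2 hv, hvt⟩

lemma sqContra {V : Type} {G : SimpleGraph V} (T : Set V) (κ : V → ℕ)
    (hinj : ∀ a ∈ T, ∀ b ∈ T, κ a = κ b → a = b)
    (hadj : ∀ a ∈ T, ∀ b ∈ T, G.Adj a b → (κ a = κ b + 1 ∨ κ b = κ a + 1))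
    {A B C D : V} (w1 : G.Walk A B) (w2 : G.Walk C D) (w3 : G.Walk A C) (w4 : G.Walk B D)
    (hT1 : ∀ v ∈ w1.support, v ∈ T) (hT2 : ∀ v ∈ w2.support, v ∈ T)
    (hT3 : ∀ v ∈ w3.support, v ∈ T) (hT4 : ∀ v ∈ w4.support, v ∈ T)
    (h12 : ∀ v, v ∈ w1.support → v ∈ w2.support → False)
    (h34 : ∀ v, v ∈ w3.support → v ∈ w4.support → False) : False := by
  have key : (max (min (κ A) (κ B)) (min (κ C) (κ D)) ≤
                min (max (κ A) (κ B)) (max (κ C) (κ D))) ∨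
             (max (min (κ A) (κ C)) (min (κ B) (κ D)) ≤
                min (max (κ A) (κ C)) (max (κ B) (κ D))) := by omega
  rcases key with hk | hk
  · obtain ⟨v1, hv1, ht1⟩ := iv T κ hadj w1 hT1
      (max (min (κ A) (κ B)) (min (κ C) (κ D))) (by omega)
    obtain ⟨v2, hv2, ht2⟩ := iv T κ hadj w2 hT2
      (max (min (κ A) (κ B)) (min (κ C) (κ D))) (by omega)
    have hv12 : v1 = v2 := hinj v1 (hT1 _ hv1) v2 (hT2 _ hv2) (ht1.trans ht2.symm)
    exact h12 v1 hv1 (hv12 ▸ hv2)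
  · obtain ⟨v1, hv1, ht1⟩ := iv T κ hadj w3 hT3
      (max (min (κ A) (κ C)) (min (κ B) (κ D))) (by omega)
    obtain ⟨v2, hv2, ht2⟩ := iv T κ hadj w4 hT4
      (max (min (κ A) (κ C)) (min (κ B) (κ D))) (by omega)
    have hv12 : v1 = v2 := hinj v1 (hT3 _ hv1) v2 (hT4 _ hv2) (ht1.trans ht2.symm)
    exact h34 v1 hv1 (hv12 ▸ hv2)
end AuxWalk
section AuxCut
variable {r : ℕ}

instance : DecidableEq (CWVert r) := by unfold CWVert; infer_instance
instance : DecidableEq (WMVert r) := by unfold WMVert; infer_instance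

lemma cutInterior1 {m : ℕ} {A B C D : WMVert r}
    (w1 : (wallMinusAB r).Walk A B) (w2 : (wallMinusAB r).Walk C D)
    (w3 : (wallMinusAB r).Walk A C) (w4 : (wallMinusAB r).Walk B D)
    (hp1 : w1.IsPath)
    (hz2 : ∀ v ∈ w2.support, ¬ isZmV m v.val)
    (hz3 : ∀ v ∈ w3.support, ¬ isZmV m v.val)
    (hz4 : ∀ v ∈ w4.support, ¬ isZmV m v.val) :
    ∀ v, (v ∈ w1.support ∨ v ∈ w2.support ∨ v ∈ w3.support ∨ v ∈ w4.support) →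
      isZmV m v.val ∨ sB m v.val = sB m A.val := by
  have hC : sB m C.val = sB m A.val := sideConst w3 hz3 C w3.end_mem_support
  have hD2 : sB m D.val = sB m C.val := sideConst w2 hz2 D w2.end_mem_support
  have hD4 : sB m D.val = sB m B.val := sideConst w4 hz4 D w4.end_mem_support
  have hB : sB m B.val = sB m A.val := by rw [← hD4, hD2, hC]
  intro v hv
  rcases hv with hv | hv | hv | hv
  · by_cases hz : ∃ w ∈ w1.support, isZmV m w.val
    · obtain ⟨w0, hw0s, hw0z⟩ := hz
      have hsp := SimpleGraph.Walk.take_spec w1 hw0s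
      have hv' : v ∈ (w1.takeUntil w0 hw0s).support ∨ v ∈ (w1.dropUntil w0 hw0s).support := by
        rw [← SimpleGraph.Walk.mem_support_append_iff, hsp]; exact hv
      rcases hv' with hv' | hv'
      · rcases sideInit _ (hp1.takeUntil hw0s)
          (fun u _ hz' => zm_unique hz' hw0z) v hv' with h1 | h1
        · exact Or.inl (h1 ▸ hw0z)
        · exact Or.inr h1
      · rcases sideInit (w1.dropUntil w0 hw0s).reverse (hp1.dropUntil hw0s).reverse
          (fun u _ hz' => zm_unique hz' hw0z) v (memrev hv') with h1 | h1
        · exact Or.inl (h1 ▸ hw0z)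
        · exact Or.inr (h1.trans hB)
    · push_neg at hz
      exact Or.inr (sideConst w1 hz v hv)
  · exact Or.inr ((sideConst w2 hz2 v hv).trans hC)
  · exact Or.inr (sideConst w3 hz3 v hv)
  · exact Or.inr ((sideConst w4 hz4 v hv).trans hB)

lemma cutEndpointA {m : ℕ} {A B C D : WMVert r}
    (w1 : (wallMinusAB r).Walk A B) (w2 : (wallMinusAB r).Walk C D)
    (w3 : (wallMinusAB r).Walk A C) (w4 : (wallMinusAB r).Walk B D)
    (hp1 : w1.IsPath) (hp3 : w3.IsPath)
    (hzA : isZmV m A.val)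
    (hz2 : ∀ v ∈ w2.support, ¬ isZmV m v.val)
    (hz4 : ∀ v ∈ w4.support, ¬ isZmV m v.val) :
    ∀ v, (v ∈ w1.support ∨ v ∈ w2.support ∨ v ∈ w3.support ∨ v ∈ w4.support) →
      isZmV m v.val ∨ sB m v.val = sB m B.val := by
  have hDC : sB m D.val = sB m C.val := sideConst w2 hz2 D w2.end_mem_support
  have hDB : sB m D.val = sB m B.val := sideConst w4 hz4 D w4.end_mem_support
  have hCB : sB m C.val = sB m B.val := by rw [← hDC, hDB]
  intro v hv
  rcases hv with hv | hv | hv | hv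
  · rcases sideInit w1.reverse hp1.reverse
      (fun u _ hz' => zm_unique hz' hzA) v (memrev hv) with h1 | h1
    · exact Or.inl (h1 ▸ hzA)
    · exact Or.inr h1
  · exact Or.inr ((sideConst w2 hz2 v hv).trans hCB)
  · rcases sideInit w3.reverse hp3.reverse
      (fun u _ hz' => zm_unique hz' hzA) v (memrev hv) with h1 | h1
    · exact Or.inl (h1 ▸ hzA)
    · exact Or.inr (h1.trans hCB)
  · exact Or.inr (sideConst w4 hz4 v hv)

lemma cut {m : ℕ} {A B C D : WMVert r}
    (w1 : (wallMinusAB r).Walk A B) (w2 : (wallMinusAB r).Walk C D)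
    (w3 : (wallMinusAB r).Walk A C) (w4 : (wallMinusAB r).Walk B D)
    (hp1 : w1.IsPath) (hp2 : w2.IsPath) (hp3 : w3.IsPath) (hp4 : w4.IsPath)
    (h12 : ∀ v, v ∈ w1.support → v ∈ w2.support → False)
    (h34 : ∀ v, v ∈ w3.support → v ∈ w4.support → False)
    (h13 : ∀ v, v ∈ w1.support → v ∈ w3.support → v = A)
    (h14 : ∀ v, v ∈ w1.support → v ∈ w4.support → v = B)
    (h23 : ∀ v, v ∈ w2.support → v ∈ w3.support → v = C)
    (h24 : ∀ v, v ∈ w2.support → v ∈ w4.support → v = D)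
    (hAB : A ≠ B) (hCD : C ≠ D) (hAC : A ≠ C) :
    ∃ s0 : Bool, ∀ v,
      (v ∈ w1.support ∨ v ∈ w2.support ∨ v ∈ w3.support ∨ v ∈ w4.support) →
      isZmV m v.val ∨ sB m v.val = s0 := by
  by_cases E1 : ∃ v ∈ w1.support, isZmV m v.val
  · obtain ⟨v1, hv1, hz1⟩ := E1
    by_cases E3 : ∃ v ∈ w3.support, isZmV m v.val
    · -- z is A
      obtain ⟨v3, hv3, hz3⟩ := E3
      have hv13 : v1 = v3 := zm_unique hz1 hz3
      have hA : v1 = A := h13 v1 hv1 (hv13 ▸ hv3)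
      have hzA : isZmV m A.val := hA ▸ hz1
      refine ⟨sB m B.val, fun v hv => ?_⟩
      refine cutEndpointA w1 w2 w3 w4 hp1 hp3 hzA ?_ ?_ v hv
      · intro u hu hz
        have huA : u = A := zm_unique hz hzA
        exact absurd (huA ▸ hu) (fun hc => h12 A w1.start_mem_support hc)
      · intro u hu hz
        have huA : u = A := zm_unique hz hzA
        exact hAB (h14 A w1.start_mem_support (huA ▸ hu))
    · by_cases E4 : ∃ v ∈ w4.support, isZmV m v.val
      · -- z is B
        obtain ⟨v4, hv4, hz4⟩ := E4
        have hv14 : v1 = v4 := zm_unique hz1 hz4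
        have hB : v1 = B := h14 v1 hv1 (hv14 ▸ hv4)
        have hzB : isZmV m B.val := hB ▸ hz1
        refine ⟨sB m A.val, fun v hv => ?_⟩
        refine cutEndpointA (A := B) (B := A) (C := D) (D := C)
          w1.reverse w2.reverse w4 w3 hp1.reverse hp4 hzB ?_ ?_ v ?_
        · intro u hu hz
          have huB : u = B := zm_unique hz hzB
          exact h12 B (w1.end_mem_support) (huB ▸ memrev' hu)
        · intro u hu hz
          have huB : u = B := zm_unique hz hzB
          exact hAB (h13 B w1.end_mem_support (huB ▸ hu)).symm
        · rcases hv with h | h | h | h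
          · exact Or.inl (memrev h)
          · exact Or.inr (Or.inl (memrev h))
          · exact Or.inr (Or.inr (Or.inr h))
          · exact Or.inr (Or.inr (Or.inl h))
      · by_cases E2 : ∃ v ∈ w2.support, isZmV m v.val
        · obtain ⟨v2, hv2, hz2⟩ := E2
          exact absurd (zm_unique hz1 hz2 ▸ hv2) (fun hc => h12 v1 hv1 hc)
        · push_neg at E2 E3 E4
          exact ⟨sB m A.val, cutInterior1 w1 w2 w3 w4 hp1 E2 E3 E4⟩
  · by_cases E2 : ∃ v ∈ w2.support, isZmV m v.val
    · obtain ⟨v2, hv2, hz2⟩ := E2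
      by_cases E3 : ∃ v ∈ w3.support, isZmV m v.val
      · -- z is C
        obtain ⟨v3, hv3, hz3⟩ := E3
        have hv23 : v2 = v3 := zm_unique hz2 hz3
        have hC : v2 = C := h23 v2 hv2 (hv23 ▸ hv3)
        have hzC : isZmV m C.val := hC ▸ hz2
        refine ⟨sB m D.val, fun v hv => ?_⟩
        refine cutEndpointA (A := C) (B := D) (C := A) (D := B)
          w2 w1 w3.reverse w4.reverse hp2 hp3.reverse hzC ?_ ?_ v ?_
        · intro u hu hz
          have huC : u = C := zm_unique hz hzC
          rw [huC] at hu
          exact hAC (h13 C hu w3.end_mem_support).symm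
        · intro u hu hz
          have huC : u = C := zm_unique hz hzC
          exact h34 C w3.end_mem_support (huC ▸ memrev' hu)
        · rcases hv with h | h | h | h
          · exact Or.inr (Or.inl h)
          · exact Or.inl h
          · exact Or.inr (Or.inr (Or.inl (memrev h)))
          · exact Or.inr (Or.inr (Or.inr (memrev h)))
      · by_cases E4 : ∃ v ∈ w4.support, isZmV m v.val
        · -- z is D
          obtain ⟨v4, hv4, hz4⟩ := E4
          have hv24 : v2 = v4 := zm_unique hz2 hz4
          have hD : v2 = D := h24 v2 hv2 (hv24 ▸ hv4)
          have hzD : isZmV m D.val := hD ▸ hz2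
          refine ⟨sB m C.val, fun v hv => ?_⟩
          refine cutEndpointA (A := D) (B := C) (C := B) (D := A)
            w2.reverse w1.reverse w4.reverse w3.reverse hp2.reverse hp4.reverse hzD ?_ ?_ v ?_
          · intro u hu hz
            have huD : u = D := zm_unique hz hzD
            exact h12 D (huD ▸ memrev' hu) w2.end_mem_support
          · intro u hu hz
            have huD : u = D := zm_unique hz hzD
            exact hCD (h23 D w2.end_mem_support (huD ▸ memrev' hu)).symm
          · rcases hv with h | h | h | h
            · exact Or.inr (Or.inl (memrev h))
            · exact Or.inl (memrev h)
            · exact Or.inr (Or.inr (Or.inr (memrev h)))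
            · exact Or.inr (Or.inr (Or.inl (memrev h)))
        · -- z interior to w2
          push_neg at E1 E3 E4
          refine ⟨sB m C.val, fun v hv => ?_⟩
          refine cutInterior1 (A := C) (B := D) (C := A) (D := B)
            w2 w1 w3.reverse w4.reverse hp2 E1
            (fun u hu => E3 u (memrev' hu)) (fun u hu => E4 u (memrev' hu)) v ?_
          rcases hv with h | h | h | h
          · exact Or.inr (Or.inl h)
          · exact Or.inl h
          · exact Or.inr (Or.inr (Or.inl (memrev h)))
          · exact Or.inr (Or.inr (Or.inr (memrev h)))
    · by_cases E3 : ∃ v ∈ w3.support, isZmV m v.val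
      · -- z interior to w3
        push_neg at E1 E2
        by_cases E4 : ∃ v ∈ w4.support, isZmV m v.val
        · obtain ⟨v3, hv3, hz3⟩ := E3
          obtain ⟨v4, hv4, hz4⟩ := E4
          exact absurd (zm_unique hz3 hz4 ▸ hv4) (fun hc => h34 v3 hv3 hc)
        · push_neg at E4
          refine ⟨sB m A.val, fun v hv => ?_⟩
          refine cutInterior1 (A := A) (B := C) (C := B) (D := D)
            w3 w4 w1 w2 hp3 E4 E1 E2 v ?_
          rcases hv with h | h | h | h
          · exact Or.inr (Or.inr (Or.inl h))
          · exact Or.inr (Or.inr (Or.inr h))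
          · exact Or.inl h
          · exact Or.inr (Or.inl h)
      · by_cases E4 : ∃ v ∈ w4.support, isZmV m v.val
        · -- z interior to w4
          push_neg at E1 E2 E3
          refine ⟨sB m B.val, fun v hv => ?_⟩
          refine cutInterior1 (A := B) (B := D) (C := A) (D := C)
            w4 w3 w1.reverse w2.reverse hp4 E3
            (fun u hu => E1 u (memrev' hu)) (fun u hu => E2 u (memrev' hu)) v ?_
          rcases hv with h | h | h | h
          · exact Or.inr (Or.inr (Or.inl (memrev h)))
          · exact Or.inr (Or.inr (Or.inr (memrev h)))
          · exact Or.inr (Or.inl h)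
          · exact Or.inl h
        · push_neg at E2 E3 E4
          exact ⟨sB m A.val, cutInterior1 w1 w2 w3 w4 hp1 E2 E3 E4⟩
end AuxCut
section AuxSquare
variable {r n : ℕ}

lemma rung_adj (n : ℕ) (i : ℕ) (h : i < n) :
    (elemLadder n).Adj (⟨i,h⟩, false) (⟨i,h⟩, true) := by
  rw [elemLadder, SimpleGraph.fromRel_adj]
  exact ⟨by simp, Or.inl (Or.inr ⟨rfl, by simp⟩)⟩

lemma str_adj (n : ℕ) (i : ℕ) (h : i+1 < n) (s : Bool) :
    (elemLadder n).Adj (⟨i, Nat.lt_of_succ_lt h⟩, s) (⟨i+1, h⟩, s) := by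
  rw [elemLadder, SimpleGraph.fromRel_adj]
  refine ⟨?_, Or.inl (Or.inl ⟨rfl, rfl⟩)⟩
  simp [Prod.ext_iff, Fin.ext_iff]

variable (S : SubdivCopy (elemLadder n) (wallMinusAB r))

lemma br_ne {p q : Fin n × Bool} (h : ((p.1 : ℕ) ≠ (q.1 : ℕ)) ∨ p.2 ≠ q.2) :
    S.branch p ≠ S.branch q := by
  intro he
  have heq := S.branch_inj he
  rcases h with h | h
  · exact h (congrArg (fun x => ((x.1 : ℕ))) heq)
  · exact h (congrArg Prod.snd heq)

/-- two edge-walks whose ladder-edges have strictly separated rung indices are disjoint. -/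
lemma walks_disj_of_idx {a b a' b' : Fin n × Bool} (h : (elemLadder n).Adj a b)
    (h' : (elemLadder n).Adj a' b')
    (hlt : (a.1:ℕ) < (a'.1:ℕ) ∧ (a.1:ℕ) < (b'.1:ℕ) ∧ (b.1:ℕ) < (a'.1:ℕ) ∧ (b.1:ℕ) < (b'.1:ℕ)) :
    ∀ v, v ∈ (S.walk h).support → v ∈ (S.walk h').support → False := by
  intro v hv hv'
  have hne : s(a,b) ≠ s(a',b') := by
    intro he
    rw [Sym2.eq_iff] at he
    rcases he with ⟨h1, _⟩ | ⟨h1, _⟩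
    · have := congrArg (fun x => ((x.1 : ℕ))) h1; omega
    · have := congrArg (fun x => ((x.1 : ℕ))) h1; omega
  obtain ⟨hx, hy⟩ := S.walk_disj h h' hne v hv hv'
  rcases hx with rfl | rfl <;> rcases hy with hy | hy <;>
    · have heq := S.branch_inj hy
      have := congrArg (fun x => ((x.1 : ℕ))) heq
      omega

/-- the two stringer walks of a square are disjoint. -/
lemma str_disj (i : ℕ) (hi : i + 1 < n) :
    ∀ v, v ∈ (S.walk (str_adj n i hi false)).support →
      v ∈ (S.walk (str_adj n i hi true)).support → False := by
  intro v hv hv'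
  have hne : s(((⟨i, Nat.lt_of_succ_lt hi⟩ : Fin n), false), ((⟨i+1, hi⟩ : Fin n), false)) ≠
      s(((⟨i, Nat.lt_of_succ_lt hi⟩ : Fin n), true), ((⟨i+1, hi⟩ : Fin n), true)) := by
    intro he
    rw [Sym2.eq_iff] at he
    rcases he with ⟨h1, _⟩ | ⟨h1, h2⟩
    · exact absurd (congrArg Prod.snd h1) (by simp)
    · have := congrArg (fun x => ((x.1 : ℕ))) h1; simp at this
  obtain ⟨hx, hy⟩ := S.walk_disj _ _ hne v hv hv'
  rcases hx with rfl | rfl <;> rcases hy with hy | hy <;>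
    exact absurd (S.branch_inj hy) (by simp [Prod.ext_iff, Fin.ext_iff])

/-- the two rung walks of a square are disjoint. -/
lemma rung_disj (i : ℕ) (hi : i + 1 < n) :
    ∀ v, v ∈ (S.walk (rung_adj n i (Nat.lt_of_succ_lt hi))).support →
      v ∈ (S.walk (rung_adj n (i+1) hi)).support → False :=
  walks_disj_of_idx S _ _ (by simp)

/-- common vertices of the rung walk at `i` and the `false` stringer walk: only `branch (i,false)`. -/
lemma rs_common_ff (i : ℕ) (hi : i + 1 < n) :
    ∀ v, v ∈ (S.walk (rung_adj n i (Nat.lt_of_succ_lt hi))).support →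
      v ∈ (S.walk (str_adj n i hi false)).support →
      v = S.branch (⟨i, Nat.lt_of_succ_lt hi⟩, false) := by
  intro v hv hv'
  have hne : s(((⟨i, Nat.lt_of_succ_lt hi⟩ : Fin n), false), ((⟨i, Nat.lt_of_succ_lt hi⟩ : Fin n), true)) ≠
      s(((⟨i, Nat.lt_of_succ_lt hi⟩ : Fin n), false), ((⟨i+1, hi⟩ : Fin n), false)) := by
    intro he
    rw [Sym2.eq_iff] at he
    rcases he with ⟨_, h1⟩ | ⟨h1, _⟩
    · have h1' := congrArg (fun x => ((x.1 : ℕ))) h1; simp at h1'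
    · have h1' := congrArg (fun x => ((x.1 : ℕ))) h1; simp at h1'
  obtain ⟨hx, hy⟩ := S.walk_disj _ _ hne v hv hv'
  rcases hx with rfl | rfl
  · rfl
  · rcases hy with hy | hy
    · exact hy
    · exfalso
      have heq := S.branch_inj hy
      have h1 := congrArg (fun x => ((x.1 : ℕ))) heq
      simp at h1
end AuxSquare
section AuxSquare2
variable {r n : ℕ}

lemma zz_inj {i ii : Fin (r+1)} (h : (Sum.inr (Sum.inl i) : CWVert r) = Sum.inr (Sum.inl ii)) :
    i = ii := by
  injection h with h
  injection h with h

lemma uu_inj {j jj : Fin r} {k kk : Fin (2*r)}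
    (h : (Sum.inl (j,k) : CWVert r) = Sum.inl (jj,kk)) : j = jj ∧ k = kk := by
  injection h with h
  exact ⟨congrArg Prod.fst h, congrArg Prod.snd h⟩

variable (S : SubdivCopy (elemLadder n) (wallMinusAB r))

lemma wcommon {a b a' b' c : Fin n × Bool} (h : (elemLadder n).Adj a b)
    (h' : (elemLadder n).Adj a' b') (hne : s(a,b) ≠ s(a',b'))
    (hc : ∀ x y : Fin n × Bool, (x = a ∨ x = b) → (y = a' ∨ y = b') → x = y → x = c) :
    ∀ v, v ∈ (S.walk h).support → v ∈ (S.walk h').support → v = S.branch c := by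
  intro v hv hv'
  obtain ⟨hx, hy⟩ := S.walk_disj h h' hne v hv hv'
  rcases hx with hx | hx <;> rcases hy with hy | hy
  · exact hx.trans (congrArg S.branch
      (hc a a' (Or.inl rfl) (Or.inl rfl) (S.branch_inj (hx.symm.trans hy))))
  · exact hx.trans (congrArg S.branch
      (hc a b' (Or.inl rfl) (Or.inr rfl) (S.branch_inj (hx.symm.trans hy))))
  · exact hx.trans (congrArg S.branch
      (hc b a' (Or.inr rfl) (Or.inl rfl) (S.branch_inj (hx.symm.trans hy))))
  · exact hx.trans (congrArg S.branch
      (hc b b' (Or.inr rfl) (Or.inr rfl) (S.branch_inj (hx.symm.trans hy))))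

lemma sq_h13 (i : ℕ) (hi : i + 1 < n) :
    ∀ v, v ∈ (S.walk (rung_adj n i (Nat.lt_of_succ_lt hi))).support →
      v ∈ (S.walk (str_adj n i hi false)).support →
      v = S.branch (⟨i, Nat.lt_of_succ_lt hi⟩, false) := by
  refine wcommon S _ _ ?_ ?_
  · intro he
    rw [Sym2.eq_iff] at he
    rcases he with ⟨h1, h2⟩ | ⟨h1, h2⟩
    · exact absurd h2 (by simp [Prod.ext_iff, Fin.ext_iff])
    · exact absurd h1 (by simp [Prod.ext_iff, Fin.ext_iff])
  · rintro x y (rfl | rfl) (rfl | rfl) hxy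
    · rfl
    · exact absurd hxy (by simp [Prod.ext_iff, Fin.ext_iff])
    · exact absurd hxy (by simp [Prod.ext_iff, Fin.ext_iff])
    · exact absurd hxy (by simp [Prod.ext_iff, Fin.ext_iff])

lemma sq_h14 (i : ℕ) (hi : i + 1 < n) :
    ∀ v, v ∈ (S.walk (rung_adj n i (Nat.lt_of_succ_lt hi))).support →
      v ∈ (S.walk (str_adj n i hi true)).support →
      v = S.branch (⟨i, Nat.lt_of_succ_lt hi⟩, true) := by
  refine wcommon S _ _ ?_ ?_
  · intro he
    rw [Sym2.eq_iff] at he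
    rcases he with ⟨h1, h2⟩ | ⟨h1, h2⟩
    · exact absurd h1 (by simp [Prod.ext_iff, Fin.ext_iff])
    · exact absurd h1 (by simp [Prod.ext_iff, Fin.ext_iff])
  · rintro x y (rfl | rfl) (rfl | rfl) hxy
    · exact absurd hxy (by simp [Prod.ext_iff, Fin.ext_iff])
    · exact absurd hxy (by simp [Prod.ext_iff, Fin.ext_iff])
    · rfl
    · exact absurd hxy (by simp [Prod.ext_iff, Fin.ext_iff])

lemma sq_h23 (i : ℕ) (hi : i + 1 < n) :
    ∀ v, v ∈ (S.walk (rung_adj n (i+1) hi)).support →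
      v ∈ (S.walk (str_adj n i hi false)).support →
      v = S.branch (⟨i+1, hi⟩, false) := by
  refine wcommon S _ _ ?_ ?_
  · intro he
    rw [Sym2.eq_iff] at he
    rcases he with ⟨h1, h2⟩ | ⟨h1, h2⟩
    · exact absurd h1 (by simp [Prod.ext_iff, Fin.ext_iff])
    · exact absurd h2 (by simp [Prod.ext_iff, Fin.ext_iff])
  · rintro x y (rfl | rfl) (rfl | rfl) hxy
    · exact absurd hxy (by simp [Prod.ext_iff, Fin.ext_iff])
    · rfl
    · exact absurd hxy (by simp [Prod.ext_iff, Fin.ext_iff])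
    · exact absurd hxy (by simp [Prod.ext_iff, Fin.ext_iff])

lemma sq_h24 (i : ℕ) (hi : i + 1 < n) :
    ∀ v, v ∈ (S.walk (rung_adj n (i+1) hi)).support →
      v ∈ (S.walk (str_adj n i hi true)).support →
      v = S.branch (⟨i+1, hi⟩, true) := by
  refine wcommon S _ _ ?_ ?_
  · intro he
    rw [Sym2.eq_iff] at he
    rcases he with ⟨h1, h2⟩ | ⟨h1, h2⟩
    · exact absurd h1 (by simp [Prod.ext_iff, Fin.ext_iff])
    · exact absurd h1 (by simp [Prod.ext_iff, Fin.ext_iff])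
  · rintro x y (rfl | rfl) (rfl | rfl) hxy
    · exact absurd hxy (by simp [Prod.ext_iff, Fin.ext_iff])
    · exact absurd hxy (by simp [Prod.ext_iff, Fin.ext_iff])
    · exact absurd hxy (by simp [Prod.ext_iff, Fin.ext_iff])
    · rfl

/-- membership in (the union of the four edge-walks of) the `i`-th square. -/
def sqMem (i : ℕ) (hi : i + 1 < n) (v : WMVert r) : Prop :=
  v ∈ (S.walk (rung_adj n i (Nat.lt_of_succ_lt hi))).support ∨
  v ∈ (S.walk (rung_adj n (i+1) hi)).support ∨
  v ∈ (S.walk (str_adj n i hi false)).support ∨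
  v ∈ (S.walk (str_adj n i hi true)).support

lemma hinj_z : ∀ a : WMVert r, a ∈ {v : WMVert r | isZV v.val} →
    ∀ b ∈ {v : WMVert r | isZV v.val}, vK a.val = vK b.val → a = b := by
  intro a ha b hb hk
  obtain ⟨i, hi⟩ := ha
  obtain ⟨i', hi'⟩ := hb
  rw [hi, hi'] at hk
  have he : i = i' := Fin.ext hk
  exact Subtype.ext (by rw [hi, hi', he])

lemma hadj_z : ∀ a : WMVert r, a ∈ {v : WMVert r | isZV v.val} →
    ∀ b ∈ {v : WMVert r | isZV v.val}, (wallMinusAB r).Adj a b →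
    (vK a.val = vK b.val + 1 ∨ vK b.val = vK a.val + 1) := by
  intro a ha b hb hadj
  obtain ⟨i, hi⟩ := ha
  obtain ⟨i', hi'⟩ := hb
  rcases adj_inv hadj with ⟨j, k, k', h1, h2, _⟩ | ⟨ii, ii', h1, h2, hd⟩ |
    ⟨ii, j, k, hxy, _⟩
  · rw [hi] at h1; exact absurd h1 (by simp)
  · rw [hi] at h1; rw [hi'] at h2
    have e1 := zz_inj h1
    have e2 := zz_inj h2
    rw [hi, hi']
    simp only [vK]
    rw [e1, e2]
    omega
  · rcases hxy with ⟨h1, h2⟩ | ⟨h1, h2⟩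
    · rw [hi'] at h2; exact absurd h2 (by simp)
    · rw [hi] at h2; exact absurd h2 (by simp)

lemma hinj_u (j : Fin r) : ∀ a : WMVert r, a ∈ {v : WMVert r | ∃ k, v.val = Sum.inl (j, k)} →
    ∀ b ∈ {v : WMVert r | ∃ k, v.val = Sum.inl (j, k)}, vK a.val = vK b.val → a = b := by
  intro a ha b hb hk
  obtain ⟨k, hk1⟩ := ha
  obtain ⟨k', hk2⟩ := hb
  rw [hk1, hk2] at hk
  have he : k = k' := Fin.ext hk
  exact Subtype.ext (by rw [hk1, hk2, he])

lemma hadj_u (j : Fin r) : ∀ a : WMVert r, a ∈ {v : WMVert r | ∃ k, v.val = Sum.inl (j, k)} →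
    ∀ b ∈ {v : WMVert r | ∃ k, v.val = Sum.inl (j, k)}, (wallMinusAB r).Adj a b →
    (vK a.val = vK b.val + 1 ∨ vK b.val = vK a.val + 1) := by
  intro a ha b hb hadj
  obtain ⟨k, hk1⟩ := ha
  obtain ⟨k', hk2⟩ := hb
  rcases adj_inv hadj with ⟨jj, kk, kk', h1, h2, hd⟩ | ⟨ii, ii', h1, h2, _⟩ |
    ⟨ii, jj, kk, hxy, _⟩
  · rw [hk1] at h1; rw [hk2] at h2
    have e1 := (uu_inj h1).2
    have e2 := (uu_inj h2).2
    rw [hk1, hk2]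
    simp only [vK]
    rw [e1, e2]
    omega
  · rw [hk1] at h1; exact absurd h1 (by simp)
  · rcases hxy with ⟨h1, h2⟩ | ⟨h1, h2⟩
    · rw [hk1] at h1; exact absurd h1 (by simp)
    · rw [hk2] at h1; exact absurd h1 (by simp)
end AuxSquare2
section AuxMain
variable {r n : ℕ} (S : SubdivCopy (elemLadder n) (wallMinusAB r))

lemma far_disj (i i' : ℕ) (hi : i + 1 < n) (hi' : i' + 1 < n) (hgap : i + 1 < i') :
    ∀ v, sqMem S i hi v → sqMem S i' hi' v → False := by
  intro v h h'
  rcases h with h | h | h | h <;> rcases h' with h' | h' | h' | h' <;>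
    exact walks_disj_of_idx S _ _ (by refine ⟨?_, ?_, ?_, ?_⟩ <;> simp <;> omega) v h h'

lemma square_u_contra (i : ℕ) (hi : i + 1 < n) (j : Fin r)
    (hloc : ∀ v, sqMem S i hi v → v.val ∈ layerVerts r j)
    (hnz : ∀ v, sqMem S i hi v → ¬ isZV v.val) : False := by
  have hT : ∀ v, sqMem S i hi v → v ∈ {v : WMVert r | ∃ k, v.val = Sum.inl (j, k)} := by
    intro v hv
    rcases hloc v hv with ⟨k, hk⟩ | h | h
    · exact ⟨k, hk⟩
    · exact absurd ⟨j.castSucc, h⟩ (hnz v hv)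
    · exact absurd ⟨j.succ, h⟩ (hnz v hv)
  exact sqContra _ (fun v : WMVert r => vK v.val) (hinj_u j) (hadj_u j)
    (S.walk (rung_adj n i (Nat.lt_of_succ_lt hi))) (S.walk (rung_adj n (i+1) hi))
    (S.walk (str_adj n i hi false)) (S.walk (str_adj n i hi true))
    (fun v hv => hT v (Or.inl hv)) (fun v hv => hT v (Or.inr (Or.inl hv)))
    (fun v hv => hT v (Or.inr (Or.inr (Or.inl hv))))
    (fun v hv => hT v (Or.inr (Or.inr (Or.inr hv))))
    (rung_disj S i hi) (str_disj S i hi)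

lemma square_local (i : ℕ) (hi : i + 1 < n) :
    ∃ j : Fin r, ∀ v, sqMem S i hi v → v.val ∈ layerVerts r j := by
  by_cases hu : ∃ v, sqMem S i hi v ∧ ∃ (j : Fin r) (k : Fin (2*r)), v.val = Sum.inl (j, k)
  · obtain ⟨u0, hu0m, j, k, hu0⟩ := hu
    refine ⟨j, ?_⟩
    obtain ⟨s1, hc1⟩ := cut (m := (j:ℕ))
      (S.walk (rung_adj n i (Nat.lt_of_succ_lt hi))) (S.walk (rung_adj n (i+1) hi))
      (S.walk (str_adj n i hi false)) (S.walk (str_adj n i hi true))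
      (S.walk_isPath _) (S.walk_isPath _) (S.walk_isPath _) (S.walk_isPath _)
      (rung_disj S i hi) (str_disj S i hi)
      (sq_h13 S i hi) (sq_h14 S i hi) (sq_h23 S i hi) (sq_h24 S i hi)
      (br_ne S (Or.inr (by simp))) (br_ne S (Or.inr (by simp)))
      (br_ne S (Or.inl (by simp)))
    obtain ⟨s2, hc2⟩ := cut (m := (j:ℕ)+1)
      (S.walk (rung_adj n i (Nat.lt_of_succ_lt hi))) (S.walk (rung_adj n (i+1) hi))
      (S.walk (str_adj n i hi false)) (S.walk (str_adj n i hi true))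
      (S.walk_isPath _) (S.walk_isPath _) (S.walk_isPath _) (S.walk_isPath _)
      (rung_disj S i hi) (str_disj S i hi)
      (sq_h13 S i hi) (sq_h14 S i hi) (sq_h23 S i hi) (sq_h24 S i hi)
      (br_ne S (Or.inr (by simp))) (br_ne S (Or.inr (by simp)))
      (br_ne S (Or.inl (by simp)))
    have hs1 : s1 = false := by
      rcases hc1 u0 hu0m with hz | he
      · obtain ⟨ii, hii, _⟩ := hz
        rw [hu0] at hii
        exact absurd hii (by simp)
      · rw [hu0] at he
        have hval : sB (j:ℕ) (Sum.inl (j,k) : CWVert r) = false := by simp [sB]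
        rw [hval] at he
        exact he.symm
    have hs2 : s2 = true := by
      rcases hc2 u0 hu0m with hz | he
      · obtain ⟨ii, hii, _⟩ := hz
        rw [hu0] at hii
        exact absurd hii (by simp)
      · rw [hu0] at he
        have hval : sB ((j:ℕ)+1) (Sum.inl (j,k) : CWVert r) = true := by simp [sB]
        rw [hval] at he
        exact he.symm
    subst hs1 hs2
    intro v hv
    have H1 := hc1 v hv
    have H2 := hc2 v hv
    obtain ⟨vv, hva, hvb⟩ := v
    rcases vv with ⟨j',k'⟩ | (ii | b)
    · have hj1 : ¬ ((j' : ℕ) < (j:ℕ)) := by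
        rcases H1 with hz | he
        · obtain ⟨c, hc, _⟩ := hz
          exact absurd hc (by simp)
        · have hval : sB (j:ℕ) (Sum.inl (j',k') : CWVert r) = decide ((j':ℕ) < (j:ℕ)) := rfl
          rw [hval] at he
          simpa using he
      have hj2 : (j' : ℕ) < (j:ℕ)+1 := by
        rcases H2 with hz | he
        · obtain ⟨c, hc, _⟩ := hz
          exact absurd hc (by simp)
        · have hval : sB ((j:ℕ)+1) (Sum.inl (j',k') : CWVert r) = decide ((j':ℕ) < (j:ℕ)+1) := rfl
          rw [hval] at he
          simpa using he
      have hjj : j' = j := Fin.ext (by omega)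
      subst hjj
      exact Or.inl ⟨k', rfl⟩
    · have hj1 : (ii : ℕ) = (j:ℕ) ∨ (j:ℕ) ≤ (ii:ℕ) := by
        rcases H1 with hz | he
        · obtain ⟨c, hc, hcm⟩ := hz
          have : ii = c := zz_inj hc
          exact Or.inl (this ▸ hcm)
        · have hval : sB (j:ℕ) (Sum.inr (Sum.inl ii) : CWVert r) = decide ((ii:ℕ) < (j:ℕ)) := rfl
          rw [hval] at he
          simp at he
          omega
      have hj2 : (ii : ℕ) = (j:ℕ)+1 ∨ (ii:ℕ) < (j:ℕ)+1 := by
        rcases H2 with hz | he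
        · obtain ⟨c, hc, hcm⟩ := hz
          have : ii = c := zz_inj hc
          exact Or.inl (this ▸ hcm)
        · have hval : sB ((j:ℕ)+1) (Sum.inr (Sum.inl ii) : CWVert r) = decide ((ii:ℕ) < (j:ℕ)+1) := rfl
          rw [hval] at he
          exact Or.inr (by simpa using he)
      have hopt : (ii : ℕ) = (j:ℕ) ∨ (ii : ℕ) = (j:ℕ)+1 := by omega
      rcases hopt with hopt | hopt
      · refine Or.inr (Or.inl ?_)
        have hii : ii = j.castSucc := Fin.ext (by rw [Fin.coe_castSucc]; exact hopt)
        subst hii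
        rfl
      · refine Or.inr (Or.inr ?_)
        have hii : ii = j.succ := Fin.ext (by rw [Fin.val_succ]; exact hopt)
        subst hii
        rfl
    · exfalso
      cases b
      · exact hva rfl
      · exact hvb rfl
  · exfalso
    have hz : ∀ v, sqMem S i hi v → isZV v.val := by
      intro v hv
      obtain ⟨vv, hva, hvb⟩ := v
      rcases vv with ⟨j,k⟩ | (ii | b)
      · exact absurd ⟨_, hv, j, k, rfl⟩ hu
      · exact ⟨ii, rfl⟩
      · exfalso
        cases b
        · exact hva rfl
        · exact hvb rfl
    exact sqContra _ (fun v : WMVert r => vK v.val) hinj_z hadj_z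
      (S.walk (rung_adj n i (Nat.lt_of_succ_lt hi))) (S.walk (rung_adj n (i+1) hi))
      (S.walk (str_adj n i hi false)) (S.walk (str_adj n i hi true))
      (fun v hv => hz v (Or.inl hv)) (fun v hv => hz v (Or.inr (Or.inl hv)))
      (fun v hv => hz v (Or.inr (Or.inr (Or.inl hv))))
      (fun v hv => hz v (Or.inr (Or.inr (Or.inr hv))))
      (rung_disj S i hi) (str_disj S i hi)

lemma layer_z {j j' : Fin r} (hne : j ≠ j') {x : WMVert r}
    (h1 : x.val ∈ layerVerts r j) (h2 : x.val ∈ layerVerts r j') :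
    ∃ c : Fin (r+1), x.val = Sum.inr (Sum.inl c) ∧
      ((c:ℕ) = (j:ℕ) ∨ (c:ℕ) = (j:ℕ)+1) ∧ ((c:ℕ) = (j':ℕ) ∨ (c:ℕ) = (j':ℕ)+1) := by
  rcases h1 with ⟨k, hk⟩ | h | h <;> rcases h2 with ⟨k', hk'⟩ | h' | h'
  · rw [hk] at hk'
    exact absurd (uu_inj hk').1 hne
  · rw [hk] at h'
    exact absurd h' (by simp [cwU, cwZ])
  · rw [hk] at h'
    exact absurd h' (by simp [cwU, cwZ])
  · rw [h] at hk'
    exact absurd hk' (by simp [cwU, cwZ])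
  · have he := congrArg Fin.val (zz_inj ((h.symm.trans h' : (cwZ j.castSucc : CWVert r) = cwZ j'.castSucc)))
    refine ⟨j.castSucc, h, Or.inl (Fin.coe_castSucc j), ?_⟩
    rw [Fin.coe_castSucc] at he ⊢
    rw [Fin.coe_castSucc] at he
    exact Or.inl he
  · have he := congrArg Fin.val (zz_inj ((h.symm.trans h' : (cwZ j.castSucc : CWVert r) = cwZ j'.succ)))
    refine ⟨j.castSucc, h, Or.inl (Fin.coe_castSucc j), ?_⟩
    rw [Fin.coe_castSucc] at he ⊢
    rw [Fin.val_succ] at he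
    exact Or.inr he
  · rw [h] at hk'
    exact absurd hk' (by simp [cwU, cwZ])
  · have he := congrArg Fin.val (zz_inj ((h.symm.trans h' : (cwZ j.succ : CWVert r) = cwZ j'.castSucc)))
    refine ⟨j.succ, h, Or.inr (Fin.val_succ j), ?_⟩
    rw [Fin.val_succ] at he ⊢
    rw [Fin.coe_castSucc] at he
    exact Or.inl he
  · have he := congrArg Fin.val (zz_inj ((h.symm.trans h' : (cwZ j.succ : CWVert r) = cwZ j'.succ)))
    refine ⟨j.succ, h, Or.inr (Fin.val_succ j), ?_⟩
    rw [Fin.val_succ] at he ⊢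
    rw [Fin.val_succ] at he
    exact Or.inr he

lemma layer_eq {j j' : Fin r} {x y : WMVert r} (hxy : x ≠ y)
    (hx1 : x.val ∈ layerVerts r j) (hy1 : y.val ∈ layerVerts r j)
    (hx2 : x.val ∈ layerVerts r j') (hy2 : y.val ∈ layerVerts r j') : j = j' := by
  by_contra hne
  obtain ⟨c, hcx, hc1, hc2⟩ := layer_z hne hx1 hx2
  obtain ⟨d, hdy, hd1, hd2⟩ := layer_z hne hy1 hy2
  have hcd : c ≠ d := fun he => hxy (Subtype.ext (by rw [hcx, hdy, he]))
  have hv : (c:ℕ) ≠ (d:ℕ) := fun hv => hcd (Fin.ext hv)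
  have hjj : (j:ℕ) ≠ (j':ℕ) := fun hv => hne (Fin.ext hv)
  omega

lemma chain (i : ℕ) (hi : i+1 < n) (hi2 : (i+1)+1 < n) {j j' : Fin r}
    (hl : ∀ v, sqMem S i hi v → v.val ∈ layerVerts r j)
    (hl' : ∀ v, sqMem S (i+1) hi2 v → v.val ∈ layerVerts r j') : j = j' := by
  have hx : sqMem S i hi (S.branch (⟨i+1, hi⟩, false)) :=
    Or.inr (Or.inl (SimpleGraph.Walk.start_mem_support _))
  have hy : sqMem S i hi (S.branch (⟨i+1, hi⟩, true)) :=
    Or.inr (Or.inl (SimpleGraph.Walk.end_mem_support _))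
  have hx' : sqMem S (i+1) hi2 (S.branch (⟨i+1, hi⟩, false)) :=
    Or.inl (SimpleGraph.Walk.start_mem_support _)
  have hy' : sqMem S (i+1) hi2 (S.branch (⟨i+1, hi⟩, true)) :=
    Or.inl (SimpleGraph.Walk.end_mem_support _)
  exact layer_eq (br_ne S (Or.inr (by simp))) (hl _ hx) (hl _ hy) (hl' _ hx') (hl' _ hy')
end AuxMain
/-- Every ladder contained in `W − {a, b}` has at most 5 rungs. -/
theorem ladder_in_wall_minus_ab_le_five (r n : ℕ)
    (S : SubdivCopy (elemLadder n) (wallMinusAB r)) : n ≤ 5 := by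
  by_contra hn
  push_neg at hn
  have h01 : 0 + 1 < n := by omega
  have h11 : 1 + 1 < n := by omega
  have h21 : 2 + 1 < n := by omega
  have h31 : 3 + 1 < n := by omega
  have h41 : 4 + 1 < n := by omega
  obtain ⟨j0, hl0⟩ := square_local S 0 h01
  obtain ⟨j1, hl1⟩ := square_local S 1 h11
  obtain ⟨j2, hl2⟩ := square_local S 2 h21
  obtain ⟨j3, hl3⟩ := square_local S 3 h31
  obtain ⟨j4, hl4⟩ := square_local S 4 h41
  have e01 : j0 = j1 := chain S 0 h01 h11 hl0 hl1
  have e12 : j1 = j2 := chain S 1 h11 h21 hl1 hl2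
  have e23 : j2 = j3 := chain S 2 h21 h31 hl2 hl3
  have e34 : j3 = j4 := chain S 3 h31 h41 hl3 hl4
  have ej2 : j2 = j0 := (e01.trans e12).symm
  have ej4 : j4 = j0 := (e01.trans (e12.trans (e23.trans e34))).symm
  rw [ej2] at hl2
  rw [ej4] at hl4
  by_cases c0 : ∀ v, sqMem S 0 h01 v → ¬ isZV v.val
  · exact square_u_contra S 0 h01 j0 hl0 c0
  by_cases c2 : ∀ v, sqMem S 2 h21 v → ¬ isZV v.val
  · exact square_u_contra S 2 h21 j0 hl2 c2
  by_cases c4 : ∀ v, sqMem S 4 h41 v → ¬ isZV v.val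
  · exact square_u_contra S 4 h41 j0 hl4 c4
  push_neg at c0 c2 c4
  obtain ⟨v0, hm0, hz0⟩ := c0
  obtain ⟨v2, hm2, hz2⟩ := c2
  obtain ⟨v4, hm4, hz4⟩ := c4
  have opt : ∀ (v : WMVert r), v.val ∈ layerVerts r j0 → isZV v.val →
      v.val = cwZ j0.castSucc ∨ v.val = cwZ j0.succ := by
    intro v hl hz
    rcases hl with ⟨k, hk⟩ | h | h
    · obtain ⟨c, hc⟩ := hz
      rw [hk] at hc
      exact absurd hc (by simp [cwU, cwZ])
    · exact Or.inl h
    · exact Or.inr h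
  have o0 := opt v0 (hl0 _ hm0) hz0
  have o2 := opt v2 (hl2 _ hm2) hz2
  have o4 := opt v4 (hl4 _ hm4) hz4
  have d02 : v0 ≠ v2 := fun he => far_disj S 0 2 h01 h21 (by omega) v0 hm0 (he ▸ hm2)
  have d04 : v0 ≠ v4 := fun he => far_disj S 0 4 h01 h41 (by omega) v0 hm0 (he ▸ hm4)
  have d24 : v2 ≠ v4 := fun he => far_disj S 2 4 h21 h41 (by omega) v2 hm2 (he ▸ hm4)
  rcases o0 with h0 | h0 <;> rcases o2 with h2 | h2 <;> rcases o4 with h4 | h4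
  · exact d02 (Subtype.ext (h0.trans h2.symm))
  · exact d02 (Subtype.ext (h0.trans h2.symm))
  · exact d04 (Subtype.ext (h0.trans h4.symm))
  · exact d24 (Subtype.ext (h2.trans h4.symm))
  · exact d24 (Subtype.ext (h2.trans h4.symm))
  · exact d04 (Subtype.ext (h0.trans h4.symm))
  · exact d02 (Subtype.ext (h0.trans h2.symm))
  · exact d02 (Subtype.ext (h0.trans h2.symm))
end

section
/- Let W be a condensed wall with special vertices a, b and bottleneck vertices z_0, …, z_r. In W − {a, b} the following configurations do not exist: (1) a ladder L with 5 rungs together with a path, internally disjoint from L, joining an endvertex v_1 of an end-rung of L to a vertex v_2, such that the branch vertex corresponding to v_1 or to v_2 is a bottleneck vertex; (2) a ladder L with 4 rungs together with two disjoint paths, internally disjoint from L, one joining an endvertex v_1 of one end-rung of L (continuing one stringer) to a vertex v_2 and the other joining the endvertex v_3 on the other stringer of the opposite end-rung of L to a vertex v_4, such that one of v_1, v_2 and one of v_3, v_4 is a bottleneck vertex; (3) a ladder L with 3 rungs together with two disjoint paths, internally disjoint from L, joining the two endvertices v_1, v_3 of the same end-rung of L to vertices v_2 and v_4 respectively, such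 that one of v_1, v_2 and one of v_3, v_4 is a bottleneck vertex. -/
open SimpleGraph

namespace NoBottleneck
open SimpleGraph Walk

variable {r : ℕ}

def lo : CWVert r → ℕ
  | Sum.inl (j, _) => j
  | Sum.inr (Sum.inl i) => i
  | Sum.inr (Sum.inr _) => 0

def hi : CWVert r → ℕ
  | Sum.inl (j, _) => (j : ℕ) + 1
  | Sum.inr (Sum.inl i) => i
  | Sum.inr (Sum.inr _) => 0

lemma not_ab (v : WMVert r) (bb : Bool) : v.val ≠ Sum.inr (Sum.inr bb) := by
  rcases v.prop with ⟨ha, hb⟩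
  cases bb
  · simpa [cwA] using ha
  · simpa [cwB] using hb

lemma val_cases (v : WMVert r) :
    (∃ j k, v.val = Sum.inl (j, k)) ∨ (∃ i, v.val = Sum.inr (Sum.inl i)) := by
  rcases hv : v.val with ⟨j, k⟩ | i | bb
  · exact Or.inl ⟨j, k, rfl⟩
  · exact Or.inr ⟨i, rfl⟩
  · exact absurd hv (not_ab v bb)

lemma adj_cases {x y : WMVert r} (h : (wallMinusAB r).Adj x y) :
    (∃ (j : Fin r) (k k' : Fin (2*r)), x.val = Sum.inl (j,k) ∧ y.val = Sum.inl (j,k') ∧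
      ((k':ℕ) = (k:ℕ) + 1 ∨ (k:ℕ) = (k':ℕ) + 1)) ∨
    (∃ i i' : Fin (r+1), x.val = Sum.inr (Sum.inl i) ∧ y.val = Sum.inr (Sum.inl i') ∧
      ((i':ℕ) = (i:ℕ) + 1 ∨ (i:ℕ) = (i':ℕ) + 1)) ∨
    (∃ (i : Fin (r+1)) (j : Fin r) (k : Fin (2*r)),
      ((x.val = Sum.inr (Sum.inl i) ∧ y.val = Sum.inl (j,k)) ∨
       (y.val = Sum.inr (Sum.inl i) ∧ x.val = Sum.inl (j,k))) ∧
      ((i:ℕ) = (j:ℕ) ∨ (i:ℕ) = (j:ℕ) + 1)) := by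
  have h' : (condensedWall r).Adj x.val y.val := by
    exact h
  rw [condensedWall, SimpleGraph.fromRel_adj] at h'
  obtain ⟨hne, hrel⟩ := h'
  rcases val_cases x with ⟨j, k, hx⟩ | ⟨i, hx⟩ <;> rcases val_cases y with ⟨j', k', hy⟩ | ⟨i', hy⟩ <;>
    rw [hx, hy] at hrel
  · left
    rcases hrel with ⟨hj, hk⟩ | ⟨hj, hk⟩
    · refine ⟨j, k, k', hx, ?_, Or.inl hk⟩; rw [hy, hj]
    · refine ⟨j, k, k', hx, ?_, Or.inr hk⟩; rw [hy, ← hj]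
  · right; right
    rcases hrel with h0 | h0
    · exact absurd h0 (by simp)
    · rcases h0 with ⟨h1, _⟩ | ⟨h1, _⟩
      · exact ⟨i', j, k, Or.inr ⟨hy, hx⟩, Or.inl h1⟩
      · exact ⟨i', j, k, Or.inr ⟨hy, hx⟩, Or.inr h1⟩
  · right; right
    rcases hrel with h0 | h0
    · rcases h0 with ⟨h1, _⟩ | ⟨h1, _⟩
      · exact ⟨i, j', k', Or.inl ⟨hx, hy⟩, Or.inl h1⟩
      · exact ⟨i, j', k', Or.inl ⟨hx, hy⟩, Or.inr h1⟩
    · exact absurd h0 (by simp)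
  · right; left
    rcases hrel with h0 | h0
    · exact ⟨i, i', hx, hy, Or.inl h0⟩
    · exact ⟨i, i', hx, hy, Or.inr h0⟩

lemma adj_side (m : ℕ) {x y : WMVert r} (h : (wallMinusAB r).Adj x y) :
    (hi x.val ≤ m ∧ hi y.val ≤ m) ∨ (m ≤ lo x.val ∧ m ≤ lo y.val) := by
  rcases adj_cases h with ⟨j,k,k',hx,hy,_⟩ | ⟨i,i',hx,hy,hii⟩ | ⟨i,j,k,hxy,hij⟩
  · rw [hx, hy]; simp only [lo, hi]; omega
  · rw [hx, hy]; simp only [lo, hi]; omega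
  · rcases hxy with ⟨hx, hy⟩ | ⟨hy, hx⟩ <;> rw [hx, hy] <;> simp only [lo, hi] <;> omega

lemma adj_uu {x y : WMVert r} (h : (wallMinusAB r).Adj x y) {j : Fin r} {k : Fin (2*r)}
    (hx : x.val = Sum.inl (j,k))
    (hy : ∀ i : Fin (r+1), y.val ≠ Sum.inr (Sum.inl i)) :
    ∃ k' : Fin (2*r), y.val = Sum.inl (j, k') ∧ ((k':ℕ) = (k:ℕ)+1 ∨ (k:ℕ) = (k':ℕ)+1) := by
  rcases adj_cases h with ⟨j0,k0,k0',hx0,hy0,hk⟩ | ⟨i,i',hx0,hy0,hii⟩ | ⟨i,j0,k0,hxy,hij⟩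
  · have h2 := hx.symm.trans hx0
    replace h2 : ((j, k) : Fin r × Fin (2*r)) = (j0, k0) := Sum.inl.inj h2
    rw [Prod.mk.injEq] at h2
    obtain ⟨hj, hkk⟩ := h2
    subst hj; subst hkk
    exact ⟨k0', hy0, hk⟩
  · exact absurd (hx.symm.trans hx0) (by simp)
  · rcases hxy with ⟨hx0, _⟩ | ⟨hy0, _⟩
    · exact absurd (hx.symm.trans hx0) (by simp)
    · exact absurd hy0 (hy i)

end NoBottleneck
namespace NoBottleneck
open SimpleGraph Walk

section Abstract
variable {V : Type} {G : SimpleGraph V} {A B : Set V}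

lemma cross (hside : ∀ ⦃x y : V⦄, G.Adj x y → (x ∈ A ∧ y ∈ A) ∨ (x ∈ B ∧ y ∈ B))
    {s t : V} (W : G.Walk s t) :
    s ∈ A → t ∉ A → ∃ v ∈ W.support, v ∈ A ∧ v ∈ B := by
  induction W with
  | nil => exact fun hs ht => absurd hs ht
  | cons h p ih =>
    intro hs ht
    rcases hside h with ⟨h1, h2⟩ | ⟨h1, h2⟩
    · obtain ⟨v, hv, hva⟩ := ih h2 ht
      exact ⟨v, by simp [hv], hva⟩
    · exact ⟨_, by simp, hs, h1⟩

lemma stay (hside : ∀ ⦃x y : V⦄, G.Adj x y → (x ∈ A ∧ y ∈ A) ∨ (x ∈ B ∧ y ∈ B))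
    {s t : V} (W : G.Walk s t) :
    (∀ v ∈ W.support, ¬(v ∈ A ∧ v ∈ B)) → s ∈ A → ∀ v ∈ W.support, v ∈ A := by
  induction W with
  | nil =>
    intro _ hs v hv
    rw [Walk.support_nil, List.mem_singleton] at hv
    rwa [hv]
  | cons h p ih =>
    intro hz hs v hv
    rw [Walk.support_cons, List.mem_cons] at hv
    rcases hv with rfl | hv
    · exact hs
    · rcases hside h with ⟨h1, h2⟩ | ⟨h1, h2⟩
      · exact ih (fun w hw => hz w (by simp [hw])) h2 v hv
      · exact absurd ⟨hs, h1⟩ (hz _ (by simp))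

lemma pathstay (hside : ∀ ⦃x y : V⦄, G.Adj x y → (x ∈ A ∧ y ∈ A) ∨ (x ∈ B ∧ y ∈ B))
    (hcover : ∀ x : V, x ∈ A ∨ x ∈ B)
    (hsub : ∀ x y : V, x ∈ A → x ∈ B → y ∈ A → y ∈ B → x = y)
    {s t : V} (W : G.Walk s t) :
    W.IsPath → s ∈ A → t ∈ A → ∀ v ∈ W.support, v ∈ A := by
  induction W with
  | nil =>
    intro _ hs _ v hv
    rw [Walk.support_nil, List.mem_singleton] at hv
    rwa [hv]
  | @cons a b c h p ih =>
    intro hP hs ht v hv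
    rw [Walk.cons_isPath_iff] at hP
    obtain ⟨hp, hnotin⟩ := hP
    rw [Walk.support_cons, List.mem_cons] at hv
    rcases hv with rfl | hv
    · exact hs
    · rcases hside h with ⟨h1, h2⟩ | ⟨h1, h2⟩
      · exact ih hp h2 ht v hv
      · -- a ∈ A ∩ B
        by_cases htB : c ∈ B
        · have : c = a := hsub c a ht htB hs h1
          exact absurd (this ▸ Walk.end_mem_support p) hnotin
        · obtain ⟨w, hw, hwB, hwA⟩ :=
            cross (A := B) (B := A) (fun x y hxy => (hside hxy).symm) p h2 htB
          have : w = a := hsub w a hwA hwB hs h1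
          exact absurd (this ▸ hw) hnotin

lemma square_side_A (hside : ∀ ⦃x y : V⦄, G.Adj x y → (x ∈ A ∧ y ∈ A) ∨ (x ∈ B ∧ y ∈ B))
    (hcover : ∀ x : V, x ∈ A ∨ x ∈ B)
    (hsub : ∀ x y : V, x ∈ A → x ∈ B → y ∈ A → y ∈ B → x = y)
    {v1 v2 v3 v4 : V} (X1 : G.Walk v1 v2) (X2 : G.Walk v2 v3) (X3 : G.Walk v3 v4)
    (X4 : G.Walk v4 v1) (h1 : X1.IsPath) (h2 : X2.IsPath)
    (hz3 : ∀ v ∈ X3.support, ¬(v ∈ A ∧ v ∈ B))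
    (hz4 : ∀ v ∈ X4.support, ¬(v ∈ A ∧ v ∈ B))
    (hz2 : (∀ v ∈ X2.support, ¬(v ∈ A ∧ v ∈ B)) ∨ (v2 ∈ A ∧ v2 ∈ B))
    (hv3 : v3 ∈ A) :
    ∀ v, (v ∈ X1.support ∨ v ∈ X2.support ∨ v ∈ X3.support ∨ v ∈ X4.support) → v ∈ A := by
  have hX3 : ∀ v ∈ X3.support, v ∈ A := stay hside X3 hz3 hv3
  have hv4 : v4 ∈ A := hX3 _ (Walk.end_mem_support X3)
  have hX4 : ∀ v ∈ X4.support, v ∈ A := stay hside X4 hz4 hv4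
  have hv1 : v1 ∈ A := hX4 _ (Walk.end_mem_support X4)
  have hv2 : v2 ∈ A := by
    rcases hz2 with hz2 | hz2
    · have := stay hside X2.reverse (by simpa using hz2) (by simpa using hv3)
      have h := this v2 (by simp)
      exact h
    · exact hz2.1
  have hX2 : ∀ v ∈ X2.support, v ∈ A := pathstay hside hcover hsub X2 h2 hv2 hv3
  have hX1 : ∀ v ∈ X1.support, v ∈ A := pathstay hside hcover hsub X1 h1 hv1 hv2
  intro v hv
  rcases hv with hv | hv | hv | hv
  · exact hX1 v hv
  · exact hX2 v hv
  · exact hX3 v hv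
  · exact hX4 v hv

lemma square_side (hside : ∀ ⦃x y : V⦄, G.Adj x y → (x ∈ A ∧ y ∈ A) ∨ (x ∈ B ∧ y ∈ B))
    (hcover : ∀ x : V, x ∈ A ∨ x ∈ B)
    (hsub : ∀ x y : V, x ∈ A → x ∈ B → y ∈ A → y ∈ B → x = y)
    {v1 v2 v3 v4 : V} (X1 : G.Walk v1 v2) (X2 : G.Walk v2 v3) (X3 : G.Walk v3 v4)
    (X4 : G.Walk v4 v1) (h1 : X1.IsPath) (h2 : X2.IsPath)
    (hz3 : ∀ v ∈ X3.support, ¬(v ∈ A ∧ v ∈ B))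
    (hz4 : ∀ v ∈ X4.support, ¬(v ∈ A ∧ v ∈ B))
    (hz2 : (∀ v ∈ X2.support, ¬(v ∈ A ∧ v ∈ B)) ∨ (v2 ∈ A ∧ v2 ∈ B)) :
    (∀ v, (v ∈ X1.support ∨ v ∈ X2.support ∨ v ∈ X3.support ∨ v ∈ X4.support) → v ∈ A) ∨
    (∀ v, (v ∈ X1.support ∨ v ∈ X2.support ∨ v ∈ X3.support ∨ v ∈ X4.support) → v ∈ B) := by
  have hside' : ∀ ⦃x y : V⦄, G.Adj x y → (x ∈ B ∧ y ∈ B) ∨ (x ∈ A ∧ y ∈ A) :=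
    fun x y hxy => (hside hxy).symm
  have hcover' : ∀ x : V, x ∈ B ∨ x ∈ A := fun x => (hcover x).symm
  have hsub' : ∀ x y : V, x ∈ B → x ∈ A → y ∈ B → y ∈ A → x = y :=
    fun x y a b c d => hsub x y b a d c
  rcases hcover v3 with hv3 | hv3
  · exact Or.inl (square_side_A hside hcover hsub X1 X2 X3 X4 h1 h2 hz3 hz4 hz2 hv3)
  · refine Or.inr (square_side_A hside' hcover' hsub' X1 X2 X3 X4 h1 h2 ?_ ?_ ?_ hv3)
    · exact fun v hv hc => hz3 v hv ⟨hc.2, hc.1⟩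
    · exact fun v hv hc => hz4 v hv ⟨hc.2, hc.1⟩
    · rcases hz2 with hz2 | hz2
      · exact Or.inl (fun v hv hc => hz2 v hv ⟨hc.2, hc.1⟩)
      · exact Or.inr ⟨hz2.2, hz2.1⟩

end Abstract
end NoBottleneck
namespace NoBottleneck
open SimpleGraph Walk

variable {r : ℕ}

def Am (m : ℕ) : Set (WMVert r) := {v | hi v.val ≤ m}
def Bm (m : ℕ) : Set (WMVert r) := {v | m ≤ lo v.val}

lemma wm_hside (m : ℕ) : ∀ ⦃x y : WMVert r⦄, (wallMinusAB r).Adj x y →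
    (x ∈ Am m ∧ y ∈ Am m) ∨ (x ∈ Bm m ∧ y ∈ Bm m) := fun _ _ h => adj_side m h

lemma wm_hcover (m : ℕ) : ∀ v : WMVert r, v ∈ Am m ∨ v ∈ Bm m := by
  intro v
  rcases val_cases v with ⟨j,k,hv⟩ | ⟨i,hv⟩ <;>
    simp only [Am, Bm, Set.mem_setOf_eq, hv, lo, hi] <;> omega

lemma wm_z_of_AB {m : ℕ} {v : WMVert r} (hA : v ∈ Am m) (hB : v ∈ Bm m) :
    ∃ i : Fin (r+1), v.val = Sum.inr (Sum.inl i) ∧ (i : ℕ) = m := by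
  rcases val_cases v with ⟨j,k,hv⟩ | ⟨i,hv⟩ <;>
    simp only [Am, Bm, Set.mem_setOf_eq, hv, lo, hi] at hA hB
  · omega
  · exact ⟨i, hv, by omega⟩

lemma wm_hsub (m : ℕ) :
    ∀ x y : WMVert r, x ∈ Am m → x ∈ Bm m → y ∈ Am m → y ∈ Bm m → x = y := by
  intro x y hx1 hx2 hy1 hy2
  obtain ⟨i, hx, hi1⟩ := wm_z_of_AB hx1 hx2
  obtain ⟨i', hy, hi2⟩ := wm_z_of_AB hy1 hy2
  apply Subtype.ext
  rw [hx, hy]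
  have : i = i' := Fin.ext (by omega)
  rw [this]

lemma wm_hi_le_r (v : WMVert r) : hi v.val ≤ r := by
  rcases val_cases v with ⟨j,k,hv⟩ | ⟨i,hv⟩ <;> simp only [hv, hi]
  · exact j.2
  · exact Nat.lt_succ_iff.mp i.2

lemma zfree_ivt {x y : WMVert r} (W : (wallMinusAB r).Walk x y) :
    (∀ v ∈ W.support, ∀ i : Fin (r+1), v.val ≠ Sum.inr (Sum.inl i)) →
    ∀ (j : Fin r) (kx : Fin (2*r)), x.val = Sum.inl (j, kx) →
    ∃ ky : Fin (2*r), y.val = Sum.inl (j, ky) ∧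
      ∀ g : ℕ, ((kx:ℕ) ≤ g ∧ g ≤ (ky:ℕ)) ∨ ((ky:ℕ) ≤ g ∧ g ≤ (kx:ℕ)) →
        ∃ v ∈ W.support, ∃ kg : Fin (2*r), (kg:ℕ) = g ∧ v.val = Sum.inl (j, kg) := by
  induction W with
  | nil =>
    intro _ j kx hx
    exact ⟨kx, hx, fun g hg =>
      ⟨_, Walk.start_mem_support _, kx, by omega, hx⟩⟩
  | @cons a b c h p ih =>
    intro hz j kx hx
    have hb : ∀ i : Fin (r+1), b.val ≠ Sum.inr (Sum.inl i) := hz b (by simp)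
    obtain ⟨k', hb', hkk⟩ := adj_uu h hx hb
    obtain ⟨ky, hy, hivt⟩ := ih (fun v hv => hz v (by simp [hv])) j k' hb'
    refine ⟨ky, hy, ?_⟩
    intro g hg
    by_cases hgx : g = (kx:ℕ)
    · exact ⟨a, Walk.start_mem_support _, kx, hgx.symm, hx⟩
    · have hg' : ((k':ℕ) ≤ g ∧ g ≤ (ky:ℕ)) ∨ ((ky:ℕ) ≤ g ∧ g ≤ (k':ℕ)) := by omega
      obtain ⟨v, hv, res⟩ := hivt g hg'
      exact ⟨v, by simp [hv], res⟩

end NoBottleneck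
namespace NoBottleneck
open SimpleGraph Walk

variable {r : ℕ}

lemma elem_rung {n : ℕ} (a : Fin n) : (elemLadder n).Adj (a, false) (a, true) := by
  rw [elemLadder, SimpleGraph.fromRel_adj]
  exact ⟨by simp, Or.inl (Or.inr ⟨rfl, by simp⟩)⟩

lemma elem_str {n : ℕ} {a b : Fin n} (hab : (b:ℕ) = (a:ℕ) + 1) (s : Bool) :
    (elemLadder n).Adj (a, s) (b, s) := by
  rw [elemLadder, SimpleGraph.fromRel_adj]
  refine ⟨?_, Or.inl (Or.inl ⟨rfl, hab⟩)⟩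
  intro h
  rw [Prod.mk.injEq] at h
  have := congrArg Fin.val h.1
  omega

section Square

variable {n : ℕ} (L : SubdivCopy (elemLadder n) (wallMinusAB r)) {a b : Fin n}
  (hab : (b:ℕ) = (a:ℕ) + 1)

/-- Support of the square between rungs `a` and `b = a+1`. -/
def sqSupp : Set (WMVert r) :=
  {v | v ∈ (L.walk (elem_rung a)).support ∨ v ∈ (L.walk (elem_str hab false)).support ∨
       v ∈ (L.walk (elem_str hab true)).support ∨ v ∈ (L.walk (elem_rung b)).support}

lemma corner_mem_sq (s : Bool) :
    L.branch (a, s) ∈ sqSupp L hab ∧ L.branch (b, s) ∈ sqSupp L hab := by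
  constructor
  · cases s
    · exact Or.inl (Walk.start_mem_support _)
    · exact Or.inl (Walk.end_mem_support _)
  · cases s
    · exact Or.inr (Or.inr (Or.inr (Walk.start_mem_support _)))
    · exact Or.inr (Or.inr (Or.inr (Walk.end_mem_support _)))

lemma mem_sq_cases {v0 : WMVert r} (hv0 : v0 ∈ sqSupp L hab) :
    ∃ (c d : Fin n × Bool) (h : (elemLadder n).Adj c d), v0 ∈ (L.walk h).support ∧
      ((c.1:ℕ) = a ∨ (c.1:ℕ) = (a:ℕ)+1) ∧ ((d.1:ℕ) = a ∨ (d.1:ℕ) = (a:ℕ)+1) := by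
  rcases hv0 with hv | hv | hv | hv
  · exact ⟨(a,false), (a,true), elem_rung a, hv, Or.inl rfl, Or.inl rfl⟩
  · exact ⟨(a,false), (b,false), elem_str hab false, hv, Or.inl rfl, Or.inr hab⟩
  · exact ⟨(a,true), (b,true), elem_str hab true, hv, Or.inl rfl, Or.inr hab⟩
  · exact ⟨(b,false), (b,true), elem_rung b, hv, Or.inr hab, Or.inr hab⟩

lemma in_sq_coord {v0 : WMVert r} (hv0 : v0 ∈ sqSupp L hab) (c0 : Fin n × Bool)
    (hc : v0 = L.branch c0) : (c0.1:ℕ) = a ∨ (c0.1:ℕ) = (a:ℕ)+1 := by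
  obtain ⟨c, d, h, hv, hc1, hd1⟩ := mem_sq_cases L hab hv0
  rcases L.branch_not_interior h c0 (hc ▸ hv) with rfl | rfl
  · exact hc1
  · exact hd1

lemma branch_ne {c c' : Fin n × Bool} (h : c ≠ c') : L.branch c ≠ L.branch c' :=
  fun hc => h (L.branch_inj hc)

lemma corner_ne_s (hab : (b:ℕ) = (a:ℕ) + 1) {s : Bool} :
    ((a, s) : Fin n × Bool) ≠ (b, s) := by
  intro h; rw [Prod.mk.injEq] at h; have := congrArg Fin.val h.1; omega

lemma corner_ne_bool {aa bb : Fin n} {s : Bool} : ((aa, s) : Fin n × Bool) ≠ (bb, !s) := by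
  intro h; rw [Prod.mk.injEq] at h; have := h.2; cases s <;> simp at this

lemma sym2_rungs_ne (hab : (b:ℕ) = (a:ℕ) + 1) :
    s(((a,false) : Fin n × Bool),(a,true)) ≠ s((b,false),(b,true)) := by
  intro h
  rw [Sym2.eq_iff] at h
  rcases h with ⟨h1, _⟩ | ⟨h1, _⟩
  · exact corner_ne_s hab h1
  · exact corner_ne_bool h1

lemma sym2_strs_ne (hab : (b:ℕ) = (a:ℕ) + 1) :
    s(((a,false) : Fin n × Bool),(b,false)) ≠ s((a,true),(b,true)) := by
  intro h
  rw [Sym2.eq_iff] at h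
  rcases h with ⟨h1, _⟩ | ⟨h1, h2⟩
  · exact (corner_ne_bool (aa := a) (bb := a) (s := false)) h1
  · rw [Prod.mk.injEq] at h1
    have := congrArg Fin.val h1.1; omega

/-- Some bottleneck vertex lies on every square. -/
lemma sq_z : ∃ v ∈ sqSupp L hab, ∃ i : Fin (r+1),
    v.val = (Sum.inr (Sum.inl i) : CWVert r) := by
  classical
  by_contra hcon
  have hz1 : ∀ v ∈ (L.walk (elem_rung a)).support, ∀ i : Fin (r+1),
      v.val ≠ (Sum.inr (Sum.inl i) : CWVert r) :=
    fun v hv i hvi => hcon ⟨v, Or.inl hv, i, hvi⟩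
  have hz2 : ∀ v ∈ (L.walk (elem_str hab false)).support, ∀ i : Fin (r+1),
      v.val ≠ (Sum.inr (Sum.inl i) : CWVert r) :=
    fun v hv i hvi => hcon ⟨v, Or.inr (Or.inl hv), i, hvi⟩
  have hz3 : ∀ v ∈ (L.walk (elem_str hab true)).support, ∀ i : Fin (r+1),
      v.val ≠ (Sum.inr (Sum.inl i) : CWVert r) :=
    fun v hv i hvi => hcon ⟨v, Or.inr (Or.inr (Or.inl hv)), i, hvi⟩
  have hz4 : ∀ v ∈ (L.walk (elem_rung b)).support, ∀ i : Fin (r+1),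
      v.val ≠ (Sum.inr (Sum.inl i) : CWVert r) :=
    fun v hv i hvi => hcon ⟨v, Or.inr (Or.inr (Or.inr hv)), i, hvi⟩
  obtain ⟨j, k1, hbp⟩ : ∃ j k1, (L.branch ((a : Fin n), false)).val = Sum.inl (j, k1) := by
    rcases val_cases (L.branch (a, false)) with ⟨j, k, hv⟩ | ⟨i, hv⟩
    · exact ⟨j, k, hv⟩
    · exact absurd hv (hz1 _ (Walk.start_mem_support _) i)
  obtain ⟨k2, hbq, ivt1⟩ := zfree_ivt (L.walk (elem_rung a)) hz1 j k1 hbp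
  obtain ⟨k3, hbp', ivt2⟩ := zfree_ivt (L.walk (elem_str hab false)) hz2 j k1 hbp
  obtain ⟨k4, hbq', ivt3⟩ := zfree_ivt (L.walk (elem_str hab true)) hz3 j k2 hbq
  obtain ⟨k4', hbq'2, ivt4⟩ := zfree_ivt (L.walk (elem_rung b)) hz4 j k3 hbp'
  have hk44 : k4' = k4 := by
    have := hbq'2.symm.trans hbq'
    replace this : ((j, k4') : Fin r × Fin (2*r)) = (j, k4) := Sum.inl.inj this
    rw [Prod.mk.injEq] at this
    exact this.2
  rw [hk44] at ivt4
  -- distinctness of corner coordinates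
  have hne12 : (k1:ℕ) ≠ (k2:ℕ) := by
    intro h
    have : L.branch ((a : Fin n), false) = L.branch (a, true) :=
      Subtype.ext (by rw [hbp, hbq]; congr 2; exact Fin.ext h)
    exact branch_ne L (corner_ne_bool) this
  have hne34 : (k3:ℕ) ≠ (k4:ℕ) := by
    intro h
    have : L.branch ((b : Fin n), false) = L.branch (b, true) :=
      Subtype.ext (by rw [hbp', hbq']; congr 2; exact Fin.ext h)
    exact branch_ne L (corner_ne_bool) this
  -- intervals [k1,k2] and [k3,k4] are disjoint
  have disj : ∀ g : ℕ, ((k1:ℕ) ≤ g ∧ g ≤ (k2:ℕ) ∨ (k2:ℕ) ≤ g ∧ g ≤ (k1:ℕ)) →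
      ((k3:ℕ) ≤ g ∧ g ≤ (k4:ℕ) ∨ (k4:ℕ) ≤ g ∧ g ≤ (k3:ℕ)) → False := by
    intro g hg1 hg2
    obtain ⟨v, hv1, kg, hkg, hval⟩ := ivt1 g hg1
    obtain ⟨v', hv4, kg', hkg', hval'⟩ := ivt4 g hg2
    have : v = v' := Subtype.ext (by rw [hval, hval']; congr 2; exact Fin.ext (by omega))
    subst this
    obtain ⟨hA, hB⟩ := L.walk_disj (elem_rung a) (elem_rung b) (sym2_rungs_ne hab) v hv1 hv4
    rcases hA with rfl | rfl <;> rcases hB with hB | hB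
    · exact corner_ne_s hab (L.branch_inj hB)
    · exact corner_ne_bool (L.branch_inj hB)
    · exact corner_ne_bool (L.branch_inj hB)
    · exact corner_ne_s hab (L.branch_inj hB)
  have key : ∃ g : ℕ, ((k1:ℕ) ≤ g ∧ g ≤ (k3:ℕ) ∨ (k3:ℕ) ≤ g ∧ g ≤ (k1:ℕ)) ∧
      ((k2:ℕ) ≤ g ∧ g ≤ (k4:ℕ) ∨ (k4:ℕ) ≤ g ∧ g ≤ (k2:ℕ)) := by
    have n1 : ¬((k3:ℕ) ≤ (k1:ℕ) ∧ (k1:ℕ) ≤ (k4:ℕ) ∨ (k4:ℕ) ≤ (k1:ℕ) ∧ (k1:ℕ) ≤ (k3:ℕ)) :=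
      fun hh => disj k1 (by omega) hh
    have n2 : ¬((k3:ℕ) ≤ (k2:ℕ) ∧ (k2:ℕ) ≤ (k4:ℕ) ∨ (k4:ℕ) ≤ (k2:ℕ) ∧ (k2:ℕ) ≤ (k3:ℕ)) :=
      fun hh => disj k2 (by omega) hh
    have n3 : ¬((k1:ℕ) ≤ (k3:ℕ) ∧ (k3:ℕ) ≤ (k2:ℕ) ∨ (k2:ℕ) ≤ (k3:ℕ) ∧ (k3:ℕ) ≤ (k1:ℕ)) :=
      fun hh => disj k3 hh (by omega)
    have n4 : ¬((k1:ℕ) ≤ (k4:ℕ) ∧ (k4:ℕ) ≤ (k2:ℕ) ∨ (k2:ℕ) ≤ (k4:ℕ) ∧ (k4:ℕ) ≤ (k1:ℕ)) :=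
      fun hh => disj k4 hh (by omega)
    by_cases hord : max (k1:ℕ) (k2:ℕ) < min (k3:ℕ) (k4:ℕ)
    · exact ⟨max (k1:ℕ) (k2:ℕ), by omega, by omega⟩
    · refine ⟨max (k3:ℕ) (k4:ℕ), by omega, by omega⟩
  obtain ⟨g, hg1, hg2⟩ := key
  obtain ⟨v, hv2, kg, hkg, hval⟩ := ivt2 g hg1
  obtain ⟨v', hv3, kg', hkg', hval'⟩ := ivt3 g hg2
  have : v = v' := Subtype.ext (by rw [hval, hval']; congr 2; exact Fin.ext (by omega))
  subst this
  obtain ⟨hA, hB⟩ := L.walk_disj (elem_str hab false) (elem_str hab true)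
    (sym2_strs_ne hab) v hv2 hv3
  rcases hA with rfl | rfl <;> rcases hB with hB | hB
  · exact corner_ne_bool (L.branch_inj hB)
  · exact corner_ne_bool (L.branch_inj hB)
  · exact corner_ne_bool (L.branch_inj hB)
  · exact corner_ne_bool (L.branch_inj hB)

end Square
end NoBottleneck
namespace NoBottleneck
open SimpleGraph Walk

variable {r : ℕ}

lemma sym2_ne_fst {α : Type} {x1 x2 y1 y2 : α} (h : x1 ≠ y1) (h' : x1 ≠ y2) :
    s(x1, x2) ≠ s(y1, y2) := by
  intro h0; rw [Sym2.eq_iff] at h0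
  rcases h0 with ⟨h1, _⟩ | ⟨h1, _⟩
  · exact h h1
  · exact h' h1

lemma sym2_ne_snd {α : Type} {x1 x2 y1 y2 : α} (h : x2 ≠ y1) (h' : x2 ≠ y2) :
    s(x1, x2) ≠ s(y1, y2) := by
  intro h0; rw [Sym2.eq_iff] at h0
  rcases h0 with ⟨_, h1⟩ | ⟨_, h1⟩
  · exact h' h1
  · exact h h1

lemma rev_mem {V : Type} {G : SimpleGraph V} {st en : V} (X : G.Walk st en) (v : V) :
    v ∈ X.reverse.support ↔ v ∈ X.support := by
  rw [Walk.support_reverse, List.mem_reverse]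

section Square

variable {n : ℕ} (L : SubdivCopy (elemLadder n) (wallMinusAB r)) {a b : Fin n}
  (hab : (b:ℕ) = (a:ℕ) + 1)

lemma sq_side_apply (m : ℕ) {v1 v2 v3 v4 : WMVert r}
    (X1 : (wallMinusAB r).Walk v1 v2) (X2 : (wallMinusAB r).Walk v2 v3)
    (X3 : (wallMinusAB r).Walk v3 v4) (X4 : (wallMinusAB r).Walk v4 v1)
    (h1 : X1.IsPath) (h2 : X2.IsPath)
    (hz3 : ∀ v ∈ X3.support, ¬(v ∈ Am m ∧ v ∈ Bm m))
    (hz4 : ∀ v ∈ X4.support, ¬(v ∈ Am m ∧ v ∈ Bm m))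
    (hz2 : (∀ v ∈ X2.support, ¬(v ∈ Am m ∧ v ∈ Bm m)) ∨ (v2 ∈ Am m ∧ v2 ∈ Bm m))
    (hcv : ∀ v ∈ sqSupp L hab,
      v ∈ X1.support ∨ v ∈ X2.support ∨ v ∈ X3.support ∨ v ∈ X4.support) :
    (∀ v ∈ sqSupp L hab, v ∈ Am m) ∨ (∀ v ∈ sqSupp L hab, v ∈ Bm m) := by
  rcases square_side (wm_hside m) (wm_hcover m) (wm_hsub m) X1 X2 X3 X4 h1 h2 hz3 hz4 hz2
    with H | H
  · exact Or.inl (fun v hv => H v (hcv v hv))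
  · exact Or.inr (fun v hv => H v (hcv v hv))

lemma sq_side (m : ℕ) :
    (∀ v ∈ sqSupp L hab, v ∈ Am m) ∨ (∀ v ∈ sqSupp L hab, v ∈ Bm m) := by
  classical
  -- the four walks of the square
  have hP1 := L.walk_isPath (elem_rung a)
  have hP2 := L.walk_isPath (elem_str hab false)
  have hP3 := L.walk_isPath (elem_str hab true)
  have hP4 := L.walk_isPath (elem_rung b)
  have hcv0 : ∀ v ∈ sqSupp L hab,
      v ∈ (L.walk (elem_rung a)).support ∨ v ∈ (L.walk (elem_str hab true)).support ∨
      v ∈ (L.walk (elem_rung b)).reverse.support ∨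
      v ∈ (L.walk (elem_str hab false)).reverse.support := by
    intro v hv
    rcases hv with h | h | h | h
    · exact Or.inl h
    · exact Or.inr (Or.inr (Or.inr ((rev_mem _ v).mpr h)))
    · exact Or.inr (Or.inl h)
    · exact Or.inr (Or.inr (Or.inl ((rev_mem _ v).mpr h)))
  by_cases hex : ∃ v0 ∈ sqSupp L hab, v0 ∈ Am m ∧ v0 ∈ Bm m
  · obtain ⟨v0, hv0, hAB⟩ := hex
    have huniq : ∀ w : WMVert r, w ∈ Am m → w ∈ Bm m → w = v0 :=
      fun w h1 h2 => wm_hsub m w v0 h1 h2 hAB.1 hAB.2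
    have notin_imp : ∀ {st en : WMVert r} (X : (wallMinusAB r).Walk st en),
        v0 ∉ X.support → ∀ v ∈ X.support, ¬(v ∈ Am m ∧ v ∈ Bm m) :=
      fun X hX v hv hc => hX ((huniq v hc.1 hc.2) ▸ hv)
    by_cases hbr : ∃ c : Fin n × Bool, v0 = L.branch c
    · obtain ⟨c, hc⟩ := hbr
      have hc4 : c = ((a : Fin n), false) ∨ c = (a, true) ∨ c = (b, false) ∨ c = (b, true) := by
        rcases hv0 with h | h | h | h
        · rcases L.branch_not_interior (elem_rung a) c (hc ▸ h) with rfl | rfl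
          · exact Or.inl rfl
          · exact Or.inr (Or.inl rfl)
        · rcases L.branch_not_interior (elem_str hab false) c (hc ▸ h) with rfl | rfl
          · exact Or.inl rfl
          · exact Or.inr (Or.inr (Or.inl rfl))
        · rcases L.branch_not_interior (elem_str hab true) c (hc ▸ h) with rfl | rfl
          · exact Or.inr (Or.inl rfl)
          · exact Or.inr (Or.inr (Or.inr rfl))
        · rcases L.branch_not_interior (elem_rung b) c (hc ▸ h) with rfl | rfl
          · exact Or.inr (Or.inr (Or.inl rfl))
          · exact Or.inr (Or.inr (Or.inr rfl))
      have hnotW : ∀ (c' d' : Fin n × Bool) (h' : (elemLadder n).Adj c' d'),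
          c ≠ c' → c ≠ d' → v0 ∉ (L.walk h').support := by
        intro c' d' h' h1 h2 hmem
        rcases L.branch_not_interior h' c (hc ▸ hmem) with rfl | rfl
        · exact h1 rfl
        · exact h2 rfl
      rcases hc4 with rfl | rfl | rfl | rfl
      · -- c = (a,false) = v1 : rotation (X4, X1, X2, X3)
        refine sq_side_apply L hab m
          (L.walk (elem_str hab false)).reverse (L.walk (elem_rung a))
          (L.walk (elem_str hab true)) (L.walk (elem_rung b)).reverse
          hP2.reverse hP1
          (notin_imp _ (hnotW _ _ (elem_str hab true) corner_ne_bool corner_ne_bool))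
          (fun v hv => notin_imp _
            (fun hm => (hnotW _ _ (elem_rung b) (corner_ne_s hab) corner_ne_bool)
              ((rev_mem _ v0).mp hm)) v hv)
          (Or.inr (hc ▸ hAB))
          (fun v hv => by have := hcv0 v hv; tauto)
      · -- c = (a,true) = v2 : rotation (X1, X2, X3, X4)
        refine sq_side_apply L hab m
          (L.walk (elem_rung a)) (L.walk (elem_str hab true))
          (L.walk (elem_rung b)).reverse (L.walk (elem_str hab false)).reverse
          hP1 hP3
          (fun v hv => notin_imp _
            (fun hm => (hnotW _ _ (elem_rung b) corner_ne_bool (corner_ne_s hab))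
              ((rev_mem _ v0).mp hm)) v hv)
          (fun v hv => notin_imp _
            (fun hm => (hnotW _ _ (elem_str hab false) corner_ne_bool corner_ne_bool)
              ((rev_mem _ v0).mp hm)) v hv)
          (Or.inr (hc ▸ hAB))
          (fun v hv => by have := hcv0 v hv; tauto)
      · -- c = (b,false) = v4 : rotation (X3, X4, X1, X2)
        refine sq_side_apply L hab m
          (L.walk (elem_rung b)).reverse (L.walk (elem_str hab false)).reverse
          (L.walk (elem_rung a)) (L.walk (elem_str hab true))
          hP4.reverse hP2.reverse
          (notin_imp _ (hnotW _ _ (elem_rung a) (corner_ne_s hab).symm corner_ne_bool))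
          (notin_imp _ (hnotW _ _ (elem_str hab true) corner_ne_bool corner_ne_bool))
          (Or.inr (hc ▸ hAB))
          (fun v hv => by have := hcv0 v hv; tauto)
      · -- c = (b,true) = v3 : rotation (X2, X3, X4, X1)
        refine sq_side_apply L hab m
          (L.walk (elem_str hab true)) (L.walk (elem_rung b)).reverse
          (L.walk (elem_str hab false)).reverse (L.walk (elem_rung a))
          hP3 hP4.reverse
          (fun v hv => notin_imp _
            (fun hm => (hnotW _ _ (elem_str hab false) corner_ne_bool corner_ne_bool)
              ((rev_mem _ v0).mp hm)) v hv)
          (notin_imp _ (hnotW _ _ (elem_rung a) corner_ne_bool (corner_ne_s hab).symm))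
          (Or.inr (hc ▸ hAB))
          (fun v hv => by have := hcv0 v hv; tauto)
    · -- v0 is not a branch vertex
      have hdisj2 : ∀ {c1 d1 c2 d2 : Fin n × Bool} (h1 : (elemLadder n).Adj c1 d1)
          (h2 : (elemLadder n).Adj c2 d2), s(c1,d1) ≠ s(c2,d2) →
          v0 ∈ (L.walk h1).support → v0 ∉ (L.walk h2).support := by
        intro c1 d1 c2 d2 h1 h2 hne hm hm'
        obtain ⟨hA, _⟩ := L.walk_disj h1 h2 hne v0 hm hm'
        rcases hA with h | h <;> exact hbr ⟨_, h⟩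
      have notin_rev : ∀ {st en : WMVert r} (X : (wallMinusAB r).Walk st en),
          v0 ∉ X.support → v0 ∉ X.reverse.support :=
        fun X hX hm => hX ((rev_mem X v0).mp hm)
      have ne_ra_sf : s(((a : Fin n),false),(a,true)) ≠ s((a,false),(b,false)) :=
        sym2_ne_snd corner_ne_bool corner_ne_bool
      have ne_ra_st : s(((a : Fin n),false),(a,true)) ≠ s((a,true),(b,true)) :=
        sym2_ne_fst corner_ne_bool corner_ne_bool
      have ne_sf_rb : s(((a : Fin n),false),(b,false)) ≠ s((b,false),(b,true)) :=
        sym2_ne_fst (corner_ne_s hab) corner_ne_bool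
      have ne_st_rb : s(((a : Fin n),true),(b,true)) ≠ s((b,false),(b,true)) :=
        sym2_ne_fst corner_ne_bool (corner_ne_s hab)
      rcases hv0 with h | h | h | h
      · -- v0 on rung a : rotation (X1, X2, X3, X4)
        refine sq_side_apply L hab m
          (L.walk (elem_rung a)) (L.walk (elem_str hab true))
          (L.walk (elem_rung b)).reverse (L.walk (elem_str hab false)).reverse
          hP1 hP3
          (notin_imp _ (notin_rev _ (hdisj2 (elem_rung a) (elem_rung b) (sym2_rungs_ne hab) h)))
          (notin_imp _ (notin_rev _ (hdisj2 (elem_rung a) (elem_str hab false) ne_ra_sf h)))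
          (Or.inl (notin_imp _ (hdisj2 (elem_rung a) (elem_str hab true) ne_ra_st h)))
          (fun v hv => by have := hcv0 v hv; tauto)
      · -- v0 on stringer false : rotation (X4, X1, X2, X3)
        refine sq_side_apply L hab m
          (L.walk (elem_str hab false)).reverse (L.walk (elem_rung a))
          (L.walk (elem_str hab true)) (L.walk (elem_rung b)).reverse
          hP2.reverse hP1
          (notin_imp _ (hdisj2 (elem_str hab false) (elem_str hab true) (sym2_strs_ne hab) h))
          (notin_imp _ (notin_rev _ (hdisj2 (elem_str hab false) (elem_rung b) ne_sf_rb h)))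
          (Or.inl (notin_imp _ (hdisj2 (elem_str hab false) (elem_rung a) ne_ra_sf.symm h)))
          (fun v hv => by have := hcv0 v hv; tauto)
      · -- v0 on stringer true : rotation (X2, X3, X4, X1)
        refine sq_side_apply L hab m
          (L.walk (elem_str hab true)) (L.walk (elem_rung b)).reverse
          (L.walk (elem_str hab false)).reverse (L.walk (elem_rung a))
          hP3 hP4.reverse
          (notin_imp _ (notin_rev _
            (hdisj2 (elem_str hab true) (elem_str hab false) (sym2_strs_ne hab).symm h)))
          (notin_imp _ (hdisj2 (elem_str hab true) (elem_rung a) ne_ra_st.symm h))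
          (Or.inl (notin_imp _ (notin_rev _
            (hdisj2 (elem_str hab true) (elem_rung b) ne_st_rb h))))
          (fun v hv => by have := hcv0 v hv; tauto)
      · -- v0 on rung b : rotation (X3, X4, X1, X2)
        refine sq_side_apply L hab m
          (L.walk (elem_rung b)).reverse (L.walk (elem_str hab false)).reverse
          (L.walk (elem_rung a)) (L.walk (elem_str hab true))
          hP4.reverse hP2.reverse
          (notin_imp _ (hdisj2 (elem_rung b) (elem_rung a) (sym2_rungs_ne hab).symm h))
          (notin_imp _ (hdisj2 (elem_rung b) (elem_str hab true) ne_st_rb.symm h))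
          (Or.inl (notin_imp _ (notin_rev _
            (hdisj2 (elem_rung b) (elem_str hab false) ne_sf_rb.symm h))))
          (fun v hv => by have := hcv0 v hv; tauto)
  · -- no bottleneck-cut vertex on the square at all
    refine sq_side_apply L hab m
      (L.walk (elem_rung a)) (L.walk (elem_str hab true))
      (L.walk (elem_rung b)).reverse (L.walk (elem_str hab false)).reverse
      hP1 hP3
      (fun v hv hc => hex ⟨v, Or.inr (Or.inr (Or.inr ((rev_mem _ v).mp hv))), hc⟩)
      (fun v hv hc => hex ⟨v, Or.inr (Or.inl ((rev_mem _ v).mp hv)), hc⟩)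
      (Or.inl (fun v hv hc => hex ⟨v, Or.inr (Or.inr (Or.inl hv)), hc⟩))
      (fun v hv => by have := hcv0 v hv; tauto)

end Square
end NoBottleneck
namespace NoBottleneck
open SimpleGraph Walk

variable {r : ℕ}

lemma eq_of_z_eq {v w : WMVert r} {i1 i2 : Fin (r+1)}
    (hv : v.val = (Sum.inr (Sum.inl i1) : CWVert r))
    (hw : w.val = (Sum.inr (Sum.inl i2) : CWVert r))
    (h : (i1:ℕ) = (i2:ℕ)) : v = w := by
  apply Subtype.ext
  rw [hv, hw]
  congr 2
  exact Fin.ext h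

lemma hi_zero_z {v : WMVert r} (h : hi v.val ≤ 0) :
    ∃ i : Fin (r+1), v.val = (Sum.inr (Sum.inl i) : CWVert r) ∧ (i:ℕ) = 0 := by
  rcases val_cases v with ⟨j,k,hval⟩ | ⟨i,hval⟩ <;> simp only [hval, hi] at h ⊢
  · omega
  · exact ⟨i, rfl, by omega⟩

section Square

variable {n : ℕ} (L : SubdivCopy (elemLadder n) (wallMinusAB r)) {a b : Fin n}
  (hab : (b:ℕ) = (a:ℕ) + 1)

lemma sq_loc : ∃ j : ℕ, ∀ v ∈ sqSupp L hab, j ≤ lo v.val ∧ hi v.val ≤ j + 1 := by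
  classical
  have hex : ∃ m, ∀ v ∈ sqSupp L hab, hi v.val ≤ m := ⟨r, fun v _ => wm_hi_le_r v⟩
  have hm0 : ∀ v ∈ sqSupp L hab, hi v.val ≤ Nat.find hex := Nat.find_spec hex
  have hm0pos : Nat.find hex ≠ 0 := by
    intro h0
    have h1 := hm0 _ ((corner_mem_sq L hab false).1)
    have h2 := hm0 _ ((corner_mem_sq L hab true).1)
    rw [h0] at h1 h2
    obtain ⟨i1, hval1, hz1⟩ := hi_zero_z h1
    obtain ⟨i2, hval2, hz2⟩ := hi_zero_z h2
    exact corner_ne_bool (L.branch_inj (eq_of_z_eq hval1 hval2 (by omega)))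
  have hm1 : ¬∀ v ∈ sqSupp L hab, hi v.val ≤ Nat.find hex - 1 :=
    Nat.find_min hex (by omega)
  rcases sq_side L hab (Nat.find hex - 1) with H | H
  · exact absurd (fun v hv => H v hv) hm1
  · refine ⟨Nat.find hex - 1, fun v hv => ⟨H v hv, ?_⟩⟩
    have := hm0 v hv
    omega

end Square

lemma layer_merge {j j' : ℕ} {v w : WMVert r}
    (hv : j ≤ lo v.val ∧ hi v.val ≤ j+1) (hv' : j' ≤ lo v.val ∧ hi v.val ≤ j'+1)
    (hw : j ≤ lo w.val ∧ hi w.val ≤ j+1) (hw' : j' ≤ lo w.val ∧ hi w.val ≤ j'+1)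
    (hvw : v ≠ w) : j = j' := by
  rcases val_cases v with ⟨jv,kv,hval⟩ | ⟨iv,hval⟩
  · simp only [hval, lo, hi] at hv hv'; omega
  · rcases val_cases w with ⟨jw,kw,hwal⟩ | ⟨iw,hwal⟩
    · simp only [hwal, lo, hi] at hw hw'; omega
    · simp only [hval, lo, hi] at hv hv'
      simp only [hwal, lo, hi] at hw hw'
      by_contra hne
      exact hvw (eq_of_z_eq hval hwal (by omega))

lemma exit_lemma {j : ℕ} {c v2 : WMVert r} (P : (wallMinusAB r).Walk c v2)
    (hcl : j ≤ lo c.val ∧ hi c.val ≤ j + 1)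
    (hbot : IsBottleneck c.val ∨ IsBottleneck v2.val) :
    ∃ w ∈ P.support, ∃ iw : Fin (r+1), w.val = (Sum.inr (Sum.inl iw) : CWVert r) ∧
      ((iw:ℕ) = j ∨ (iw:ℕ) = j + 1) := by
  rcases hbot with ⟨i, hzc⟩ | ⟨i, hzc⟩
  · have hzc' : c.val = (Sum.inr (Sum.inl i) : CWVert r) := hzc
    refine ⟨c, Walk.start_mem_support _, i, hzc', ?_⟩
    simp only [hzc', lo, hi] at hcl
    omega
  · have hzc' : v2.val = (Sum.inr (Sum.inl i) : CWVert r) := hzc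
    by_cases hrange : j ≤ (i:ℕ) ∧ (i:ℕ) ≤ j + 1
    · refine ⟨v2, Walk.end_mem_support _, i, hzc', ?_⟩
      omega
    · by_cases hup : j + 1 < (i:ℕ)
      · -- cross the cut at j+1 going up
        obtain ⟨v, hvsup, hA, hB⟩ := cross (A := Am (j+1)) (B := Bm (j+1))
          (wm_hside (j+1)) P hcl.2
          (by simp only [Am, Set.mem_setOf_eq, hzc', hi]; omega)
        obtain ⟨iw, hval, hiw⟩ := wm_z_of_AB hA hB
        exact ⟨v, hvsup, iw, hval, Or.inr hiw⟩
      · -- cross the cut at j going down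
        obtain ⟨v, hvsup, hB, hA⟩ := cross (A := Bm j) (B := Am j)
          (fun x y hxy => (wm_hside j hxy).symm) P hcl.1
          (by simp only [Bm, Set.mem_setOf_eq, hzc', lo]; omega)
        obtain ⟨iw, hval, hiw⟩ := wm_z_of_AB hA hB
        exact ⟨v, hvsup, iw, hval, Or.inl hiw⟩

end NoBottleneck
namespace NoBottleneck
open SimpleGraph Walk

variable {r : ℕ}

lemma z_bound {j : ℕ} {w : WMVert r} {i : Fin (r+1)}
    (hwv : w.val = (Sum.inr (Sum.inl i) : CWVert r))
    (h : j ≤ lo w.val ∧ hi w.val ≤ j+1) : j ≤ (i:ℕ) ∧ (i:ℕ) ≤ j+1 := by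
  rw [hwv] at h
  simpa [lo, hi] using h

section Square

variable {n : ℕ} (L : SubdivCopy (elemLadder n) (wallMinusAB r))

lemma sq_subset_verts {a b : Fin n} (hab : (b:ℕ) = (a:ℕ) + 1) {v : WMVert r}
    (hv : v ∈ sqSupp L hab) : v ∈ L.verts := by
  rcases hv with h | h | h | h
  · exact Or.inr ⟨_, _, elem_rung a, h⟩
  · exact Or.inr ⟨_, _, elem_str hab false, h⟩
  · exact Or.inr ⟨_, _, elem_str hab true, h⟩
  · exact Or.inr ⟨_, _, elem_rung b, h⟩

lemma sq_far {a b a' b' : Fin n} (hab : (b:ℕ) = (a:ℕ) + 1) (ha'b' : (b':ℕ) = (a':ℕ) + 1)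
    (hgap : (a:ℕ) + 1 < (a':ℕ)) {v : WMVert r}
    (hv : v ∈ sqSupp L hab) (hv' : v ∈ sqSupp L ha'b') : False := by
  obtain ⟨c, d, h, hvw, hc1, hd1⟩ := mem_sq_cases L hab hv
  obtain ⟨c', d', h', hvw', hc1', hd1'⟩ := mem_sq_cases L ha'b' hv'
  have hne : s(c, d) ≠ s(c', d') := by
    apply sym2_ne_fst
    · intro he; rw [he] at hc1; omega
    · intro he; rw [he] at hc1; omega
  obtain ⟨hA, hB⟩ := L.walk_disj h h' hne v hvw hvw'
  rcases hA with h1 | h1 <;> rcases hB with h2 | h2 <;>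
    have heq := L.branch_inj (h1.symm.trans h2)
  · rw [heq] at hc1; omega
  · rw [heq] at hc1; omega
  · rw [heq] at hd1; omega
  · rw [heq] at hd1; omega

end Square
end NoBottleneck
namespace NoBottleneck
open SimpleGraph Walk

lemma config1 (r : ℕ) :
    ¬ ∃ (L : SubdivCopy (elemLadder 5) (wallMinusAB r)) (i : Fin 5) (s : Bool)
        (v₂ : WMVert r) (P : (wallMinusAB r).Walk (L.branch (i, s)) v₂),
        ((i : ℕ) = 0 ∨ (i : ℕ) = 4) ∧ P.IsPath ∧
        (∀ x, x ∈ P.support → x ∈ L.verts → x = L.branch (i, s)) ∧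
        (IsBottleneck (L.branch (i, s)).val ∨ IsBottleneck v₂.val) := by
  rintro ⟨L, i, s, v₂, P, hi04, hP, hPL, hbot⟩
  have h01 : ((1 : Fin 5) : ℕ) = ((0 : Fin 5) : ℕ) + 1 := by decide
  have h12 : ((2 : Fin 5) : ℕ) = ((1 : Fin 5) : ℕ) + 1 := by decide
  have h23 : ((3 : Fin 5) : ℕ) = ((2 : Fin 5) : ℕ) + 1 := by decide
  have h34 : ((4 : Fin 5) : ℕ) = ((3 : Fin 5) : ℕ) + 1 := by decide
  obtain ⟨j0, hj0⟩ := sq_loc L h01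
  obtain ⟨j1, hj1⟩ := sq_loc L h12
  obtain ⟨j2, hj2⟩ := sq_loc L h23
  obtain ⟨j3, hj3⟩ := sq_loc L h34
  have e01 : j0 = j1 := layer_merge
    (hj0 _ (corner_mem_sq L h01 false).2) (hj1 _ (corner_mem_sq L h12 false).1)
    (hj0 _ (corner_mem_sq L h01 true).2) (hj1 _ (corner_mem_sq L h12 true).1)
    (branch_ne L corner_ne_bool)
  have e12 : j1 = j2 := layer_merge
    (hj1 _ (corner_mem_sq L h12 false).2) (hj2 _ (corner_mem_sq L h23 false).1)
    (hj1 _ (corner_mem_sq L h12 true).2) (hj2 _ (corner_mem_sq L h23 true).1)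
    (branch_ne L corner_ne_bool)
  have e23 : j2 = j3 := layer_merge
    (hj2 _ (corner_mem_sq L h23 false).2) (hj3 _ (corner_mem_sq L h34 false).1)
    (hj2 _ (corner_mem_sq L h23 true).2) (hj3 _ (corner_mem_sq L h34 true).1)
    (branch_ne L corner_ne_bool)
  subst e01; subst e12; subst e23
  obtain ⟨w0, hw0m, i0, hw0v⟩ := sq_z L h01
  obtain ⟨w1, hw1m, i1, hw1v⟩ := sq_z L h12
  obtain ⟨w2, hw2m, i2, hw2v⟩ := sq_z L h23
  obtain ⟨w3, hw3m, i3, hw3v⟩ := sq_z L h34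
  have hb0 := z_bound hw0v (hj0 _ hw0m)
  have hb1 := z_bound hw1v (hj1 _ hw1m)
  have hb2 := z_bound hw2v (hj2 _ hw2m)
  have hb3 := z_bound hw3v (hj3 _ hw3m)
  rcases hi04 with h0 | h4
  · have hieq : i = (0 : Fin 5) := Fin.ext (by rw [h0]; decide)
    subst hieq
    obtain ⟨w, hwsup, iw, hwv, hwrange⟩ := exit_lemma P (hj0 _ (corner_mem_sq L h01 s).1) hbot
    have hnot1 : w ∉ sqSupp L h12 := by
      intro hm
      have hb := hPL w hwsup (sq_subset_verts L h12 hm)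
      have h' : ((0 : Fin 5) : ℕ) = ((1 : Fin 5) : ℕ) ∨
          ((0 : Fin 5) : ℕ) = ((1 : Fin 5) : ℕ) + 1 := in_sq_coord L h12 hm _ hb
      exact absurd h' (by decide)
    have hnot3 : w ∉ sqSupp L h34 := by
      intro hm
      have hb := hPL w hwsup (sq_subset_verts L h34 hm)
      have h' : ((0 : Fin 5) : ℕ) = ((3 : Fin 5) : ℕ) ∨
          ((0 : Fin 5) : ℕ) = ((3 : Fin 5) : ℕ) + 1 := in_sq_coord L h34 hm _ hb
      exact absurd h' (by decide)
    have hne1 : (i1:ℕ) ≠ (iw:ℕ) := fun he => hnot1 ((eq_of_z_eq hw1v hwv he) ▸ hw1m)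
    have hne3 : (i3:ℕ) ≠ (iw:ℕ) := fun he => hnot3 ((eq_of_z_eq hw3v hwv he) ▸ hw3m)
    have h13 : (i1:ℕ) = (i3:ℕ) := by omega
    exact sq_far L h12 h34 (by decide) hw1m ((eq_of_z_eq hw1v hw3v h13).symm ▸ hw3m)
  · have hieq : i = (4 : Fin 5) := Fin.ext (by rw [h4]; decide)
    subst hieq
    obtain ⟨w, hwsup, iw, hwv, hwrange⟩ := exit_lemma P (hj3 _ (corner_mem_sq L h34 s).2) hbot
    have hnot0 : w ∉ sqSupp L h01 := by
      intro hm
      have hb := hPL w hwsup (sq_subset_verts L h01 hm)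
      have h' : ((4 : Fin 5) : ℕ) = ((0 : Fin 5) : ℕ) ∨
          ((4 : Fin 5) : ℕ) = ((0 : Fin 5) : ℕ) + 1 := in_sq_coord L h01 hm _ hb
      exact absurd h' (by decide)
    have hnot2 : w ∉ sqSupp L h23 := by
      intro hm
      have hb := hPL w hwsup (sq_subset_verts L h23 hm)
      have h' : ((4 : Fin 5) : ℕ) = ((2 : Fin 5) : ℕ) ∨
          ((4 : Fin 5) : ℕ) = ((2 : Fin 5) : ℕ) + 1 := in_sq_coord L h23 hm _ hb
      exact absurd h' (by decide)
    have hne0 : (i0:ℕ) ≠ (iw:ℕ) := fun he => hnot0 ((eq_of_z_eq hw0v hwv he) ▸ hw0m)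
    have hne2 : (i2:ℕ) ≠ (iw:ℕ) := fun he => hnot2 ((eq_of_z_eq hw2v hwv he) ▸ hw2m)
    have h02 : (i0:ℕ) = (i2:ℕ) := by omega
    exact sq_far L h01 h23 (by decide) hw0m ((eq_of_z_eq hw0v hw2v h02).symm ▸ hw2m)

end NoBottleneck
namespace NoBottleneck
open SimpleGraph Walk

lemma config2 (r : ℕ) :
    ¬ ∃ (L : SubdivCopy (elemLadder 4) (wallMinusAB r)) (i j : Fin 4) (s : Bool)
        (v₂ v₄ : WMVert r) (P : (wallMinusAB r).Walk (L.branch (i, s)) v₂)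
        (P' : (wallMinusAB r).Walk (L.branch (j, !s)) v₄),
        (((i : ℕ) = 0 ∧ (j : ℕ) = 3) ∨ ((i : ℕ) = 3 ∧ (j : ℕ) = 0)) ∧
        P.IsPath ∧ P'.IsPath ∧
        (∀ x, x ∈ P.support → x ∈ L.verts → x = L.branch (i, s)) ∧
        (∀ x, x ∈ P'.support → x ∈ L.verts → x = L.branch (j, !s)) ∧
        (∀ x, x ∈ P.support → x ∉ P'.support) ∧
        (IsBottleneck (L.branch (i, s)).val ∨ IsBottleneck v₂.val) ∧
        (IsBottleneck (L.branch (j, !s)).val ∨ IsBottleneck v₄.val) := by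
  rintro ⟨L, i, j, s, v₂, v₄, P, P', hij, hPp, hP'p, hPL, hP'L, hdisj, hbot, hbot'⟩
  have h01 : ((1 : Fin 4) : ℕ) = ((0 : Fin 4) : ℕ) + 1 := by decide
  have h12 : ((2 : Fin 4) : ℕ) = ((1 : Fin 4) : ℕ) + 1 := by decide
  have h23 : ((3 : Fin 4) : ℕ) = ((2 : Fin 4) : ℕ) + 1 := by decide
  obtain ⟨j0, hj0⟩ := sq_loc L h01
  obtain ⟨j1, hj1⟩ := sq_loc L h12
  obtain ⟨j2, hj2⟩ := sq_loc L h23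
  have e01 : j0 = j1 := layer_merge
    (hj0 _ (corner_mem_sq L h01 false).2) (hj1 _ (corner_mem_sq L h12 false).1)
    (hj0 _ (corner_mem_sq L h01 true).2) (hj1 _ (corner_mem_sq L h12 true).1)
    (branch_ne L corner_ne_bool)
  have e12 : j1 = j2 := layer_merge
    (hj1 _ (corner_mem_sq L h12 false).2) (hj2 _ (corner_mem_sq L h23 false).1)
    (hj1 _ (corner_mem_sq L h12 true).2) (hj2 _ (corner_mem_sq L h23 true).1)
    (branch_ne L corner_ne_bool)
  subst e01; subst e12
  obtain ⟨w1, hw1m, i1, hw1v⟩ := sq_z L h12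
  have hb1 := z_bound hw1v (hj1 _ hw1m)
  -- exit for the corner of P
  have hexP : ∃ w ∈ P.support, ∃ iw : Fin (r+1),
      w.val = (Sum.inr (Sum.inl iw) : CWVert r) ∧ ((iw:ℕ) = j0 ∨ (iw:ℕ) = j0 + 1) := by
    rcases hij with ⟨h0, _⟩ | ⟨h3, _⟩
    · have hieq : i = (0 : Fin 4) := Fin.ext (by rw [h0]; decide)
      subst hieq
      exact exit_lemma P (hj0 _ (corner_mem_sq L h01 s).1) hbot
    · have hieq : i = (3 : Fin 4) := Fin.ext (by rw [h3]; decide)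
      subst hieq
      exact exit_lemma P (hj2 _ (corner_mem_sq L h23 s).2) hbot
  have hexP' : ∃ w ∈ P'.support, ∃ iw : Fin (r+1),
      w.val = (Sum.inr (Sum.inl iw) : CWVert r) ∧ ((iw:ℕ) = j0 ∨ (iw:ℕ) = j0 + 1) := by
    rcases hij with ⟨_, h3⟩ | ⟨_, h0⟩
    · have hjeq : j = (3 : Fin 4) := Fin.ext (by rw [h3]; decide)
      subst hjeq
      exact exit_lemma P' (hj2 _ (corner_mem_sq L h23 (!s)).2) hbot'
    · have hjeq : j = (0 : Fin 4) := Fin.ext (by rw [h0]; decide)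
      subst hjeq
      exact exit_lemma P' (hj0 _ (corner_mem_sq L h01 (!s)).1) hbot'
  obtain ⟨w, hwsup, iw, hwv, hwrange⟩ := hexP
  obtain ⟨w', hwsup', iw', hwv', hwrange'⟩ := hexP'
  have hww' : w ≠ w' := fun he => hdisj w hwsup (he ▸ hwsup')
  have hiww' : (iw:ℕ) ≠ (iw':ℕ) := fun he => hww' (eq_of_z_eq hwv hwv' he)
  -- w is not on the middle square
  have hnotw : w ∉ sqSupp L h12 := by
    intro hm
    have hb := hPL w hwsup (sq_subset_verts L h12 hm)
    have h' : (i : ℕ) = ((1 : Fin 4) : ℕ) ∨ (i : ℕ) = ((1 : Fin 4) : ℕ) + 1 :=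
      in_sq_coord L h12 hm _ hb
    have hv1 : ((1 : Fin 4) : ℕ) = 1 := by decide
    rcases hij with ⟨h0, _⟩ | ⟨h3, _⟩ <;> omega
  have hnotw' : w' ∉ sqSupp L h12 := by
    intro hm
    have hb := hP'L w' hwsup' (sq_subset_verts L h12 hm)
    have h' : (j : ℕ) = ((1 : Fin 4) : ℕ) ∨ (j : ℕ) = ((1 : Fin 4) : ℕ) + 1 :=
      in_sq_coord L h12 hm _ hb
    have hv1 : ((1 : Fin 4) : ℕ) = 1 := by decide
    rcases hij with ⟨_, h3⟩ | ⟨_, h0⟩ <;> omega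
  have hne1 : (i1:ℕ) ≠ (iw:ℕ) := fun he => hnotw ((eq_of_z_eq hw1v hwv he) ▸ hw1m)
  have hne1' : (i1:ℕ) ≠ (iw':ℕ) := fun he => hnotw' ((eq_of_z_eq hw1v hwv' he) ▸ hw1m)
  omega

lemma config3 (r : ℕ) :
    ¬ ∃ (L : SubdivCopy (elemLadder 3) (wallMinusAB r)) (i : Fin 3)
        (v₂ v₄ : WMVert r) (P : (wallMinusAB r).Walk (L.branch (i, false)) v₂)
        (P' : (wallMinusAB r).Walk (L.branch (i, true)) v₄),
        ((i : ℕ) = 0 ∨ (i : ℕ) = 2) ∧ P.IsPath ∧ P'.IsPath ∧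
        (∀ x, x ∈ P.support → x ∈ L.verts → x = L.branch (i, false)) ∧
        (∀ x, x ∈ P'.support → x ∈ L.verts → x = L.branch (i, true)) ∧
        (∀ x, x ∈ P.support → x ∉ P'.support) ∧
        (IsBottleneck (L.branch (i, false)).val ∨ IsBottleneck v₂.val) ∧
        (IsBottleneck (L.branch (i, true)).val ∨ IsBottleneck v₄.val) := by
  rintro ⟨L, i, v₂, v₄, P, P', hi02, hPp, hP'p, hPL, hP'L, hdisj, hbot, hbot'⟩
  have h01 : ((1 : Fin 3) : ℕ) = ((0 : Fin 3) : ℕ) + 1 := by decide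
  have h12 : ((2 : Fin 3) : ℕ) = ((1 : Fin 3) : ℕ) + 1 := by decide
  obtain ⟨j0, hj0⟩ := sq_loc L h01
  obtain ⟨j1, hj1⟩ := sq_loc L h12
  have e01 : j0 = j1 := layer_merge
    (hj0 _ (corner_mem_sq L h01 false).2) (hj1 _ (corner_mem_sq L h12 false).1)
    (hj0 _ (corner_mem_sq L h01 true).2) (hj1 _ (corner_mem_sq L h12 true).1)
    (branch_ne L corner_ne_bool)
  subst e01
  rcases hi02 with h0 | h2
  · have hieq : i = (0 : Fin 3) := Fin.ext (by rw [h0]; decide)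
    subst hieq
    obtain ⟨w, hwsup, iw, hwv, hwrange⟩ :=
      exit_lemma P (hj0 _ (corner_mem_sq L h01 false).1) hbot
    obtain ⟨w', hwsup', iw', hwv', hwrange'⟩ :=
      exit_lemma P' (hj0 _ (corner_mem_sq L h01 true).1) hbot'
    have hww' : w ≠ w' := fun he => hdisj w hwsup (he ▸ hwsup')
    have hiww' : (iw:ℕ) ≠ (iw':ℕ) := fun he => hww' (eq_of_z_eq hwv hwv' he)
    obtain ⟨w1, hw1m, i1, hw1v⟩ := sq_z L h12
    have hb1 := z_bound hw1v (hj1 _ hw1m)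
    have hnotw : w ∉ sqSupp L h12 := by
      intro hm
      have hb := hPL w hwsup (sq_subset_verts L h12 hm)
      have h' : ((0 : Fin 3) : ℕ) = ((1 : Fin 3) : ℕ) ∨
          ((0 : Fin 3) : ℕ) = ((1 : Fin 3) : ℕ) + 1 := in_sq_coord L h12 hm _ hb
      exact absurd h' (by decide)
    have hnotw' : w' ∉ sqSupp L h12 := by
      intro hm
      have hb := hP'L w' hwsup' (sq_subset_verts L h12 hm)
      have h' : ((0 : Fin 3) : ℕ) = ((1 : Fin 3) : ℕ) ∨
          ((0 : Fin 3) : ℕ) = ((1 : Fin 3) : ℕ) + 1 := in_sq_coord L h12 hm _ hb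
      exact absurd h' (by decide)
    have hne1 : (i1:ℕ) ≠ (iw:ℕ) := fun he => hnotw ((eq_of_z_eq hw1v hwv he) ▸ hw1m)
    have hne1' : (i1:ℕ) ≠ (iw':ℕ) := fun he => hnotw' ((eq_of_z_eq hw1v hwv' he) ▸ hw1m)
    omega
  · have hieq : i = (2 : Fin 3) := Fin.ext (by rw [h2]; decide)
    subst hieq
    obtain ⟨w, hwsup, iw, hwv, hwrange⟩ :=
      exit_lemma P (hj1 _ (corner_mem_sq L h12 false).2) hbot
    obtain ⟨w', hwsup', iw', hwv', hwrange'⟩ :=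
      exit_lemma P' (hj1 _ (corner_mem_sq L h12 true).2) hbot'
    have hww' : w ≠ w' := fun he => hdisj w hwsup (he ▸ hwsup')
    have hiww' : (iw:ℕ) ≠ (iw':ℕ) := fun he => hww' (eq_of_z_eq hwv hwv' he)
    obtain ⟨w1, hw1m, i1, hw1v⟩ := sq_z L h01
    have hb1 := z_bound hw1v (hj0 _ hw1m)
    have hnotw : w ∉ sqSupp L h01 := by
      intro hm
      have hb := hPL w hwsup (sq_subset_verts L h01 hm)
      have h' : ((2 : Fin 3) : ℕ) = ((0 : Fin 3) : ℕ) ∨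
          ((2 : Fin 3) : ℕ) = ((0 : Fin 3) : ℕ) + 1 := in_sq_coord L h01 hm _ hb
      exact absurd h' (by decide)
    have hnotw' : w' ∉ sqSupp L h01 := by
      intro hm
      have hb := hP'L w' hwsup' (sq_subset_verts L h01 hm)
      have h' : ((2 : Fin 3) : ℕ) = ((0 : Fin 3) : ℕ) ∨
          ((2 : Fin 3) : ℕ) = ((0 : Fin 3) : ℕ) + 1 := in_sq_coord L h01 hm _ hb
      exact absurd h' (by decide)
    have hne1 : (i1:ℕ) ≠ (iw:ℕ) := fun he => hnotw ((eq_of_z_eq hw1v hwv he) ▸ hw1m)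
    have hne1' : (i1:ℕ) ≠ (iw':ℕ) := fun he => hnotw' ((eq_of_z_eq hw1v hwv' he) ▸ hw1m)
    omega

end NoBottleneck
/-- In `W − {a, b}` none of the following exists: (1) a ladder with 5 rungs together
with a path, internally disjoint from it, from a corner `v₁` of an end-rung to a vertex
`v₂` with `v₁` or `v₂` a bottleneck vertex; (2) a ladder with 4 rungs together with two
disjoint such paths attached at diagonally opposite corners `v₁`, `v₃` of the two
end-rungs, going to `v₂` and `v₄`, with one of `v₁, v₂` and one of `v₃, v₄` bottleneck
vertices; (3) a ladder with 3 rungs together with two disjoint such paths attached at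
the two corners `v₁, v₃` of the same end-rung, going to `v₂` and `v₄`, with one of
`v₁, v₂` and one of `v₃, v₄` bottleneck vertices. -/
theorem no_bottleneck_ladder_configs (r : ℕ) :
    (¬ ∃ (L : SubdivCopy (elemLadder 5) (wallMinusAB r)) (i : Fin 5) (s : Bool)
        (v₂ : WMVert r) (P : (wallMinusAB r).Walk (L.branch (i, s)) v₂),
        ((i : ℕ) = 0 ∨ (i : ℕ) = 4) ∧ P.IsPath ∧
        (∀ x, x ∈ P.support → x ∈ L.verts → x = L.branch (i, s)) ∧
        (IsBottleneck (L.branch (i, s)).val ∨ IsBottleneck v₂.val)) ∧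
    (¬ ∃ (L : SubdivCopy (elemLadder 4) (wallMinusAB r)) (i j : Fin 4) (s : Bool)
        (v₂ v₄ : WMVert r) (P : (wallMinusAB r).Walk (L.branch (i, s)) v₂)
        (P' : (wallMinusAB r).Walk (L.branch (j, !s)) v₄),
        (((i : ℕ) = 0 ∧ (j : ℕ) = 3) ∨ ((i : ℕ) = 3 ∧ (j : ℕ) = 0)) ∧
        P.IsPath ∧ P'.IsPath ∧
        (∀ x, x ∈ P.support → x ∈ L.verts → x = L.branch (i, s)) ∧
        (∀ x, x ∈ P'.support → x ∈ L.verts → x = L.branch (j, !s)) ∧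
        (∀ x, x ∈ P.support → x ∉ P'.support) ∧
        (IsBottleneck (L.branch (i, s)).val ∨ IsBottleneck v₂.val) ∧
        (IsBottleneck (L.branch (j, !s)).val ∨ IsBottleneck v₄.val)) ∧
    (¬ ∃ (L : SubdivCopy (elemLadder 3) (wallMinusAB r)) (i : Fin 3)
        (v₂ v₄ : WMVert r) (P : (wallMinusAB r).Walk (L.branch (i, false)) v₂)
        (P' : (wallMinusAB r).Walk (L.branch (i, true)) v₄),
        ((i : ℕ) = 0 ∨ (i : ℕ) = 2) ∧ P.IsPath ∧ P'.IsPath ∧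
        (∀ x, x ∈ P.support → x ∈ L.verts → x = L.branch (i, false)) ∧
        (∀ x, x ∈ P'.support → x ∈ L.verts → x = L.branch (i, true)) ∧
        (∀ x, x ∈ P.support → x ∉ P'.support) ∧
        (IsBottleneck (L.branch (i, false)).val ∨ IsBottleneck v₂.val) ∧
        (IsBottleneck (L.branch (i, true)).val ∨ IsBottleneck v₄.val)) := by
  exact ⟨NoBottleneck.config1 r, NoBottleneck.config2 r, NoBottleneck.config3 r⟩
end

section
/- Let W be a condensed wall with special vertices a and b, let L_1 be a ladder contained in W, let R be a rung at an end of L_1 with endvertices v_1 and v_2, let P_1 be a v_1–a path in W and P_2 a v_2–b path in W (paths of length 0 allowed), such that P_1, P_2 and L_1 are pairwise internally disjoint. Then L_1 has at most 6 rungs. -/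
open SimpleGraph

namespace CWAux

variable {V : Type} {G : SimpleGraph V}

lemma mem_support_rotate_iff [DecidableEq V] {x z v : V} (c : G.Walk x x) (hz : z ∈ c.support) :
    v ∈ (c.rotate _ hz).support ↔ v ∈ c.support := by
  rw [SimpleGraph.Walk.rotate, Walk.mem_support_append_iff]
  conv_rhs => rw [← c.take_spec hz]
  rw [Walk.mem_support_append_iff]
  tauto

lemma not_mem_takeUntil_support [DecidableEq V] {y z u : V} (q : G.Walk y z)
    (hq : q.support.Nodup) (hu : u ∈ q.support) (hne : u ≠ z) :
    z ∉ (q.takeUntil u hu).support := by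
  intro hzmem
  have hsup : q.support = (q.takeUntil u hu).support ++ (q.dropUntil u hu).support.tail := by
    conv_lhs => rw [← q.take_spec hu]
    exact Walk.support_append _ _
  have hz2 : z ∈ (q.dropUntil u hu).support.tail := by
    have hzd : z ∈ (q.dropUntil u hu).support := Walk.end_mem_support _
    rw [Walk.mem_support_iff] at hzd
    rcases hzd with h | h
    · exact absurd h.symm hne
    · exact h
  rw [hsup, List.nodup_append] at hq
  exact hq.2.2 z hzmem z hz2 rfl

lemma exists_walk_avoiding' [DecidableEq V] {z u₁ u₂ : V} (c : G.Walk z z) (hc : c.IsCycle)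
    (h1 : u₁ ∈ c.support) (h2 : u₂ ∈ c.support) (hu1 : u₁ ≠ z) (hu2 : u₂ ≠ z) :
    ∃ w : G.Walk u₁ u₂, ∀ v ∈ w.support, v ∈ c.support ∧ v ≠ z := by
  cases c with
  | nil => exact absurd rfl ((Walk.isCycle_def _).mp hc).2.1
  | @cons _ y _ h q =>
    have hq : q.support.Nodup := by
      have h' := ((Walk.isCycle_def _).mp hc).2.2
      rwa [Walk.support_cons] at h'
    have m1 : u₁ ∈ q.support := by
      rw [Walk.support_cons] at h1
      rcases List.mem_cons.mp h1 with hh | hh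
      · exact absurd hh hu1
      · exact hh
    have m2 : u₂ ∈ q.support := by
      rw [Walk.support_cons] at h2
      rcases List.mem_cons.mp h2 with hh | hh
      · exact absurd hh hu2
      · exact hh
    refine ⟨((q.takeUntil u₁ m1).reverse).append (q.takeUntil u₂ m2), ?_⟩
    intro v hv
    rw [Walk.mem_support_append_iff, Walk.support_reverse, List.mem_reverse] at hv
    have hvq : v ∈ q.support := by
      rcases hv with h' | h'
      · exact Walk.support_takeUntil_subset _ _ h'
      · exact Walk.support_takeUntil_subset _ _ h'
    constructor
    · rw [Walk.support_cons]; exact List.mem_cons_of_mem _ hvq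
    · rintro rfl
      rcases hv with h' | h'
      · exact not_mem_takeUntil_support q hq m1 hu1 h'
      · exact not_mem_takeUntil_support q hq m2 hu2 h'

lemma exists_walk_avoiding [DecidableEq V] {x z u₁ u₂ : V} (D : G.Walk x x) (hD : D.IsCycle)
    (hz : z ∈ D.support) (h1 : u₁ ∈ D.support) (h2 : u₂ ∈ D.support)
    (hu1 : u₁ ≠ z) (hu2 : u₂ ≠ z) :
    ∃ w : G.Walk u₁ u₂, ∀ v ∈ w.support, v ∈ D.support ∧ v ≠ z := by
  obtain ⟨w, hw⟩ := exists_walk_avoiding' (D.rotate _ hz) (hD.rotate hz)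
    ((mem_support_rotate_iff D hz).mpr h1) ((mem_support_rotate_iff D hz).mpr h2) hu1 hu2
  exact ⟨w, fun v hv => ⟨(mem_support_rotate_iff D hz).mp (hw v hv).1, (hw v hv).2⟩⟩

lemma cycle_two_nbrs' {z : V} (c : G.Walk z z) (hc : c.IsCycle) :
    ∃ y₁ y₂, y₁ ≠ y₂ ∧ y₁ ∈ c.support ∧ y₂ ∈ c.support ∧ G.Adj z y₁ ∧ G.Adj z y₂ := by
  cases c with
  | nil => exact absurd rfl ((Walk.isCycle_def _).mp hc).2.1
  | @cons _ y _ h p =>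
    obtain ⟨w, q, h', heq⟩ := Walk.exists_cons_eq_concat h p
    refine ⟨y, w, ?_, ?_, ?_, h, h'.symm⟩
    · -- y ≠ w
      rintro rfl
      -- now h' : Adj w z with w = y ; edge argument
      have hlen : 3 ≤ (Walk.cons h p).length := hc.three_le_length
      have hedges : (Walk.cons h p).edges = q.edges ++ [s(y, z)] := by
        rw [heq, Walk.concat_eq_append, Walk.edges_append]
        simp
      have hpe : p.edges ≠ [] := by
        intro hnil
        have : p.length = 0 := by
          have := p.length_edges
          rw [hnil] at this
          simpa using this.symm
        rw [Walk.length_cons, this] at hlen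
        omega
      have hedges2 : s(z, y) :: p.edges = q.edges ++ [s(y, z)] := by
        rw [← Walk.edges_cons h p, hedges]
      have hmem : s(z, y) ∈ p.edges := by
        rcases hq : q.edges with _ | ⟨e₀, es⟩
        · rw [hq] at hedges2
          simp at hedges2
          exact absurd (Walk.edges_eq_nil.mpr hedges2) hpe
        · rw [hq] at hedges2
          rw [List.cons_append] at hedges2
          have : p.edges = es ++ [s(y, z)] := (List.cons.injEq _ _ _ _).mp hedges2 |>.2
          rw [this, Sym2.eq_swap]
          simp
      have hnd := hc.1.1.edges_nodup
      rw [Walk.edges_cons] at hnd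
      exact (List.nodup_cons.mp hnd).1 hmem
    · rw [Walk.support_cons]
      exact List.mem_cons_of_mem _ (Walk.start_mem_support p)
    · rw [heq, Walk.concat_eq_append, Walk.mem_support_append_iff]
      exact Or.inl (Walk.end_mem_support q)

lemma cycle_two_nbrs [DecidableEq V] {x v : V} (D : G.Walk x x) (hD : D.IsCycle)
    (hv : v ∈ D.support) :
    ∃ y₁ y₂, y₁ ≠ y₂ ∧ y₁ ∈ D.support ∧ y₂ ∈ D.support ∧ G.Adj v y₁ ∧ G.Adj v y₂ := by
  obtain ⟨y₁, y₂, hne, m1, m2, a1, a2⟩ := cycle_two_nbrs' (D.rotate _ hv) (hD.rotate hv)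
  exact ⟨y₁, y₂, hne, (mem_support_rotate_iff D hv).mp m1,
    (mem_support_rotate_iff D hv).mp m2, a1, a2⟩

lemma isPath_append_of {a b c : V} (p : G.Walk a b) (q : G.Walk b c)
    (hp : p.IsPath) (hq : q.IsPath) (h : ∀ x, x ∈ p.support → x ∈ q.support → x = b) :
    (p.append q).IsPath := by
  apply Walk.IsPath.mk'
  rw [Walk.support_append, List.nodup_append]
  refine ⟨hp.support_nodup, ?_, ?_⟩
  · have := hq.support_nodup
    rw [q.support_eq_cons] at this
    exact (List.nodup_cons.mp this).2
  · intro v hv w hv2 hvw; subst hvw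
    have hvq : v ∈ q.support := by rw [q.support_eq_cons]; exact List.mem_cons_of_mem _ hv2
    have hb : v = b := h v hv hvq
    subst hb
    have := hq.support_nodup
    rw [q.support_eq_cons] at this
    exact (List.nodup_cons.mp this).1 hv2

lemma isCycle_append_of {a b : V} (hab : a ≠ b) (p : G.Walk a b) (q : G.Walk b a)
    (hp : p.IsPath) (hq : q.IsPath)
    (hsupp : ∀ x, x ∈ p.support → x ∈ q.support → x = a ∨ x = b)
    (hedge : ∀ e ∈ p.edges, e ∉ q.edges) : (p.append q).IsCycle := by
  rw [Walk.isCycle_def]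
  refine ⟨?_, ?_, ?_⟩
  · rw [Walk.isTrail_def, Walk.edges_append, List.nodup_append]
    exact ⟨hp.isTrail.edges_nodup, hq.isTrail.edges_nodup, fun e he e' he' hee => hedge e he (hee ▸ he')⟩
  · intro hnil
    have hlen := congrArg Walk.length hnil
    rw [Walk.length_append, Walk.length_nil] at hlen
    have hp0 : p.length = 0 := by omega
    exact hab (Walk.eq_of_length_eq_zero (p := p) hp0)
  · rw [Walk.support_append]
    have hps : p.support = a :: p.support.tail := p.support_eq_cons
    rw [hps, List.cons_append, List.tail_cons, List.nodup_append]
    refine ⟨?_, ?_, ?_⟩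
    · have := hp.support_nodup
      rw [hps] at this
      exact (List.nodup_cons.mp this).2
    · have := hq.support_nodup
      rw [q.support_eq_cons] at this
      exact (List.nodup_cons.mp this).2
    · intro v hv w hv2 hvw; subst hvw
      have hvp : v ∈ p.support := by rw [hps]; exact List.mem_cons_of_mem _ hv
      have hvq : v ∈ q.support := by rw [q.support_eq_cons]; exact List.mem_cons_of_mem _ hv2
      rcases hsupp v hvp hvq with rfl | rfl
      · have := hp.support_nodup
        rw [hps] at this
        exact (List.nodup_cons.mp this).1 hv
      · have := hq.support_nodup
        rw [q.support_eq_cons] at this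
        exact (List.nodup_cons.mp this).1 hv2

end CWAux

namespace CWAux

instance {r : ℕ} : DecidableEq (CWVert r) :=
  inferInstanceAs (DecidableEq ((Fin r × Fin (2 * r)) ⊕ (Fin (r + 1) ⊕ Bool)))

variable {r : ℕ}

def lvl : CWVert r → ℕ
  | Sum.inl (j, _) => 2 * (j : ℕ) + 1
  | Sum.inr (Sum.inl m) => 2 * (m : ℕ)
  | Sum.inr (Sum.inr _) => 0

@[simp] lemma lvl_u (j : Fin r) (k : Fin (2 * r)) : lvl (cwU j k) = 2 * (j : ℕ) + 1 := rfl
@[simp] lemma lvl_z (m : Fin (r + 1)) : lvl (cwZ (r := r) m) = 2 * (m : ℕ) := rfl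

@[simp] lemma cwZ_inj {m m' : Fin (r + 1)} : cwZ (r := r) m = cwZ m' ↔ m = m' := by
  constructor
  · intro h
    injection h with h1
    injection h1 with h2
  · rintro rfl; rfl

@[simp] lemma cwU_inj {j j' : Fin r} {k k' : Fin (2 * r)} :
    cwU j k = cwU j' k' ↔ j = j' ∧ k = k' := by
  constructor
  · intro h
    injection h with h1
    injection h1 with h2 h3
    exact ⟨h2, h3⟩
  · rintro ⟨rfl, rfl⟩; rfl

@[simp] lemma cwU_ne_cwZ {j : Fin r} {k : Fin (2 * r)} {m : Fin (r + 1)} :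
    cwU j k ≠ cwZ m := by intro h; injection h

@[simp] lemma cwZ_ne_cwU {j : Fin r} {k : Fin (2 * r)} {m : Fin (r + 1)} :
    cwZ m ≠ cwU j k := by intro h; injection h

@[simp] lemma cwU_ne_cwA {j : Fin r} {k : Fin (2 * r)} : cwU j k ≠ cwA r := by intro h; injection h
@[simp] lemma cwU_ne_cwB {j : Fin r} {k : Fin (2 * r)} : cwU j k ≠ cwB r := by intro h; injection h
@[simp] lemma cwZ_ne_cwA {m : Fin (r + 1)} : cwZ m ≠ cwA r := by
  intro h; injection h with h1; injection h1
@[simp] lemma cwZ_ne_cwB {m : Fin (r + 1)} : cwZ m ≠ cwB r := by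
  intro h; injection h with h1; injection h1

lemma adj_classify {x y : CWVert r} (h : (condensedWall r).Adj x y) :
    (∃ (j : Fin r) (k k' : Fin (2 * r)), x = cwU j k ∧ y = cwU j k' ∧
      ((k' : ℕ) = (k : ℕ) + 1 ∨ (k : ℕ) = (k' : ℕ) + 1)) ∨
    (∃ (m m' : Fin (r + 1)), x = cwZ m ∧ y = cwZ m' ∧
      ((m' : ℕ) = (m : ℕ) + 1 ∨ (m : ℕ) = (m' : ℕ) + 1)) ∨
    (∃ (m : Fin (r + 1)) (j : Fin r) (k : Fin (2 * r)),
      ((x = cwZ m ∧ y = cwU j k) ∨ (x = cwU j k ∧ y = cwZ m)) ∧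
      ((m : ℕ) = (j : ℕ) ∨ (m : ℕ) = (j : ℕ) + 1)) ∨
    (x = cwA r ∨ x = cwB r ∨ y = cwA r ∨ y = cwB r) := by
  rw [condensedWall, SimpleGraph.fromRel_adj] at h
  obtain ⟨-, h | h⟩ := h
  · rcases x with ⟨j, k⟩ | m | bx
    · rcases y with ⟨j', k'⟩ | m' | b
      · obtain ⟨rfl, hk⟩ := h
        exact Or.inl ⟨j, k, k', rfl, rfl, Or.inl hk⟩
      · exact h.elim
      · exact h.elim
    · rcases y with ⟨j', k'⟩ | m' | b
      · refine Or.inr (Or.inr (Or.inl ⟨m, j', k', Or.inl ⟨rfl, rfl⟩, ?_⟩))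
        rcases h with ⟨h1, -⟩ | ⟨h1, -⟩
        · exact Or.inl h1
        · exact Or.inr h1
      · exact Or.inr (Or.inl ⟨m, m', rfl, rfl, Or.inl h⟩)
      · exact h.elim
    · rcases bx with _ | _
      · rcases y with ⟨j', k'⟩ | m' | b
        · exact Or.inr (Or.inr (Or.inr (Or.inl rfl)))
        · exact h.elim
        · exact h.elim
      · rcases y with ⟨j', k'⟩ | m' | b
        · exact Or.inr (Or.inr (Or.inr (Or.inr (Or.inl rfl))))
        · exact h.elim
        · exact h.elim
  · rcases y with ⟨j, k⟩ | m | by'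
    · rcases x with ⟨j', k'⟩ | m' | b
      · obtain ⟨rfl, hk⟩ := h
        exact Or.inl ⟨j, k', k, rfl, rfl, Or.inr hk⟩
      · exact h.elim
      · exact h.elim
    · rcases x with ⟨j', k'⟩ | m' | b
      · refine Or.inr (Or.inr (Or.inl ⟨m, j', k', Or.inr ⟨rfl, rfl⟩, ?_⟩))
        rcases h with ⟨h1, -⟩ | ⟨h1, -⟩
        · exact Or.inl h1
        · exact Or.inr h1
      · exact Or.inr (Or.inl ⟨m', m, rfl, rfl, Or.inr h⟩)
      · exact h.elim
    · rcases by' with _ | _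
      · rcases x with ⟨j', k'⟩ | m' | b
        · exact Or.inr (Or.inr (Or.inr (Or.inr (Or.inr (Or.inl rfl)))))
        · exact h.elim
        · exact h.elim
      · rcases x with ⟨j', k'⟩ | m' | b
        · exact Or.inr (Or.inr (Or.inr (Or.inr (Or.inr (Or.inr rfl)))))
        · exact h.elim
        · exact h.elim

lemma adj_uu {j j' : Fin r} {k k' : Fin (2 * r)}
    (h : (condensedWall r).Adj (cwU j k) (cwU j' k')) :
    j = j' ∧ ((k' : ℕ) = (k : ℕ) + 1 ∨ (k : ℕ) = (k' : ℕ) + 1) := by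
  rcases adj_classify h with ⟨j0, a, b, h1, h2, hk⟩ | ⟨m, m', h1, h2, hm⟩ |
    ⟨m, j0, k0, hxy, hm⟩ | (h1 | h1 | h1 | h1)
  · rw [cwU_inj] at h1 h2
    obtain ⟨rfl, rfl⟩ := h1
    obtain ⟨hj', rfl⟩ := h2
    exact ⟨hj'.symm, hk⟩
  · exact absurd h1 cwU_ne_cwZ
  · rcases hxy with ⟨h1, -⟩ | ⟨-, h2⟩
    · exact absurd h1.symm cwZ_ne_cwU
    · exact absurd h2 cwU_ne_cwZ
  exacts [absurd h1 cwU_ne_cwA, absurd h1 cwU_ne_cwB, absurd h1 cwU_ne_cwA,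
    absurd h1 cwU_ne_cwB]

lemma adj_zz {m m' : Fin (r + 1)}
    (h : (condensedWall r).Adj (cwZ m) (cwZ m')) :
    (m' : ℕ) = (m : ℕ) + 1 ∨ (m : ℕ) = (m' : ℕ) + 1 := by
  rcases adj_classify h with ⟨j0, a, b, h1, h2, hk⟩ | ⟨m0, m0', h1, h2, hm⟩ |
    ⟨m0, j0, k0, hxy, hm⟩ | (h1 | h1 | h1 | h1)
  · exact absurd h1 cwZ_ne_cwU
  · rw [cwZ_inj] at h1 h2
    subst h1; subst h2
    exact hm
  · rcases hxy with ⟨-, h2⟩ | ⟨h1, -⟩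
    · exact absurd h2 cwZ_ne_cwU
    · exact absurd h1 cwZ_ne_cwU
  exacts [absurd h1 cwZ_ne_cwA, absurd h1 cwZ_ne_cwB, absurd h1 cwZ_ne_cwA,
    absurd h1 cwZ_ne_cwB]

lemma adj_zu {m : Fin (r + 1)} {j : Fin r} {k : Fin (2 * r)}
    (h : (condensedWall r).Adj (cwZ m) (cwU j k)) :
    (m : ℕ) = (j : ℕ) ∨ (m : ℕ) = (j : ℕ) + 1 := by
  rcases adj_classify h with ⟨j0, a, b, h1, h2, hk⟩ | ⟨m0, m0', h1, h2, hm⟩ |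
    ⟨m0, j0, k0, hxy, hm⟩ | (h1 | h1 | h1 | h1)
  · exact absurd h1 cwZ_ne_cwU
  · exact absurd h2 cwU_ne_cwZ
  · rcases hxy with ⟨h1, h2⟩ | ⟨h1, -⟩
    · rw [cwZ_inj] at h1
      rw [cwU_inj] at h2
      subst h1
      obtain ⟨rfl, -⟩ := h2
      exact hm
    · exact absurd h1 cwZ_ne_cwU
  exacts [absurd h1 cwZ_ne_cwA, absurd h1 cwZ_ne_cwB, absurd h1 cwU_ne_cwA,
    absurd h1 cwU_ne_cwB]

lemma side_adj {p : Fin (r + 1)} {x y : CWVert r} (h : (condensedWall r).Adj x y)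
    (hxa : x ≠ cwA r) (hxb : x ≠ cwB r) (hxz : x ≠ cwZ p)
    (hya : y ≠ cwA r) (hyb : y ≠ cwB r) (hyz : y ≠ cwZ p) :
    (lvl x < 2 * (p : ℕ) ↔ lvl y < 2 * (p : ℕ)) := by
  rcases adj_classify h with ⟨j, k, k', rfl, rfl, hk⟩ | ⟨m, m', rfl, rfl, hm⟩ |
    ⟨m, j, k, hxy, hm⟩ | (h1 | h1 | h1 | h1)
  · simp
  · have e1 : (m : ℕ) ≠ (p : ℕ) := fun hv => hxz (by rw [show m = p from Fin.ext hv])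
    have e2 : (m' : ℕ) ≠ (p : ℕ) := fun hv => hyz (by rw [show m' = p from Fin.ext hv])
    simp only [lvl_z]
    omega
  · rcases hxy with ⟨rfl, rfl⟩ | ⟨rfl, rfl⟩
    · have e1 : (m : ℕ) ≠ (p : ℕ) := fun hv => hxz (by rw [show m = p from Fin.ext hv])
      simp only [lvl_z, lvl_u]
      omega
    · have e1 : (m : ℕ) ≠ (p : ℕ) := fun hv => hyz (by rw [show m = p from Fin.ext hv])
      simp only [lvl_z, lvl_u]
      omega
  exacts [absurd h1 hxa, absurd h1 hxb, absurd h1 hya, absurd h1 hyb]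

lemma side_walk {p : Fin (r + 1)} {x y : CWVert r} (w : (condensedWall r).Walk x y)
    (hw : ∀ v ∈ w.support, v ≠ cwA r ∧ v ≠ cwB r ∧ v ≠ cwZ p) :
    (lvl x < 2 * (p : ℕ) ↔ lvl y < 2 * (p : ℕ)) := by
  induction w with
  | nil => exact Iff.rfl
  | @cons u v w h q ih =>
    have hu := hw u (by rw [Walk.support_cons]; exact List.mem_cons_self)
    have hv := hw v (by
      rw [Walk.support_cons]
      exact List.mem_cons_of_mem _ (Walk.start_mem_support q))
    have step := side_adj h hu.1 hu.2.1 hu.2.2 hv.1 hv.2.1 hv.2.2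
    refine step.trans (ih ?_)
    intro z hz
    exact hw z (by rw [Walk.support_cons]; exact List.mem_cons_of_mem _ hz)

lemma exists_max_of {α : Type} [Fintype α] [LinearOrder α] {P : α → Prop}
    [DecidablePred P] {a : α} (ha : P a) : ∃ M, P M ∧ ∀ n, P n → n ≤ M := by
  classical
  have hne : (Finset.univ.filter P).Nonempty :=
    ⟨a, by simp only [Finset.mem_filter, Finset.mem_univ, true_and]; exact ha⟩
  refine ⟨(Finset.univ.filter P).max' hne, ?_, ?_⟩
  · have h := Finset.max'_mem _ hne
    simp only [Finset.mem_filter, Finset.mem_univ, true_and] at h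
    exact h
  · intro n hn
    exact Finset.le_max' _ n (by simp only [Finset.mem_filter, Finset.mem_univ, true_and]; exact hn)

lemma exists_min_of {α : Type} [Fintype α] [LinearOrder α] {P : α → Prop}
    [DecidablePred P] {a : α} (ha : P a) : ∃ M, P M ∧ ∀ n, P n → M ≤ n := by
  classical
  have hne : (Finset.univ.filter P).Nonempty :=
    ⟨a, by simp only [Finset.mem_filter, Finset.mem_univ, true_and]; exact ha⟩
  refine ⟨(Finset.univ.filter P).min' hne, ?_, ?_⟩
  · have h := Finset.min'_mem _ hne
    simp only [Finset.mem_filter, Finset.mem_univ, true_and] at h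
    exact h
  · intro n hn
    exact Finset.min'_le _ n (by simp only [Finset.mem_filter, Finset.mem_univ, true_and]; exact hn)

lemma cycle_struct {x : CWVert r} (D : (condensedWall r).Walk x x) (hD : D.IsCycle)
    (hab : ∀ v ∈ D.support, v ≠ cwA r ∧ v ≠ cwB r) :
    ∃ j : Fin r,
      (∀ v ∈ D.support, (∃ k, v = cwU j k) ∨ v = cwZ j.castSucc ∨ v = cwZ j.succ) ∧
      (cwZ j.castSucc ∈ D.support ∨ cwZ j.succ ∈ D.support) := by
  classical
  have hform : ∀ v ∈ D.support, (∃ j k, v = cwU j k) ∨ (∃ m, v = cwZ m) := by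
    intro v hv
    rcases v with ⟨j, k⟩ | m | b
    · exact Or.inl ⟨j, k, rfl⟩
    · exact Or.inr ⟨m, rfl⟩
    · cases b
      · exact absurd rfl ((hab _ hv).1)
      · exact absurd rfl ((hab _ hv).2)
  have hwalk : ∀ (u₁ u₂ : CWVert r), u₁ ∈ D.support → u₂ ∈ D.support →
      ∀ p : Fin (r + 1), u₁ ≠ cwZ p → u₂ ≠ cwZ p →
      ∃ w : (condensedWall r).Walk u₁ u₂, ∀ v ∈ w.support, v ∈ D.support ∧ v ≠ cwZ p := by
    intro u₁ u₂ h1 h2 p hp1 hp2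
    by_cases hzp : cwZ p ∈ D.support
    · exact exists_walk_avoiding D hD hzp h1 h2 hp1 hp2
    · refine ⟨(D.rotate _ h1).takeUntil u₂ ((mem_support_rotate_iff D h1).mpr h2), ?_⟩
      intro v hv
      have hvD : v ∈ D.support :=
        (mem_support_rotate_iff D h1).mp (Walk.support_takeUntil_subset _ _ hv)
      exact ⟨hvD, fun he => hzp (he ▸ hvD)⟩
  -- Step B : some u-vertex exists
  have hU : ∃ (j : Fin r) (k : Fin (2 * r)), cwU j k ∈ D.support := by
    by_contra hno
    push_neg at hno
    have hallz : ∀ v ∈ D.support, ∃ m, v = cwZ m := by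
      intro v hv
      rcases hform v hv with ⟨j, k, rfl⟩ | hm
      · exact absurd hv (hno j k)
      · exact hm
    obtain ⟨mx, hmx⟩ := hallz x D.start_mem_support
    have hmx' : cwZ mx ∈ D.support := hmx ▸ D.start_mem_support
    obtain ⟨M, hMmem, hMmax⟩ := exists_max_of (P := fun m : Fin (r + 1) => cwZ m ∈ D.support) hmx'
    obtain ⟨y₁, y₂, hne, hs1, hs2, ha1, ha2⟩ := cycle_two_nbrs D hD hMmem
    obtain ⟨n₁, rfl⟩ := hallz y₁ hs1
    obtain ⟨n₂, rfl⟩ := hallz y₂ hs2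
    have hle1 : (n₁ : ℕ) ≤ (M : ℕ) := hMmax n₁ hs1
    have hle2 : (n₂ : ℕ) ≤ (M : ℕ) := hMmax n₂ hs2
    have e1 := adj_zz ha1
    have e2 := adj_zz ha2
    exact hne (by rw [show n₁ = n₂ from Fin.ext (by omega)])
  obtain ⟨j₀, k₀, hj₀⟩ := hU
  obtain ⟨jmax, hjmax, hjmaxmax⟩ := exists_max_of
    (P := fun j : Fin r => ∃ k, cwU j k ∈ D.support) ⟨k₀, hj₀⟩
  obtain ⟨jmin, hjminP, hjminmin⟩ := exists_min_of
    (P := fun j : Fin r => ∃ k, cwU j k ∈ D.support) ⟨k₀, hj₀⟩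
  obtain ⟨k₁, hk₁⟩ := hjminP
  obtain ⟨k₂, hk₂⟩ := hjmax
  -- Step C : all rows equal
  have hjeq : (jmin : ℕ) = (jmax : ℕ) := by
    by_contra hltne
    have hminmax : (jmin : ℕ) ≤ (jmax : ℕ) := hjminmin jmax ⟨k₂, hk₂⟩
    have hlt : (jmin : ℕ) < (jmax : ℕ) := lt_of_le_of_ne hminmax hltne
    obtain ⟨w, hw⟩ := hwalk _ _ hk₁ hk₂ ⟨(jmin : ℕ) + 1, by have := jmin.isLt; omega⟩
      cwU_ne_cwZ cwU_ne_cwZ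
    have hside := side_walk w (fun v hv =>
      ⟨(hab v (hw v hv).1).1, (hab v (hw v hv).1).2, (hw v hv).2⟩)
    simp only [lvl_u] at hside
    omega
  have hrow : ∀ (j : Fin r) (k : Fin (2 * r)), cwU j k ∈ D.support → j = jmin := by
    intro j k hmem
    have l1 : (jmin : ℕ) ≤ (j : ℕ) := hjminmin j ⟨k, hmem⟩
    have l2 : (j : ℕ) ≤ (jmax : ℕ) := hjmaxmax j ⟨k, hmem⟩
    exact Fin.ext (by omega)
  -- Step D : z-range
  have hzrange : ∀ m : Fin (r + 1), cwZ m ∈ D.support →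
      (m : ℕ) = (jmin : ℕ) ∨ (m : ℕ) = (jmin : ℕ) + 1 := by
    intro m hm
    obtain ⟨M, hMmem, hMmax⟩ := exists_max_of (P := fun m : Fin (r + 1) => cwZ m ∈ D.support) hm
    obtain ⟨m0, hm0mem, hm0min⟩ := exists_min_of (P := fun m : Fin (r + 1) => cwZ m ∈ D.support) hm
    have hMle : (M : ℕ) ≤ (jmin : ℕ) + 1 := by
      by_contra hMgt
      obtain ⟨y₁, y₂, hne, hs1, hs2, ha1, ha2⟩ := cycle_two_nbrs D hD hMmem
      have hz1 : ∃ n : Fin (r + 1), y₁ = cwZ n ∧ (M : ℕ) = (n : ℕ) + 1 := by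
        rcases hform y₁ hs1 with ⟨j, k, rfl⟩ | ⟨n, rfl⟩
        · exfalso
          have h1 := adj_zu ha1
          have h2 := hrow j k hs1
          subst h2
          omega
        · have h1 := adj_zz ha1
          have hle : (n : ℕ) ≤ (M : ℕ) := hMmax n hs1
          exact ⟨n, rfl, by omega⟩
      have hz2 : ∃ n : Fin (r + 1), y₂ = cwZ n ∧ (M : ℕ) = (n : ℕ) + 1 := by
        rcases hform y₂ hs2 with ⟨j, k, rfl⟩ | ⟨n, rfl⟩
        · exfalso
          have h1 := adj_zu ha2
          have h2 := hrow j k hs2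
          subst h2
          omega
        · have h1 := adj_zz ha2
          have hle : (n : ℕ) ≤ (M : ℕ) := hMmax n hs2
          exact ⟨n, rfl, by omega⟩
      obtain ⟨n₁, rfl, e1⟩ := hz1
      obtain ⟨n₂, rfl, e2⟩ := hz2
      exact hne (by rw [show n₁ = n₂ from Fin.ext (by omega)])
    have hm0ge : (jmin : ℕ) ≤ (m0 : ℕ) := by
      by_contra hm0lt
      obtain ⟨y₁, y₂, hne, hs1, hs2, ha1, ha2⟩ := cycle_two_nbrs D hD hm0mem
      have hz1 : ∃ n : Fin (r + 1), y₁ = cwZ n ∧ (n : ℕ) = (m0 : ℕ) + 1 := by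
        rcases hform y₁ hs1 with ⟨j, k, rfl⟩ | ⟨n, rfl⟩
        · exfalso
          have h1 := adj_zu ha1
          have h2 := hrow j k hs1
          subst h2
          omega
        · have h1 := adj_zz ha1
          have hle : (m0 : ℕ) ≤ (n : ℕ) := hm0min n hs1
          exact ⟨n, rfl, by omega⟩
      have hz2 : ∃ n : Fin (r + 1), y₂ = cwZ n ∧ (n : ℕ) = (m0 : ℕ) + 1 := by
        rcases hform y₂ hs2 with ⟨j, k, rfl⟩ | ⟨n, rfl⟩
        · exfalso
          have h1 := adj_zu ha2
          have h2 := hrow j k hs2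
          subst h2
          omega
        · have h1 := adj_zz ha2
          have hle : (m0 : ℕ) ≤ (n : ℕ) := hm0min n hs2
          exact ⟨n, rfl, by omega⟩
      obtain ⟨n₁, rfl, e1⟩ := hz1
      obtain ⟨n₂, rfl, e2⟩ := hz2
      exact hne (by rw [show n₁ = n₂ from Fin.ext (by omega)])
    have l1 : (m : ℕ) ≤ (M : ℕ) := hMmax m hm
    have l2 : (m0 : ℕ) ≤ (m : ℕ) := hm0min m hm
    omega
  -- Step E : some z exists
  have hzex : ∃ m : Fin (r + 1), cwZ m ∈ D.support := by
    by_contra hnoz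
    push_neg at hnoz
    obtain ⟨K, hKmem, hKmax⟩ := exists_max_of
      (P := fun k : Fin (2 * r) => cwU jmin k ∈ D.support) hk₁
    obtain ⟨y₁, y₂, hne, hs1, hs2, ha1, ha2⟩ := cycle_two_nbrs D hD hKmem
    have hu1 : ∃ k' : Fin (2 * r), y₁ = cwU jmin k' ∧ (K : ℕ) = (k' : ℕ) + 1 := by
      rcases hform y₁ hs1 with ⟨j, k, rfl⟩ | ⟨n, rfl⟩
      · obtain ⟨rfl, hk⟩ := adj_uu ha1
        have hle : (k : ℕ) ≤ (K : ℕ) := hKmax k hs1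
        exact ⟨k, rfl, by omega⟩
      · exact absurd hs1 (hnoz n)
    have hu2 : ∃ k' : Fin (2 * r), y₂ = cwU jmin k' ∧ (K : ℕ) = (k' : ℕ) + 1 := by
      rcases hform y₂ hs2 with ⟨j, k, rfl⟩ | ⟨n, rfl⟩
      · obtain ⟨rfl, hk⟩ := adj_uu ha2
        have hle : (k : ℕ) ≤ (K : ℕ) := hKmax k hs2
        exact ⟨k, rfl, by omega⟩
      · exact absurd hs2 (hnoz n)
    obtain ⟨n₁, rfl, e1⟩ := hu1
    obtain ⟨n₂, rfl, e2⟩ := hu2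
    exact hne (by rw [show n₁ = n₂ from Fin.ext (by omega)])
  obtain ⟨mz, hmz⟩ := hzex
  refine ⟨jmin, ?_, ?_⟩
  · intro v hv
    rcases hform v hv with ⟨j, k, rfl⟩ | ⟨m, rfl⟩
    · exact Or.inl ⟨k, by rw [hrow j k hv]⟩
    · rcases hzrange m hv with h | h
      · exact Or.inr (Or.inl (by
          rw [show m = jmin.castSucc from Fin.ext (by simp [Fin.coe_castSucc, h])]))
      · exact Or.inr (Or.inr (by
          rw [show m = jmin.succ from Fin.ext (by simp [Fin.val_succ, h])]))
  · rcases hzrange mz hmz with h | h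
    · exact Or.inl (by
        rwa [show jmin.castSucc = mz from Fin.ext (by simp [Fin.coe_castSucc, h])])
    · exact Or.inr (by
        rwa [show jmin.succ = mz from Fin.ext (by simp [Fin.val_succ, h])])

lemma edge_disjoint_of_share_le_one {V : Type} {G : SimpleGraph V} {a1 b1 a2 b2 z0 : V}
    (w1 : G.Walk a1 b1) (w2 : G.Walk a2 b2)
    (h : ∀ v, v ∈ w1.support → v ∈ w2.support → v = z0) :
    ∀ e ∈ w1.edges, e ∉ w2.edges := by
  intro e
  induction e using Sym2.ind with
  | _ x y =>
    intro he1 he2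
    have hx1 := w1.fst_mem_support_of_mem_edges he1
    have hy1 := w1.snd_mem_support_of_mem_edges he1
    have hx2 := w2.fst_mem_support_of_mem_edges he2
    have hy2 := w2.snd_mem_support_of_mem_edges he2
    have hxy : x ≠ y := G.ne_of_adj ((SimpleGraph.mem_edgeSet G).mp (w1.edges_subset_edgeSet he1))
    exact hxy ((h x hx1 hx2).trans (h y hy1 hy2).symm)

lemma zval {m m' : Fin (r + 1)} (h : cwZ (r := r) m = cwZ m') : (m : ℕ) = (m' : ℕ) :=
  congrArg Fin.val (cwZ_inj.mp h)

lemma chain_lemma {j j' : Fin r} {x y : CWVert r} (w : (condensedWall r).Walk x y)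
    (hxy : x ≠ y)
    (h1 : ∀ v ∈ w.support, (∃ k, v = cwU j k) ∨ v = cwZ j.castSucc ∨ v = cwZ j.succ)
    (h2 : ∀ v ∈ w.support, (∃ k, v = cwU j' k) ∨ v = cwZ j'.castSucc ∨ v = cwZ j'.succ) :
    j = j' := by
  by_cases hu : ∃ (jj : Fin r) (k : Fin (2 * r)), cwU jj k ∈ w.support
  · obtain ⟨jj, k, hv⟩ := hu
    rcases h1 _ hv with ⟨k1, he⟩ | he | he
    · rcases h2 _ hv with ⟨k2, he2⟩ | he2 | he2
      · exact ((cwU_inj.mp he).1).symm.trans (cwU_inj.mp he2).1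
      · exact absurd he2 cwU_ne_cwZ
      · exact absurd he2 cwU_ne_cwZ
    · exact absurd he cwU_ne_cwZ
    · exact absurd he cwU_ne_cwZ
  · push_neg at hu
    have hx1 : x = cwZ j.castSucc ∨ x = cwZ j.succ := by
      rcases h1 x w.start_mem_support with ⟨k, he⟩ | he | he
      · exact absurd (he ▸ w.start_mem_support) (hu j k)
      · exact Or.inl he
      · exact Or.inr he
    have hy1 : y = cwZ j.castSucc ∨ y = cwZ j.succ := by
      rcases h1 y w.end_mem_support with ⟨k, he⟩ | he | he
      · exact absurd (he ▸ w.end_mem_support) (hu j k)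
      · exact Or.inl he
      · exact Or.inr he
    have hx2 : x = cwZ j'.castSucc ∨ x = cwZ j'.succ := by
      rcases h2 x w.start_mem_support with ⟨k, he⟩ | he | he
      · exact absurd (he ▸ w.start_mem_support) (hu j' k)
      · exact Or.inl he
      · exact Or.inr he
    have hy2 : y = cwZ j'.castSucc ∨ y = cwZ j'.succ := by
      rcases h2 y w.end_mem_support with ⟨k, he⟩ | he | he
      · exact absurd (he ▸ w.end_mem_support) (hu j' k)
      · exact Or.inl he
      · exact Or.inr he
    apply Fin.ext
    rcases hx1 with rfl | rfl <;> rcases hy1 with hy | hy <;>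
      first
      | (exact absurd hy.symm hxy)
      | (rcases hx2 with he | he <;> rcases hy2 with he2 | he2 <;>
          subst hy <;>
          (try exact absurd rfl hxy) <;>
          have e1 := zval he <;> have e2 := zval he2 <;>
          simp only [Fin.coe_castSucc, Fin.val_succ] at e1 e2 <;> omega)

lemma walks_disjoint_of_cols {n : ℕ} (S : SubdivCopy (elemLadder n) (condensedWall r))
    {p q p' q' : Fin n × Bool} {h : (elemLadder n).Adj p q} {h' : (elemLadder n).Adj p' q'}
    (v : CWVert r) (hv : v ∈ (S.walk h).support) (hv' : v ∈ (S.walk h').support)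
    (c1 : (p.1 : ℕ) ≠ (p'.1 : ℕ)) (c2 : (p.1 : ℕ) ≠ (q'.1 : ℕ))
    (c3 : (q.1 : ℕ) ≠ (p'.1 : ℕ)) (c4 : (q.1 : ℕ) ≠ (q'.1 : ℕ)) : False := by
  have hne : s(p, q) ≠ s(p', q') := by
    intro hcon
    rw [Sym2.eq_iff] at hcon
    rcases hcon with (⟨h1, -⟩ | ⟨h1, -⟩)
    · exact c1 (congrArg (fun z : Fin n × Bool => (z.1 : ℕ)) h1)
    · exact c2 (congrArg (fun z : Fin n × Bool => (z.1 : ℕ)) h1)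
  obtain ⟨hA, hB⟩ := S.walk_disj h h' hne v hv hv'
  rcases hA with rfl | rfl <;> rcases hB with he | he
  · exact c1 (congrArg (fun z : Fin n × Bool => (z.1 : ℕ)) (S.branch_inj he))
  · exact c2 (congrArg (fun z : Fin n × Bool => (z.1 : ℕ)) (S.branch_inj he))
  · exact c3 (congrArg (fun z : Fin n × Bool => (z.1 : ℕ)) (S.branch_inj he))
  · exact c4 (congrArg (fun z : Fin n × Bool => (z.1 : ℕ)) (S.branch_inj he))

lemma square_lemma {n : ℕ} (S : SubdivCopy (elemLadder n) (condensedWall r))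
    (x₁ x₂ : Fin n) (hx : (x₂ : ℕ) = (x₁ : ℕ) + 1)
    (hR1 : (elemLadder n).Adj (x₁, false) (x₁, true))
    (hR2 : (elemLadder n).Adj (x₂, false) (x₂, true))
    (hF : (elemLadder n).Adj (x₁, false) (x₂, false))
    (hT : (elemLadder n).Adj (x₁, true) (x₂, true))
    (hA : ∀ v, (v ∈ (S.walk hR1).support ∨ v ∈ (S.walk hR2).support ∨
        v ∈ (S.walk hF).support ∨ v ∈ (S.walk hT).support) → v ≠ cwA r ∧ v ≠ cwB r) :
    ∃ j : Fin r,
      (∀ v, (v ∈ (S.walk hR1).support ∨ v ∈ (S.walk hR2).support ∨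
          v ∈ (S.walk hF).support ∨ v ∈ (S.walk hT).support) →
        ((∃ k, v = cwU j k) ∨ v = cwZ j.castSucc ∨ v = cwZ j.succ)) ∧
      ∃ m : Fin (r + 1), ((m : ℕ) = (j : ℕ) ∨ (m : ℕ) = (j : ℕ) + 1) ∧
        (cwZ m ∈ (S.walk hR1).support ∨ cwZ m ∈ (S.walk hR2).support ∨
          cwZ m ∈ (S.walk hF).support ∨ cwZ m ∈ (S.walk hT).support) := by
  classical
  have hvne : (x₁ : ℕ) ≠ (x₂ : ℕ) := by omega
  have pne12 : ∀ (b1 b2 : Bool), ((x₁, b1) : Fin n × Bool) ≠ (x₂, b2) := by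
    intro b1 b2 hh
    exact hvne (congrArg (fun z : Fin n × Bool => (z.1 : ℕ)) hh)
  have pne21 : ∀ (b1 b2 : Bool), ((x₂, b1) : Fin n × Bool) ≠ (x₁, b2) := by
    intro b1 b2 hh
    exact hvne (congrArg (fun z : Fin n × Bool => (z.1 : ℕ)) hh).symm
  have pneb1 : ((x₁, false) : Fin n × Bool) ≠ (x₁, true) := by
    intro hh
    exact Bool.false_ne_true (congrArg Prod.snd hh)
  have pneb1' : ((x₁, true) : Fin n × Bool) ≠ (x₁, false) := fun hh => pneb1 hh.symm
  have pneb2 : ((x₂, false) : Fin n × Bool) ≠ (x₂, true) := by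
    intro hh
    exact Bool.false_ne_true (congrArg Prod.snd hh)
  have pneb2' : ((x₂, true) : Fin n × Bool) ≠ (x₂, false) := fun hh => pneb2 hh.symm
  have hbr : ∀ (pp qq : Fin n × Bool), pp ≠ qq → S.branch pp ≠ S.branch qq :=
    fun pp qq hne he => hne (S.branch_inj he)
  -- Sym2 inequalities
  have sne_R1_R2 : s(((x₁, false) : Fin n × Bool), (x₁, true)) ≠ s((x₂, false), (x₂, true)) := by
    intro hcon
    rw [Sym2.eq_iff] at hcon
    rcases hcon with (⟨h1, -⟩ | ⟨h1, -⟩)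
    · exact pne12 _ _ h1
    · exact pne12 _ _ h1
  have sne_R1_F : s(((x₁, false) : Fin n × Bool), (x₁, true)) ≠ s((x₁, false), (x₂, false)) := by
    intro hcon
    rw [Sym2.eq_iff] at hcon
    rcases hcon with (⟨-, h2⟩ | ⟨h1, -⟩)
    · exact pne12 _ _ h2
    · exact pne12 _ _ h1
  have sne_R1_T : s(((x₁, false) : Fin n × Bool), (x₁, true)) ≠ s((x₁, true), (x₂, true)) := by
    intro hcon
    rw [Sym2.eq_iff] at hcon
    rcases hcon with (⟨h1, -⟩ | ⟨h1, -⟩)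
    · exact pneb1 h1
    · exact pne12 _ _ h1
  have sne_R2_F : s(((x₂, false) : Fin n × Bool), (x₂, true)) ≠ s((x₁, false), (x₂, false)) := by
    intro hcon
    rw [Sym2.eq_iff] at hcon
    rcases hcon with (⟨h1, -⟩ | ⟨-, h2⟩)
    · exact pne21 _ _ h1
    · exact pne21 _ _ h2
  have sne_R2_T : s(((x₂, false) : Fin n × Bool), (x₂, true)) ≠ s((x₁, true), (x₂, true)) := by
    intro hcon
    rw [Sym2.eq_iff] at hcon
    rcases hcon with (⟨h1, -⟩ | ⟨h1, -⟩)
    · exact pne21 _ _ h1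
    · exact pneb2 h1
  have sne_F_T : s(((x₁, false) : Fin n × Bool), (x₂, false)) ≠ s((x₁, true), (x₂, true)) := by
    intro hcon
    rw [Sym2.eq_iff] at hcon
    rcases hcon with (⟨h1, -⟩ | ⟨h1, -⟩)
    · exact pneb1 h1
    · exact pne12 _ _ h1
  -- support intersection facts
  have hd_R1_R2 : ∀ v ∈ (S.walk hR1).support, v ∈ (S.walk hR2).support → False := by
    intro v hv hv'
    obtain ⟨h1, h2⟩ := S.walk_disj hR1 hR2 sne_R1_R2 v hv hv'
    rcases h1 with rfl | rfl <;> rcases h2 with he | he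
    · exact hbr _ _ (pne12 false false) he
    · exact hbr _ _ (pne12 false true) he
    · exact hbr _ _ (pne12 true false) he
    · exact hbr _ _ (pne12 true true) he
  have hd_F_T : ∀ v ∈ (S.walk hF).support, v ∈ (S.walk hT).support → False := by
    intro v hv hv'
    obtain ⟨h1, h2⟩ := S.walk_disj hF hT sne_F_T v hv hv'
    rcases h1 with rfl | rfl <;> rcases h2 with he | he
    · exact hbr _ _ pneb1 he
    · exact hbr _ _ (pne12 false true) he
    · exact hbr _ _ (pne21 false true) he
    · exact hbr _ _ pneb2 he
  have hd_R1_F : ∀ v ∈ (S.walk hR1).support, v ∈ (S.walk hF).support →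
      v = S.branch (x₁, false) := by
    intro v hv hv'
    obtain ⟨h1, h2⟩ := S.walk_disj hR1 hF sne_R1_F v hv hv'
    rcases h1 with rfl | rfl
    · rfl
    · rcases h2 with he | he
      · exact absurd he (hbr _ _ pneb1')
      · exact absurd he (hbr _ _ (pne12 true false))
  have hd_R1_T : ∀ v ∈ (S.walk hR1).support, v ∈ (S.walk hT).support →
      v = S.branch (x₁, true) := by
    intro v hv hv'
    obtain ⟨h1, h2⟩ := S.walk_disj hR1 hT sne_R1_T v hv hv'
    rcases h1 with rfl | rfl
    · rcases h2 with he | he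
      · exact absurd he (hbr _ _ pneb1)
      · exact absurd he (hbr _ _ (pne12 false true))
    · rfl
  have hd_R2_F : ∀ v ∈ (S.walk hR2).support, v ∈ (S.walk hF).support →
      v = S.branch (x₂, false) := by
    intro v hv hv'
    obtain ⟨h1, h2⟩ := S.walk_disj hR2 hF sne_R2_F v hv hv'
    rcases h1 with rfl | rfl
    · rfl
    · rcases h2 with he | he
      · exact absurd he (hbr _ _ (pne21 true false))
      · exact absurd he (hbr _ _ pneb2')
  have hd_R2_T : ∀ v ∈ (S.walk hR2).support, v ∈ (S.walk hT).support →
      v = S.branch (x₂, true) := by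
    intro v hv hv'
    obtain ⟨h1, h2⟩ := S.walk_disj hR2 hT sne_R2_T v hv hv'
    rcases h1 with rfl | rfl
    · rcases h2 with he | he
      · exact absurd he (hbr _ _ (pne21 false true))
      · exact absurd he (hbr _ _ pneb2)
    · rfl
  -- build the square cycle
  have hPpath : ((S.walk hF).append (S.walk hR2)).IsPath :=
    isPath_append_of _ _ (S.walk_isPath hF) (S.walk_isPath hR2)
      (fun v hv hv' => hd_R2_F v hv' hv)
  have hQpath : ((S.walk hR1).append (S.walk hT)).IsPath :=
    isPath_append_of _ _ (S.walk_isPath hR1) (S.walk_isPath hT) hd_R1_T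
  have hcyc : (((S.walk hF).append (S.walk hR2)).append
      (((S.walk hR1).append (S.walk hT)).reverse)).IsCycle := by
    apply isCycle_append_of (hbr _ _ (pne12 false true)) _ _ hPpath hQpath.reverse
    · intro v hv hv'
      rw [Walk.mem_support_append_iff] at hv
      rw [Walk.support_reverse, List.mem_reverse, Walk.mem_support_append_iff] at hv'
      rcases hv with hv | hv <;> rcases hv' with hv' | hv'
      · exact Or.inl (hd_R1_F v hv' hv)
      · exact absurd hv' (fun hh => hd_F_T v hv hh)
      · exact absurd hv' (fun hh => hd_R1_R2 v hh hv)
      · exact Or.inr (hd_R2_T v hv hv')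
    · intro e he he'
      rw [Walk.edges_append, List.mem_append] at he
      rw [Walk.edges_reverse, List.mem_reverse, Walk.edges_append, List.mem_append] at he'
      rcases he with he | he <;> rcases he' with he' | he'
      · exact edge_disjoint_of_share_le_one _ _
          (fun v hv hv' => hd_R1_F v hv' hv) e he he'
      · exact edge_disjoint_of_share_le_one (z0 := S.branch (x₁, false)) _ _
          (fun v hv hv' => (hd_F_T v hv hv').elim) e he he'
      · exact edge_disjoint_of_share_le_one (z0 := S.branch (x₁, false)) _ _
          (fun v hv hv' => (hd_R1_R2 v hv' hv).elim) e he he'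
      · exact edge_disjoint_of_share_le_one _ _
          (fun v hv hv' => hd_R2_T v hv hv') e he he'
  have hdecomp : ∀ v, v ∈ (((S.walk hF).append (S.walk hR2)).append
      (((S.walk hR1).append (S.walk hT)).reverse)).support ↔
      (v ∈ (S.walk hR1).support ∨ v ∈ (S.walk hR2).support ∨
        v ∈ (S.walk hF).support ∨ v ∈ (S.walk hT).support) := by
    intro v
    rw [Walk.mem_support_append_iff, Walk.mem_support_append_iff, Walk.support_reverse,
      List.mem_reverse, Walk.mem_support_append_iff]
    tauto
  obtain ⟨j, hchar, hz⟩ := cycle_struct _ hcyc (fun v hv => hA v ((hdecomp v).mp hv))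
  refine ⟨j, fun v hv => hchar v ((hdecomp v).mpr hv), ?_⟩
  rcases hz with hz | hz
  · exact ⟨j.castSucc, Or.inl (Fin.coe_castSucc j), (hdecomp _).mp hz⟩
  · exact ⟨j.succ, Or.inr (Fin.val_succ j), (hdecomp _).mp hz⟩

end CWAux


/-- A ladder in a condensed wall whose two stringers are continued at one end-rung by
internally disjoint paths to `a` and to `b` has at most 6 rungs. -/
theorem ladder_with_ab_paths_le_six (r n : ℕ)
    (S : SubdivCopy (elemLadder n) (condensedWall r)) (i : Fin n) (s : Bool)
    (hi : (i : ℕ) = 0 ∨ (i : ℕ) + 1 = n)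
    (P₁ : (condensedWall r).Walk (S.branch (i, s)) (cwA r))
    (P₂ : (condensedWall r).Walk (S.branch (i, !s)) (cwB r))
    (hP₁ : P₁.IsPath) (hP₂ : P₂.IsPath)
    (hP₁L : ∀ x, x ∈ P₁.support → x ∈ S.verts → x = S.branch (i, s))
    (hP₂L : ∀ x, x ∈ P₂.support → x ∈ S.verts → x = S.branch (i, !s))
    (hP₁₂ : ∀ x, x ∈ P₁.support → x ∉ P₂.support) :
    n ≤ 6 := by
  by_contra hle
  push_neg at hle
  classical
  obtain ⟨c, hc⟩ : ∃ c : ℕ, ∀ t, t ≤ 5 → c + t < n ∧ c + t ≠ (i : ℕ) := by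
    rcases hi with h0 | h1
    · exact ⟨1, fun t ht => ⟨by omega, by omega⟩⟩
    · exact ⟨0, fun t ht => ⟨by omega, by omega⟩⟩
  obtain ⟨col, hcolval⟩ : ∃ col : ℕ → Fin n, ∀ t, t ≤ 5 → (col t : ℕ) = c + t :=
    ⟨fun t => ⟨(c + t) % n, Nat.mod_lt _ (by omega)⟩,
      fun t ht => Nat.mod_eq_of_lt (hc t ht).1⟩
  have hcolne : ∀ t, t ≤ 5 → col t ≠ i := by
    intro t ht he
    exact (hc t ht).2 (by rw [← hcolval t ht, he])
  have hadjR : ∀ t, t ≤ 5 → (elemLadder n).Adj (col t, false) (col t, true) := by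
    intro t ht
    rw [elemLadder, SimpleGraph.fromRel_adj]
    refine ⟨?_, Or.inl (Or.inr ⟨rfl, by simp⟩)⟩
    intro he
    exact Bool.false_ne_true (congrArg Prod.snd he)
  have hadjS : ∀ t, t ≤ 4 → ∀ b : Bool,
      (elemLadder n).Adj (col t, b) (col (t + 1), b) := by
    intro t ht b
    rw [elemLadder, SimpleGraph.fromRel_adj]
    constructor
    · intro he
      have hfst := congrArg (fun z : Fin n × Bool => (z.1 : ℕ)) he
      simp only at hfst
      rw [hcolval t (by omega), hcolval (t + 1) (by omega)] at hfst
      omega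
    · exact Or.inl (Or.inl ⟨rfl, by
        rw [hcolval t (by omega), hcolval (t + 1) (by omega)]; omega⟩)
  have hAB : ∀ (p q : Fin n × Bool) (hpq : (elemLadder n).Adj p q), p.1 ≠ i → q.1 ≠ i →
      ∀ v ∈ (S.walk hpq).support, v ≠ cwA r ∧ v ≠ cwB r := by
    intro p q hpq hp hq v hv
    constructor
    · rintro rfl
      have hvert : cwA r ∈ S.verts := Set.mem_union_right _ ⟨p, q, hpq, hv⟩
      have heq := hP₁L (cwA r) P₁.end_mem_support hvert
      have hbr := S.branch_not_interior hpq (i, s) (by rw [← heq]; exact hv)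
      rcases hbr with hbr | hbr
      · exact hp (congrArg Prod.fst hbr).symm
      · exact hq (congrArg Prod.fst hbr).symm
    · rintro rfl
      have hvert : cwB r ∈ S.verts := Set.mem_union_right _ ⟨p, q, hpq, hv⟩
      have heq := hP₂L (cwB r) P₂.end_mem_support hvert
      have hbr := S.branch_not_interior hpq (i, !s) (by rw [← heq]; exact hv)
      rcases hbr with hbr | hbr
      · exact hp (congrArg Prod.fst hbr).symm
      · exact hq (congrArg Prod.fst hbr).symm
  have hsq : ∀ t (ht : t ≤ 4), ∃ j : Fin r,
      (∀ v, (v ∈ (S.walk (hadjR t (by omega))).support ∨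
          v ∈ (S.walk (hadjR (t + 1) (by omega))).support ∨
          v ∈ (S.walk (hadjS t ht false)).support ∨
          v ∈ (S.walk (hadjS t ht true)).support) →
        ((∃ k, v = cwU j k) ∨ v = cwZ j.castSucc ∨ v = cwZ j.succ)) ∧
      ∃ m : Fin (r + 1), ((m : ℕ) = (j : ℕ) ∨ (m : ℕ) = (j : ℕ) + 1) ∧
        (cwZ m ∈ (S.walk (hadjR t (by omega))).support ∨
          cwZ m ∈ (S.walk (hadjR (t + 1) (by omega))).support ∨
          cwZ m ∈ (S.walk (hadjS t ht false)).support ∨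
          cwZ m ∈ (S.walk (hadjS t ht true)).support) := by
    intro t ht
    apply CWAux.square_lemma S (col t) (col (t + 1))
      (by rw [hcolval t (by omega), hcolval (t + 1) (by omega)]; omega)
    intro v hv
    rcases hv with hv | hv | hv | hv
    · exact hAB _ _ _ (hcolne t (by omega)) (hcolne t (by omega)) v hv
    · exact hAB _ _ _ (hcolne (t + 1) (by omega)) (hcolne (t + 1) (by omega)) v hv
    · exact hAB _ _ _ (hcolne t (by omega)) (hcolne (t + 1) (by omega)) v hv
    · exact hAB _ _ _ (hcolne t (by omega)) (hcolne (t + 1) (by omega)) v hv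
  obtain ⟨j0, hch0, m0, hm0v, hm0m⟩ := hsq 0 (by omega)
  obtain ⟨j1, hch1, -⟩ := hsq 1 (by omega)
  obtain ⟨j2, hch2, m2, hm2v, hm2m⟩ := hsq 2 (by omega)
  obtain ⟨j3, hch3, -⟩ := hsq 3 (by omega)
  obtain ⟨j4, hch4, m4, hm4v, hm4m⟩ := hsq 4 (by omega)
  have hbrne : ∀ t, t ≤ 5 → S.branch (col t, false) ≠ S.branch (col t, true) := by
    intro t ht he
    exact Bool.false_ne_true (congrArg Prod.snd (S.branch_inj he))
  have e01 : j0 = j1 := CWAux.chain_lemma (S.walk (hadjR 1 (by omega))) (hbrne 1 (by omega))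
    (fun v hv => hch0 v (Or.inr (Or.inl hv))) (fun v hv => hch1 v (Or.inl hv))
  have e12 : j1 = j2 := CWAux.chain_lemma (S.walk (hadjR 2 (by omega))) (hbrne 2 (by omega))
    (fun v hv => hch1 v (Or.inr (Or.inl hv))) (fun v hv => hch2 v (Or.inl hv))
  have e23 : j2 = j3 := CWAux.chain_lemma (S.walk (hadjR 3 (by omega))) (hbrne 3 (by omega))
    (fun v hv => hch2 v (Or.inr (Or.inl hv))) (fun v hv => hch3 v (Or.inl hv))
  have e34 : j3 = j4 := CWAux.chain_lemma (S.walk (hadjR 4 (by omega))) (hbrne 4 (by omega))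
    (fun v hv => hch3 v (Or.inr (Or.inl hv))) (fun v hv => hch4 v (Or.inl hv))
  have hdisj : ∀ (t t' : ℕ) (ht : t ≤ 4) (ht' : t' ≤ 4), t + 2 ≤ t' → ∀ v : CWVert r,
      (v ∈ (S.walk (hadjR t (by omega))).support ∨
        v ∈ (S.walk (hadjR (t + 1) (by omega))).support ∨
        v ∈ (S.walk (hadjS t ht false)).support ∨
        v ∈ (S.walk (hadjS t ht true)).support) →
      (v ∈ (S.walk (hadjR t' (by omega))).support ∨
        v ∈ (S.walk (hadjR (t' + 1) (by omega))).support ∨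
        v ∈ (S.walk (hadjS t' ht' false)).support ∨
        v ∈ (S.walk (hadjS t' ht' true)).support) → False := by
    intro t t' ht ht' htt v hv hv'
    have d1 : (col t : ℕ) = c + t := hcolval t (by omega)
    have d2 : (col (t + 1) : ℕ) = c + (t + 1) := hcolval (t + 1) (by omega)
    have d3 : (col t' : ℕ) = c + t' := hcolval t' (by omega)
    have d4 : (col (t' + 1) : ℕ) = c + (t' + 1) := hcolval (t' + 1) (by omega)
    rcases hv with hv | hv | hv | hv <;> rcases hv' with hv' | hv' | hv' | hv' <;>
      exact CWAux.walks_disjoint_of_cols S v hv hv'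
        (by dsimp only; omega) (by dsimp only; omega)
        (by dsimp only; omega) (by dsimp only; omega)
  have v02 : (j0 : ℕ) = (j2 : ℕ) := by rw [e01, e12]
  have v24 : (j2 : ℕ) = (j4 : ℕ) := by rw [e23, e34]
  have hpick : (m0 : ℕ) = (m2 : ℕ) ∨ (m0 : ℕ) = (m4 : ℕ) ∨ (m2 : ℕ) = (m4 : ℕ) := by
    omega
  rcases hpick with hp | hp | hp
  · have hmm : m0 = m2 := Fin.ext hp
    exact hdisj 0 2 (by omega) (by omega) (by omega) (cwZ m0) hm0m
      (by rw [hmm]; exact hm2m)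
  · have hmm : m0 = m4 := Fin.ext hp
    exact hdisj 0 4 (by omega) (by omega) (by omega) (cwZ m0) hm0m
      (by rw [hmm]; exact hm4m)
  · have hmm : m2 = m4 := Fin.ext hp
    exact hdisj 2 4 (by omega) (by omega) (by omega) (cwZ m2) hm2m
      (by rw [hmm]; exact hm4m)
end
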